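/- arXiv:2505.20801 — 5 statements merged into one kernel-verified Lean document; each statement's English description precedes it below -/
import Mathlib

section
/- Let F ⊆ P₂(TX) be an MPVF whose barycentric projection br F is totally λ-dissipative. Let Φ, Ψ ∈ F and let γ ∈ Γ(x_♯Φ, x_♯Ψ). Define σ := ∫_{X×X} (δ_x ⊗ Φ_x) ⊗ (δ_y ⊗ Ψ_y) dγ(x,y) ∈ P(TX×TX), where (Φ_x)_{x∈X} and (Ψ_y)_{y∈X} are the disintegrations of Φ and Ψ with respect to their first (position) marginals. Then σ ∈ Γ(Φ,Ψ), the pushforward of σ under the two position projections (x,v,y,w) ↦ (x,y) equals γ, and ∫ ⟨x−y, v−w⟩ dσ(x,v,y,w) ≤ λ ∫ |x−y|² dγ(x,y). In particular, F is unconditionally λ-dissipative. -/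
open MeasureTheory ProbabilityTheory
open scoped ENNReal

variable {X : Type*} [NormedAddCommGroup X] [InnerProductSpace ℝ X]
  [CompleteSpace X] [SecondCountableTopology X] [MeasurableSpace X] [BorelSpace X]

/-- Membership in the Wasserstein space `P₂(Y)`: a Borel probability measure with
finite second moment. -/
def MemP2 {Y : Type*} [NormedAddCommGroup Y] [MeasurableSpace Y] (μ : Measure Y) : Prop :=
  IsProbabilityMeasure μ ∧ Integrable (fun y => ‖y‖ ^ 2) μ

/-- A multivalued probability vector field (MPVF): a nonempty subset of `P₂(TX)`,
where `TX = X × X` (position-velocity pairs). -/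
def IsMPVF (F : Set (Measure (X × X))) : Prop :=
  F.Nonempty ∧ ∀ Φ ∈ F, MemP2 Φ

/-- Total `λ`-dissipativity of an MPVF: for all `Φ₀, Φ₁ ∈ F` and every coupling `ϑ`
of `Φ₀` and `Φ₁` (in variables `((x₀,v₀),(x₁,v₁))`) one has
`∫⟨v₁ − v₀, x₁ − x₀⟩ dϑ ≤ λ ∫ |x₁ − x₀|² dϑ`. -/
def TotallyDissipative (lam : ℝ) (F : Set (Measure (X × X))) : Prop :=
  ∀ Φ₀ ∈ F, ∀ Φ₁ ∈ F, ∀ ϑ : Measure ((X × X) × (X × X)),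
    ϑ.map Prod.fst = Φ₀ → ϑ.map Prod.snd = Φ₁ →
    (∫ p, (inner ℝ (p.2.2 - p.1.2) (p.2.1 - p.1.1) : ℝ) ∂ϑ) ≤
      lam * ∫ p, ‖p.2.1 - p.1.1‖ ^ 2 ∂ϑ

/-- The barycentric projection of `Φ` computed from a disintegration kernel `κ`:
the pushforward of the first marginal `μ = x_♯Φ` under `x ↦ (x, ∫ v dΦ_x(v))`. -/
noncomputable def brOf (Φ : Measure (X × X)) (κ : Kernel X X) : Measure (X × X) :=
  (Φ.map Prod.fst).map (fun x => (x, ∫ v, v ∂(κ x)))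

/-- The barycentric projection `br F` of an MPVF `F`: all measures `(i_X, br Φ)_♯(x_♯Φ)`
where `Φ ∈ F` and `br Φ` is the barycenter of (a disintegration of) `Φ`. -/
def brSet (F : Set (Measure (X × X))) : Set (Measure (X × X)) :=
  { Ψ | ∃ Φ ∈ F, ∃ κ : Kernel X X, IsMarkovKernel κ ∧
      (Φ.map Prod.fst).compProd κ = Φ ∧ Ψ = brOf Φ κ }

/-- Unconditional `λ`-dissipativity of an MPVF. -/
def UncondDissipative (lam : ℝ) (F : Set (Measure (X × X))) : Prop :=
  ∀ γ : Measure (X × X), MemP2 γ →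
    ∀ Φ₀ ∈ F, ∀ Φ₁ ∈ F,
      Φ₀.map Prod.fst = γ.map Prod.fst → Φ₁.map Prod.fst = γ.map Prod.snd →
      ∃ ϑ : Measure ((X × X) × (X × X)),
        ϑ.map Prod.fst = Φ₀ ∧ ϑ.map Prod.snd = Φ₁ ∧
        ϑ.map (fun p => (p.1.1, p.2.1)) = γ ∧
        (∫ p, (inner ℝ (p.2.2 - p.1.2) (p.2.1 - p.1.1) : ℝ) ∂ϑ) ≤
          lam * ∫ q, ‖q.2 - q.1‖ ^ 2 ∂γ

section Helpers

variable {α β γ : Type*} [MeasurableSpace α] [MeasurableSpace β] [MeasurableSpace γ]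

lemma myMapBind (μ : Measure α) {g : α → Measure β} (hg : Measurable g)
    {f : β → γ} (hf : Measurable f) :
    (μ.bind g).map f = μ.bind (fun a => (g a).map f) := by
  ext s hs
  rw [Measure.map_apply hf hs, Measure.bind_apply (hf hs) hg.aemeasurable,
    Measure.bind_apply hs (show Measurable fun a => (g a).map f from
      (Measure.measurable_map f hf).comp hg).aemeasurable]
  simp_rw [Measure.map_apply hf hs]

lemma myBindMap (μ : Measure α) {f : α → β} (hf : Measurable f)
    {g : β → Measure γ} (hg : Measurable g) :
    (μ.map f).bind g = μ.bind (g ∘ f) := by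
  ext s hs
  rw [Measure.bind_apply hs hg.aemeasurable, lintegral_map (show Measurable fun b => (g b) s from
    (Measure.measurable_coe hs).comp hg) hf, Measure.bind_apply hs (hg.comp hf).aemeasurable]
  rfl

lemma myBindDiracProd (μ : Measure α) [SFinite μ] (k : Kernel α β) [IsSFiniteKernel k] :
    μ.bind (fun a => (Measure.dirac a).prod (k a)) = μ ⊗ₘ k := by
  have hm : Measurable (fun a => (Measure.dirac a).prod (k a)) := by
    have h : (fun a => (Measure.dirac a).prod (k a)) = fun a => (Kernel.id ×ₖ k) a := by
      funext a; rw [Kernel.prod_apply, Kernel.id_apply]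
    rw [h]; exact (Kernel.id ×ₖ k).measurable
  ext s hs
  rw [Measure.bind_apply hs hm.aemeasurable, Measure.compProd_apply hs]
  refine lintegral_congr fun a => ?_
  rw [Measure.dirac_prod, Measure.map_apply measurable_prodMk_left hs]

lemma myBindKernel (μ : Measure α) [SFinite μ] (k : Kernel α β) [IsSFiniteKernel k] :
    μ.bind (fun a => k a) = (μ ⊗ₘ k).map Prod.snd := by
  ext s hs
  rw [Measure.map_apply measurable_snd hs, Measure.compProd_apply (measurable_snd hs),
    Measure.bind_apply hs k.measurable.aemeasurable]
  simp [Set.preimage_preimage]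

end Helpers

lemma measurable_bary (κ : Kernel X X) [IsSFiniteKernel κ] :
    Measurable fun x => ∫ v, v ∂κ x :=
  (MeasureTheory.StronglyMeasurable.integral_kernel_prod_right
    (f := fun (_ : X) (v : X) => v) (measurable_snd.stronglyMeasurable)).measurable

theorem key (lam : ℝ) (F : Set (Measure (X × X)))
    (hF : IsMPVF F) (hbr : TotallyDissipative lam (brSet F))
    (Φ Ψ : Measure (X × X)) (hΦ : Φ ∈ F) (hΨ : Ψ ∈ F)
    (γ : Measure (X × X)) [IsProbabilityMeasure γ]
    (hγ1 : γ.map Prod.fst = Φ.map Prod.fst) (hγ2 : γ.map Prod.snd = Ψ.map Prod.fst)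
    (κΦ κΨ : Kernel X X) [IsMarkovKernel κΦ] [IsMarkovKernel κΨ]
    (hκΦ : (Φ.map Prod.fst).compProd κΦ = Φ)
    (hκΨ : (Ψ.map Prod.fst).compProd κΨ = Ψ) :
    (γ.bind (fun q => ((Measure.dirac q.1).prod (κΦ q.1)).prod
        ((Measure.dirac q.2).prod (κΨ q.2)))).map Prod.fst = Φ ∧
    (γ.bind (fun q => ((Measure.dirac q.1).prod (κΦ q.1)).prod
        ((Measure.dirac q.2).prod (κΨ q.2)))).map Prod.snd = Ψ ∧
    (γ.bind (fun q => ((Measure.dirac q.1).prod (κΦ q.1)).prod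
        ((Measure.dirac q.2).prod (κΨ q.2)))).map (fun p => (p.1.1, p.2.1)) = γ ∧
    (∫ p, (inner ℝ (p.1.1 - p.2.1) (p.1.2 - p.2.2) : ℝ)
        ∂(γ.bind (fun q => ((Measure.dirac q.1).prod (κΦ q.1)).prod
          ((Measure.dirac q.2).prod (κΨ q.2))))) ≤
      lam * (∫ q, ‖q.1 - q.2‖ ^ 2 ∂γ) := by
  classical
  have hΦP2 := hF.2 Φ hΦ
  have hΨP2 := hF.2 Ψ hΨ
  haveI := hΦP2.1
  haveI := hΨP2.1
  haveI : IsProbabilityMeasure (Φ.map Prod.fst) :=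
    Measure.isProbabilityMeasure_map measurable_fst.aemeasurable
  haveI : IsProbabilityMeasure (Ψ.map Prod.fst) :=
    Measure.isProbabilityMeasure_map measurable_fst.aemeasurable
  -- the kernel K
  set K : Kernel (X × X) ((X × X) × (X × X)) :=
    ((Kernel.id ×ₖ κΦ).comap Prod.fst measurable_fst) ×ₖ
      ((Kernel.id ×ₖ κΨ).comap Prod.snd measurable_snd) with hK
  have hKapp : ∀ q : X × X, K q = ((Measure.dirac q.1).prod (κΦ q.1)).prod
      ((Measure.dirac q.2).prod (κΨ q.2)) := by
    intro q
    rw [hK, Kernel.prod_apply, Kernel.comap_apply, Kernel.comap_apply,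
      Kernel.prod_apply, Kernel.prod_apply, Kernel.id_apply, Kernel.id_apply]
  set σ := γ.bind (fun q => ((Measure.dirac q.1).prod (κΦ q.1)).prod
      ((Measure.dirac q.2).prod (κΨ q.2))) with hσdef
  have hσK : σ = γ.bind (fun q => K q) := by
    rw [hσdef]; congr 1; funext q; exact (hKapp q).symm
  have hσ2 : σ = (γ ⊗ₘ K).map Prod.snd := by rw [hσK, myBindKernel]
  haveI : IsProbabilityMeasure σ := by
    rw [hσ2]; exact Measure.isProbabilityMeasure_map measurable_snd.aemeasurable
  -- marginals
  have m1 : σ.map Prod.fst = Φ := by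
    rw [hσK, myMapBind γ K.measurable measurable_fst]
    have h1 : (fun q => (K q).map Prod.fst)
        = (fun x : X => (Measure.dirac x).prod (κΦ x)) ∘ Prod.fst := by
      funext q
      rw [hKapp]
      simp only [Function.comp]
      rw [Measure.map_fst_prod]
      simp
    rw [h1, ← myBindMap γ measurable_fst (show Measurable fun x : X =>
        (Measure.dirac x).prod (κΦ x) from ?_), hγ1, myBindDiracProd, hκΦ]
    have h : (fun x : X => (Measure.dirac x).prod (κΦ x)) = fun x => (Kernel.id ×ₖ κΦ) x := by
        funext a; rw [Kernel.prod_apply, Kernel.id_apply]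
    rw [h]; exact (Kernel.id ×ₖ κΦ).measurable
  have m2 : σ.map Prod.snd = Ψ := by
    rw [hσK, myMapBind γ K.measurable measurable_snd]
    have h1 : (fun q => (K q).map Prod.snd)
        = (fun x : X => (Measure.dirac x).prod (κΨ x)) ∘ Prod.snd := by
      funext q
      rw [hKapp]
      simp only [Function.comp]
      rw [Measure.map_snd_prod]
      simp
    rw [h1, ← myBindMap γ measurable_snd (show Measurable fun x : X =>
        (Measure.dirac x).prod (κΨ x) from ?_), hγ2, myBindDiracProd, hκΨ]
    have h : (fun x : X => (Measure.dirac x).prod (κΨ x)) = fun x => (Kernel.id ×ₖ κΨ) x := by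
        funext a; rw [Kernel.prod_apply, Kernel.id_apply]
    rw [h]; exact (Kernel.id ×ₖ κΨ).measurable
  have hfmeas2 : Measurable fun p : (X × X) × (X × X) => (p.1.1, p.2.1) :=
    (measurable_fst.comp measurable_fst).prodMk (measurable_fst.comp measurable_snd)
  have m3 : σ.map (fun p : (X × X) × (X × X) => (p.1.1, p.2.1)) = γ := by
    rw [hσK, myMapBind γ K.measurable hfmeas2]
    have h1 : (fun q => (K q).map (fun p : (X × X) × (X × X) => (p.1.1, p.2.1)))
        = fun q => Measure.dirac q := by
      funext q
      rw [hKapp]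
      have h2 : (fun p : (X × X) × (X × X) => (p.1.1, p.2.1))
          = Prod.map Prod.fst Prod.fst := rfl
      rw [h2, ← Measure.map_prod_map _ _ measurable_fst measurable_fst,
        Measure.map_fst_prod, Measure.map_fst_prod]
      simp [Measure.dirac_prod_dirac]
    rw [h1]
    exact Measure.bind_dirac
  refine ⟨m1, m2, m3, ?_⟩
  set f : (X × X) × (X × X) → ℝ := fun p => inner ℝ (p.1.1 - p.2.1) (p.1.2 - p.2.2) with hfdef
  have hfc : Continuous f := by
    apply Continuous.inner
    · exact (continuous_fst.comp continuous_fst).sub (continuous_fst.comp continuous_snd)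
    · exact (continuous_snd.comp continuous_fst).sub (continuous_snd.comp continuous_snd)
  have hsq1 : Integrable (fun p : (X × X) × (X × X) => ‖p.1‖ ^ 2) σ := by
    have h := hΦP2.2
    rw [← m1] at h
    exact (integrable_map_measure (continuous_norm.pow 2).aestronglyMeasurable
      measurable_fst.aemeasurable).mp h
  have hsq2 : Integrable (fun p : (X × X) × (X × X) => ‖p.2‖ ^ 2) σ := by
    have h := hΨP2.2
    rw [← m2] at h
    exact (integrable_map_measure (continuous_norm.pow 2).aestronglyMeasurable
      measurable_snd.aemeasurable).mp h
  have hfint : Integrable f σ := by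
    refine Integrable.mono' ((hsq1.const_mul 2).add (hsq2.const_mul 2))
      hfc.aestronglyMeasurable (Filter.Eventually.of_forall fun p => ?_)
    have k1 : ‖p.1.1 - p.2.1‖ ≤ ‖p.1‖ + ‖p.2‖ :=
      (norm_sub_le _ _).trans (add_le_add (norm_fst_le _) (norm_fst_le _))
    have k2 : ‖p.1.2 - p.2.2‖ ≤ ‖p.1‖ + ‖p.2‖ :=
      (norm_sub_le _ _).trans (add_le_add (norm_snd_le _) (norm_snd_le _))
    have k3 : ‖f p‖ ≤ ‖p.1.1 - p.2.1‖ * ‖p.1.2 - p.2.2‖ := norm_inner_le_norm _ _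
    have h0 : (0:ℝ) ≤ ‖p.1.1 - p.2.1‖ := norm_nonneg _
    have h0' : (0:ℝ) ≤ ‖p.1.2 - p.2.2‖ := norm_nonneg _
    have h1 : (0:ℝ) ≤ ‖p.1‖ := norm_nonneg _
    have h2 : (0:ℝ) ≤ ‖p.2‖ := norm_nonneg _
    simp only [Pi.add_apply]
    nlinarith [mul_le_mul k1 k2 h0' (add_nonneg h1 h2), sq_nonneg (‖p.1‖ - ‖p.2‖)]
  have hKint : Integrable (fun qp : (X × X) × ((X × X) × (X × X)) => f qp.2) (γ ⊗ₘ K) := by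
    have h := hfint
    rw [hσ2] at h
    exact (integrable_map_measure hfc.aestronglyMeasurable measurable_snd.aemeasurable).mp h
  have step1 : ∫ p, f p ∂σ = ∫ q, ∫ p, f p ∂(K q) ∂γ := by
    rw [hσ2, integral_map measurable_snd.aemeasurable hfc.aestronglyMeasurable,
      Measure.integral_compProd hKint]
  have haeInt : ∀ (Θ : Measure (X × X)) (κ : Kernel X X) [IsProbabilityMeasure Θ]
      [IsMarkovKernel κ],
      Integrable (fun y : X × X => ‖y‖ ^ 2) Θ → (Θ.map Prod.fst) ⊗ₘ κ = Θ →
      ∀ᵐ x ∂(Θ.map Prod.fst), Integrable (fun v : X => v) (κ x) := by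
    intro Θ κ _ _ hi hd
    haveI : IsProbabilityMeasure (Θ.map Prod.fst) :=
      Measure.isProbabilityMeasure_map measurable_fst.aemeasurable
    have h2 : Integrable (fun z : X × X => ‖z.2‖ ^ 2) ((Θ.map Prod.fst) ⊗ₘ κ) := by
      rw [hd]
      refine hi.mono' ((continuous_norm.comp continuous_snd).pow 2).aestronglyMeasurable
        (Filter.Eventually.of_forall fun z => ?_)
      have h5 := norm_snd_le z
      have h6 : (0:ℝ) ≤ ‖z.2‖ := norm_nonneg _
      simp only [norm_pow, norm_norm]
      nlinarith
    have h3 := ((Measure.integrable_compProd_iff h2.1).mp h2).1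
    filter_upwards [h3] with x hx
    have h4 : Integrable (fun v : X => 1 + ‖v‖ ^ 2) (κ x) := (integrable_const 1).add hx
    refine h4.mono' aestronglyMeasurable_id (Filter.Eventually.of_forall fun v => ?_)
    have h5 : (0:ℝ) ≤ ‖v‖ := norm_nonneg v
    have h6 : ‖(v : X)‖ ≤ 1 + ‖v‖ ^ 2 := by nlinarith [sq_nonneg (‖v‖ - 1)]
    simpa using h6
  have haeΦ := haeInt Φ κΦ hΦP2.2 hκΦ
  have haeΨ := haeInt Ψ κΨ hΨP2.2 hκΨ
  rw [← hγ1] at haeΦ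
  rw [← hγ2] at haeΨ
  have haeΦγ : ∀ᵐ q ∂γ, Integrable (fun v : X => v) (κΦ q.1) :=
    ae_of_ae_map measurable_fst.aemeasurable haeΦ
  have haeΨγ : ∀ᵐ q ∂γ, Integrable (fun v : X => v) (κΨ q.2) :=
    ae_of_ae_map measurable_snd.aemeasurable haeΨ
  have step2 : ∀ᵐ q ∂γ, ∫ p, f p ∂(K q)
      = (inner ℝ (q.1 - q.2) ((∫ v, v ∂κΦ q.1) - ∫ v, v ∂κΨ q.2) : ℝ) := by
    filter_upwards [haeΦγ, haeΨγ] with q h1 h2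
    have hmap : K q = ((κΦ q.1).prod (κΨ q.2)).map (Prod.map (Prod.mk q.1) (Prod.mk q.2)) := by
      rw [hKapp q, Measure.dirac_prod, Measure.dirac_prod,
        Measure.map_prod_map _ _ measurable_prodMk_left measurable_prodMk_left]
    rw [hmap, integral_map (Measurable.prodMap measurable_prodMk_left measurable_prodMk_left).aemeasurable
      hfc.aestronglyMeasurable]
    have hmfst : ((κΦ q.1).prod (κΨ q.2)).map Prod.fst = κΦ q.1 := by
      rw [Measure.map_fst_prod]; simp
    have hmsnd : ((κΦ q.1).prod (κΨ q.2)).map Prod.snd = κΨ q.2 := by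
      rw [Measure.map_snd_prod]; simp
    have i1 : Integrable (fun vw : X × X => vw.1) ((κΦ q.1).prod (κΨ q.2)) := by
      have h := h1; rw [← hmfst] at h
      exact (integrable_map_measure aestronglyMeasurable_id measurable_fst.aemeasurable).mp h
    have i2 : Integrable (fun vw : X × X => vw.2) ((κΦ q.1).prod (κΨ q.2)) := by
      have h := h2; rw [← hmsnd] at h
      exact (integrable_map_measure aestronglyMeasurable_id measurable_snd.aemeasurable).mp h
    have e1 : ∫ v, v ∂(κΦ q.1) = ∫ vw : X × X, vw.1 ∂((κΦ q.1).prod (κΨ q.2)) := by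
      conv_lhs => rw [← hmfst]
      exact integral_map measurable_fst.aemeasurable aestronglyMeasurable_id
    have e2 : ∫ v, v ∂(κΨ q.2) = ∫ vw : X × X, vw.2 ∂((κΦ q.1).prod (κΨ q.2)) := by
      conv_lhs => rw [← hmsnd]
      exact integral_map measurable_snd.aemeasurable aestronglyMeasurable_id
    calc ∫ vw : X × X, f (Prod.map (Prod.mk q.1) (Prod.mk q.2) vw) ∂((κΦ q.1).prod (κΨ q.2))
        = ∫ vw : X × X, (inner ℝ (q.1 - q.2) (vw.1 - vw.2) : ℝ) ∂((κΦ q.1).prod (κΨ q.2)) := rfl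
      _ = (inner ℝ (q.1 - q.2)
            (∫ vw : X × X, (vw.1 - vw.2) ∂((κΦ q.1).prod (κΨ q.2))) : ℝ) :=
          integral_inner (i1.sub i2) _
      _ = (inner ℝ (q.1 - q.2) ((∫ v, v ∂κΦ q.1) - ∫ v, v ∂κΨ q.2) : ℝ) := by
          rw [integral_sub i1 i2, ← e1, ← e2]
  have step3 : ∫ p, f p ∂σ
      = ∫ q, (inner ℝ (q.1 - q.2) ((∫ v, v ∂κΦ q.1) - ∫ v, v ∂κΨ q.2) : ℝ) ∂γ :=
    step1.trans (integral_congr_ae step2)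
  have hB : Measurable fun x : X => ∫ v, v ∂κΦ x := measurable_bary κΦ
  have hC : Measurable fun x : X => ∫ v, v ∂κΨ x := measurable_bary κΨ
  set T : X × X → (X × X) × (X × X) :=
    fun q => ((q.1, ∫ v, v ∂κΦ q.1), (q.2, ∫ v, v ∂κΨ q.2)) with hTdef
  have hTm : Measurable T :=
    (measurable_fst.prodMk (hB.comp measurable_fst)).prodMk
      (measurable_snd.prodMk (hC.comp measurable_snd))
  have hϑ1 : (γ.map T).map Prod.fst = brOf Φ κΦ := by
    rw [Measure.map_map measurable_fst hTm]
    have h : (Prod.fst ∘ T) = (fun x : X => (x, ∫ v, v ∂κΦ x)) ∘ Prod.fst := rfl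
    rw [h, ← Measure.map_map (show Measurable fun x : X => (x, ∫ v, v ∂κΦ x) from
      measurable_id.prodMk hB) measurable_fst, hγ1]
    rfl
  have hϑ2 : (γ.map T).map Prod.snd = brOf Ψ κΨ := by
    rw [Measure.map_map measurable_snd hTm]
    have h : (Prod.snd ∘ T) = (fun x : X => (x, ∫ v, v ∂κΨ x)) ∘ Prod.snd := rfl
    rw [h, ← Measure.map_map (show Measurable fun x : X => (x, ∫ v, v ∂κΨ x) from
      measurable_id.prodMk hC) measurable_snd, hγ2]
    rfl
  have hd := hbr (brOf Φ κΦ) ⟨Φ, hΦ, κΦ, inferInstance, hκΦ, rfl⟩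
    (brOf Ψ κΨ) ⟨Ψ, hΨ, κΨ, inferInstance, hκΨ, rfl⟩ (γ.map T) hϑ1 hϑ2
  have hgc : Continuous fun p : (X × X) × (X × X) =>
      (inner ℝ (p.2.2 - p.1.2) (p.2.1 - p.1.1) : ℝ) := by
    apply Continuous.inner
    · exact (continuous_snd.comp continuous_snd).sub (continuous_snd.comp continuous_fst)
    · exact (continuous_fst.comp continuous_snd).sub (continuous_fst.comp continuous_fst)
  have e1 : ∫ p, (inner ℝ (p.2.2 - p.1.2) (p.2.1 - p.1.1) : ℝ) ∂(γ.map T)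
      = ∫ q, (inner ℝ (q.1 - q.2) ((∫ v, v ∂κΦ q.1) - ∫ v, v ∂κΨ q.2) : ℝ) ∂γ := by
    rw [integral_map hTm.aemeasurable hgc.aestronglyMeasurable]
    refine integral_congr_ae (Filter.Eventually.of_forall fun q => ?_)
    show (inner ℝ ((∫ v, v ∂κΨ q.2) - ∫ v, v ∂κΦ q.1) (q.2 - q.1) : ℝ) = _
    rw [← neg_sub (∫ v, v ∂κΦ q.1) (∫ v, v ∂κΨ q.2), ← neg_sub q.1 q.2, inner_neg_neg,
      real_inner_comm]
  have hnc : Continuous fun p : (X × X) × (X × X) => ‖p.2.1 - p.1.1‖ ^ 2 := by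
    apply Continuous.pow
    exact ((continuous_fst.comp continuous_snd).sub (continuous_fst.comp continuous_fst)).norm
  have e2 : ∫ p, ‖p.2.1 - p.1.1‖ ^ 2 ∂(γ.map T) = ∫ q, ‖q.1 - q.2‖ ^ 2 ∂γ := by
    rw [integral_map hTm.aemeasurable hnc.aestronglyMeasurable]
    refine integral_congr_ae (Filter.Eventually.of_forall fun q => ?_)
    show ‖q.2 - q.1‖ ^ 2 = ‖q.1 - q.2‖ ^ 2
    rw [norm_sub_rev]
  calc ∫ p, f p ∂σ
      = ∫ q, (inner ℝ (q.1 - q.2) ((∫ v, v ∂κΦ q.1) - ∫ v, v ∂κΨ q.2) : ℝ) ∂γ := step3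
    _ = ∫ p, (inner ℝ (p.2.2 - p.1.2) (p.2.1 - p.1.1) : ℝ) ∂(γ.map T) := e1.symm
    _ ≤ lam * ∫ p, ‖p.2.1 - p.1.1‖ ^ 2 ∂(γ.map T) := hd
    _ = lam * ∫ q, ‖q.1 - q.2‖ ^ 2 ∂γ := by rw [e2]


/-- If the barycentric projection of an MPVF `F` is totally
`λ`-dissipative, then for `Φ, Ψ ∈ F` and any coupling `γ` of their position marginals,
the glued plan `σ := ∫ (δ_x ⊗ Φ_x) ⊗ (δ_y ⊗ Ψ_y) dγ(x,y)` is a coupling of `Φ` and `Ψ`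
whose position marginal is `γ` and which satisfies
`∫⟨x−y, v−w⟩ dσ ≤ λ ∫ |x−y|² dγ`; in particular `F` is unconditionally
`λ`-dissipative. -/
theorem stmt0 (lam : ℝ) (F : Set (Measure (X × X)))
    (hF : IsMPVF F) (hbr : TotallyDissipative lam (brSet F))
    (Φ Ψ : Measure (X × X)) (hΦ : Φ ∈ F) (hΨ : Ψ ∈ F)
    (γ : Measure (X × X)) [IsProbabilityMeasure γ]
    (hγ1 : γ.map Prod.fst = Φ.map Prod.fst) (hγ2 : γ.map Prod.snd = Ψ.map Prod.fst)
    (κΦ κΨ : Kernel X X) [IsMarkovKernel κΦ] [IsMarkovKernel κΨ]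
    (hκΦ : (Φ.map Prod.fst).compProd κΦ = Φ)
    (hκΨ : (Ψ.map Prod.fst).compProd κΨ = Ψ)
    (σ : Measure ((X × X) × (X × X)))
    (hσ : σ = γ.bind (fun q =>
      ((Measure.dirac q.1).prod (κΦ q.1)).prod ((Measure.dirac q.2).prod (κΨ q.2)))) :
    σ.map Prod.fst = Φ ∧ σ.map Prod.snd = Ψ ∧
    σ.map (fun p => (p.1.1, p.2.1)) = γ ∧
    (∫ p, (inner ℝ (p.1.1 - p.2.1) (p.1.2 - p.2.2) : ℝ) ∂σ) ≤
      lam * (∫ q, ‖q.1 - q.2‖ ^ 2 ∂γ) ∧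
    UncondDissipative lam F := by
  obtain ⟨m1, m2, m3, ineq⟩ := key lam F hF hbr Φ Ψ hΦ hΨ γ hγ1 hγ2 κΦ κΨ hκΦ hκΨ
  subst hσ
  refine ⟨m1, m2, m3, ineq, ?_⟩
  intro γ' hγ' Φ₀ hΦ₀ Φ₁ hΦ₁ h0 h1
  haveI := hγ'.1
  haveI := (hF.2 Φ₀ hΦ₀).1
  haveI := (hF.2 Φ₁ hΦ₁).1
  have hd0 : (Φ₀.map Prod.fst).compProd Φ₀.condKernel = Φ₀ := Φ₀.disintegrate _
  have hd1 : (Φ₁.map Prod.fst).compProd Φ₁.condKernel = Φ₁ := Φ₁.disintegrate _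
  obtain ⟨n1, n2, n3, nineq⟩ := key lam F hF hbr Φ₀ Φ₁ hΦ₀ hΦ₁ γ' h0.symm h1.symm
    Φ₀.condKernel Φ₁.condKernel hd0 hd1
  refine ⟨_, n1, n2, n3, ?_⟩
  have hiq : (fun p : (X × X) × (X × X) => (inner ℝ (p.2.2 - p.1.2) (p.2.1 - p.1.1) : ℝ))
      = fun p => (inner ℝ (p.1.1 - p.2.1) (p.1.2 - p.2.2) : ℝ) := by
    funext p
    rw [← neg_sub (p.1.2) (p.2.2), ← neg_sub (p.1.1) (p.2.1), inner_neg_neg, real_inner_comm]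
  rw [hiq]
  refine nineq.trans (le_of_eq ?_)
  congr 1
  refine integral_congr_ae (Filter.Eventually.of_forall fun q => ?_)
  show ‖q.1 - q.2‖ ^ 2 = ‖q.2 - q.1‖ ^ 2
  rw [norm_sub_rev]
end

section
/- Let F ⊆ P₂(TX) be an MPVF whose barycentric projection br F is totally λ-dissipative, let Φ, Ψ ∈ F with μ := x_♯Φ, ν := x_♯Ψ, let γ ∈ Γ(μ,ν) and τ > 0. Let T_τ := (x, exp^τ)_♯Φ and T̃_τ := (x, exp^τ)_♯Ψ be the associated single-step plans, with disintegrations (T_{τ,x₀})_{x₀∈X} with respect to μ and (T̃_{τ,y₀})_{y₀∈X} with respect to ν. Define ϑ := ∫_{X×X} (δ_{x₀} ⊗ T_{τ,x₀}) ⊗ (δ_{y₀} ⊗ T̃_{τ,y₀}) dγ(x₀,y₀) ∈ P(X⁴). Then ∫ ⟨x₀−y₀, (x₁−x₀)/τ − (y₁−y₀)/τ⟩ dϑ(x₀,x₁,y₀,y₁) ≤ λ ∫ |x₀−y₀|² dγ(x₀,y₀). -/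
set_option linter.unusedSectionVars false
set_option linter.unusedVariables false
set_option maxHeartbeats 2000000

open MeasureTheory ProbabilityTheory
open scoped ENNReal

variable {X : Type*} [NormedAddCommGroup X] [InnerProductSpace ℝ X]
  [CompleteSpace X] [SecondCountableTopology X] [MeasurableSpace X] [BorelSpace X]

open scoped RealInnerProductSpace

section AuxLemmas

lemma aux_compProd_fiberMap (μ : Measure X) [SFinite μ] (κ : Kernel X X) [IsMarkovKernel κ]
    {f : X × X → X} (hf : Measurable f) :
    μ.compProd (Kernel.map ((Kernel.deterministic (id : X → X) measurable_id) ×ₖ κ) f)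
      = (μ.compProd κ).map (fun p : X × X => (p.1, f p)) := by
  have hG : Measurable (fun p : X × X => (p.1, f p)) := measurable_fst.prodMk hf
  ext s hs
  rw [Measure.map_apply hG hs, Measure.compProd_apply hs, Measure.compProd_apply (hG hs)]
  refine lintegral_congr fun x => ?_
  rw [Kernel.map_apply _ hf, Kernel.prod_apply, Kernel.deterministic_apply measurable_id]
  simp only [id_eq]
  rw [Measure.dirac_prod, Measure.map_map hf measurable_prodMk_left,
    Measure.map_apply (hf.comp measurable_prodMk_left) (measurable_prodMk_left hs)]
  rfl

lemma aux_bind_eq_snd {α β : Type*} [MeasurableSpace α] [MeasurableSpace β]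
    (γ : Measure α) [SFinite γ] (G : Kernel α β) [IsMarkovKernel G] :
    γ.bind ⇑G = (γ.compProd G).map Prod.snd := by
  ext s hs
  rw [Measure.map_apply measurable_snd hs, Measure.compProd_apply (measurable_snd hs),
    Measure.bind_apply hs G.measurable.aemeasurable]
  rfl

lemma aux_key (μ ν : Measure X) [IsProbabilityMeasure μ] [IsProbabilityMeasure ν]
    (κ κ' : Kernel X X) [IsMarkovKernel κ] [IsMarkovKernel κ']
    (γ : Measure (X × X)) [IsProbabilityMeasure γ]
    (hγ1 : γ.map Prod.fst = μ) (hγ2 : γ.map Prod.snd = ν)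
    (τ : ℝ) (hτ : 0 < τ)
    (hsecκ1 : ∀ᵐ x ∂μ, Integrable (fun w => w) (κ x))
    (hsecκ'1 : ∀ᵐ y ∂ν, Integrable (fun w => w) (κ' y))
    (hsecκ2 : ∀ᵐ x ∂μ, Integrable (fun w => ‖w - x‖ ^ 2) (κ x))
    (hsecκ'2 : ∀ᵐ y ∂ν, Integrable (fun w => ‖w - y‖ ^ 2) (κ' y))
    (hgΦint : Integrable (fun x => ∫ w, ‖w - x‖ ^ 2 ∂κ x) μ)
    (hgΨint : Integrable (fun y => ∫ w, ‖w - y‖ ^ 2 ∂κ' y) ν)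
    (hγdiff : Integrable (fun q : X × X => ‖q.1 - q.2‖ ^ 2) γ) :
    (∫ p : (X × X) × (X × X), ⟪p.1.1 - p.2.1,
        τ⁻¹ • (p.1.2 - p.1.1) - τ⁻¹ • (p.2.2 - p.2.1)⟫ ∂(γ.bind (fun q =>
        ((Measure.dirac q.1).prod (κ q.1)).prod ((Measure.dirac q.2).prod (κ' q.2)))))
      = ∫ q : X × X, ⟪q.1 - q.2, (τ⁻¹ • ((∫ w, w ∂κ q.1) - q.1))
          - (τ⁻¹ • ((∫ w, w ∂κ' q.2) - q.2))⟫ ∂γ := by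
  have hτ' : (0:ℝ) < τ⁻¹ := inv_pos.mpr hτ
  -- the gluing kernel
  set G : Kernel (X × X) ((X × X) × (X × X)) :=
    ((Kernel.deterministic Prod.fst measurable_fst) ×ₖ (κ.comap Prod.fst measurable_fst)) ×ₖ
      ((Kernel.deterministic Prod.snd measurable_snd) ×ₖ (κ'.comap Prod.snd measurable_snd))
    with hGdef
  haveI : IsMarkovKernel G := by rw [hGdef]; infer_instance
  have hG0 : ∀ q : X × X, G q
      = ((Measure.dirac q.1).prod (κ q.1)).prod ((Measure.dirac q.2).prod (κ' q.2)) := by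
    intro q
    rw [hGdef, Kernel.prod_apply, Kernel.prod_apply, Kernel.prod_apply,
      Kernel.deterministic_apply measurable_fst, Kernel.deterministic_apply measurable_snd,
      Kernel.comap_apply, Kernel.comap_apply]
  have hGq : ∀ q : X × X, G q
      = ((κ q.1).prod (κ' q.2)).map (fun ab : X × X => ((q.1, ab.1), (q.2, ab.2))) := by
    intro q
    rw [hG0 q, Measure.dirac_prod, Measure.dirac_prod,
      Measure.map_prod_map _ _ measurable_prodMk_left measurable_prodMk_left]
    rfl
  have hbind : γ.bind (fun q =>
      ((Measure.dirac q.1).prod (κ q.1)).prod ((Measure.dirac q.2).prod (κ' q.2)))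
      = (γ.compProd G).map Prod.snd := by
    rw [← aux_bind_eq_snd]
    congr 1
    funext q
    exact (hG0 q).symm
  set f : (X × X) × (X × X) → ℝ := fun p => ⟪p.1.1 - p.2.1,
      τ⁻¹ • (p.1.2 - p.1.1) - τ⁻¹ • (p.2.2 - p.2.1)⟫ with hfdef
  have hfc : Continuous f := by
    rw [hfdef]
    exact Continuous.inner (by fun_prop) (by fun_prop)
  have hem : ∀ q : X × X, Measurable (fun ab : X × X => ((q.1, ab.1), (q.2, ab.2))) :=
    fun q => (measurable_const.prodMk measurable_fst).prodMk
      (measurable_const.prodMk measurable_snd)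
  -- transported a.e. facts
  have hc1 : ∀ᵐ q ∂γ, Integrable (fun w => w) (κ q.1) := by
    rw [← hγ1] at hsecκ1
    exact ae_of_ae_map measurable_fst.aemeasurable hsecκ1
  have hc'1 : ∀ᵐ q ∂γ, Integrable (fun w => w) (κ' q.2) := by
    rw [← hγ2] at hsecκ'1
    exact ae_of_ae_map measurable_snd.aemeasurable hsecκ'1
  have hc2 : ∀ᵐ q ∂γ, Integrable (fun w => ‖w - q.1‖ ^ 2) (κ q.1) := by
    rw [← hγ1] at hsecκ2
    exact ae_of_ae_map measurable_fst.aemeasurable hsecκ2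
  have hc'2 : ∀ᵐ q ∂γ, Integrable (fun w => ‖w - q.2‖ ^ 2) (κ' q.2) := by
    rw [← hγ2] at hsecκ'2
    exact ae_of_ae_map measurable_snd.aemeasurable hsecκ'2
  -- measurability of the second-moment functions
  have hgΦm : StronglyMeasurable (fun x => ∫ w, ‖w - x‖ ^ 2 ∂κ x) := by
    have : StronglyMeasurable (fun x => ∫ w,
        (fun p : X × X => ‖p.2 - p.1‖ ^ 2) (x, w) ∂κ x) :=
      ((measurable_snd.sub measurable_fst).norm.pow_const
        2).stronglyMeasurable.integral_kernel_prod_right'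
    exact this
  have hgΨm : StronglyMeasurable (fun y => ∫ w, ‖w - y‖ ^ 2 ∂κ' y) := by
    have : StronglyMeasurable (fun y => ∫ w,
        (fun p : X × X => ‖p.2 - p.1‖ ^ 2) (y, w) ∂κ' y) :=
      ((measurable_snd.sub measurable_fst).norm.pow_const
        2).stronglyMeasurable.integral_kernel_prod_right'
    exact this
  have hcgΦ : Integrable (fun q : X × X => ∫ w, ‖w - q.1‖ ^ 2 ∂κ q.1) γ := by
    rw [← hγ1] at hgΦint
    exact (integrable_map_measure hgΦm.aestronglyMeasurable
      measurable_fst.aemeasurable).mp hgΦint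
  have hcgΨ : Integrable (fun q : X × X => ∫ w, ‖w - q.2‖ ^ 2 ∂κ' q.2) γ := by
    rw [← hγ2] at hgΨint
    exact (integrable_map_measure hgΨm.aestronglyMeasurable
      measurable_snd.aemeasurable).mp hgΨint
  -- lifting integrals/integrability along the two projections of a product
  have hfstm : ∀ q : X × X, ((κ q.1).prod (κ' q.2)).map Prod.fst = κ q.1 := by
    intro q; rw [Measure.map_fst_prod]; simp
  have hsndm : ∀ q : X × X, ((κ q.1).prod (κ' q.2)).map Prod.snd = κ' q.2 := by
    intro q; rw [Measure.map_snd_prod]; simp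
  have hfst_int : ∀ (q : X × X) (L : X → ℝ), AEStronglyMeasurable L (κ q.1) →
      Integrable L (κ q.1) → Integrable (fun ab : X × X => L ab.1)
        ((κ q.1).prod (κ' q.2)) := by
    intro q L hLm hL
    exact (integrable_map_measure (by rw [hfstm q]; exact hLm)
      measurable_fst.aemeasurable).mp (by rw [hfstm q]; exact hL)
  have hsnd_int : ∀ (q : X × X) (L : X → ℝ), AEStronglyMeasurable L (κ' q.2) →
      Integrable L (κ' q.2) → Integrable (fun ab : X × X => L ab.2)
        ((κ q.1).prod (κ' q.2)) := by
    intro q L hLm hL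
    exact (integrable_map_measure (by rw [hsndm q]; exact hLm)
      measurable_snd.aemeasurable).mp (by rw [hsndm q]; exact hL)
  have hfst_eq : ∀ (q : X × X) (L : X → ℝ), AEStronglyMeasurable L (κ q.1) →
      ∫ ab : X × X, L ab.1 ∂((κ q.1).prod (κ' q.2)) = ∫ a, L a ∂κ q.1 := by
    intro q L hLm
    calc ∫ ab : X × X, L ab.1 ∂((κ q.1).prod (κ' q.2))
        = ∫ a, L a ∂(((κ q.1).prod (κ' q.2)).map Prod.fst) :=
          (integral_map measurable_fst.aemeasurable (by rw [hfstm q]; exact hLm)).symm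
      _ = ∫ a, L a ∂κ q.1 := by rw [hfstm q]
  have hsnd_eq : ∀ (q : X × X) (L : X → ℝ), AEStronglyMeasurable L (κ' q.2) →
      ∫ ab : X × X, L ab.2 ∂((κ q.1).prod (κ' q.2)) = ∫ b, L b ∂κ' q.2 := by
    intro q L hLm
    calc ∫ ab : X × X, L ab.2 ∂((κ q.1).prod (κ' q.2))
        = ∫ b, L b ∂(((κ q.1).prod (κ' q.2)).map Prod.snd) :=
          (integral_map measurable_snd.aemeasurable (by rw [hsndm q]; exact hLm)).symm
      _ = ∫ b, L b ∂κ' q.2 := by rw [hsndm q]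
  -- rewriting the integrand along the gluing map
  have hfe : ∀ q : X × X, (f ∘ fun ab : X × X => ((q.1, ab.1), (q.2, ab.2)))
      = fun ab : X × X => ⟪q.1 - q.2, τ⁻¹ • (ab.1 - q.1)⟫
        - ⟪q.1 - q.2, τ⁻¹ • (ab.2 - q.2)⟫ := by
    intro q; funext ab
    simp only [hfdef, Function.comp_apply]
    rw [inner_sub_right]
  have hL1c : ∀ q : X × X, Continuous (fun a : X => ⟪q.1 - q.2, τ⁻¹ • (a - q.1)⟫) :=
    fun q => Continuous.inner continuous_const (by fun_prop)
  have hL2c : ∀ q : X × X, Continuous (fun b : X => ⟪q.1 - q.2, τ⁻¹ • (b - q.2)⟫) :=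
    fun q => Continuous.inner continuous_const (by fun_prop)
  have hL1int : ∀ q : X × X, Integrable (fun w => w) (κ q.1) →
      Integrable (fun a : X => ⟪q.1 - q.2, τ⁻¹ • (a - q.1)⟫) (κ q.1) := by
    intro q h1
    have h : Integrable (fun a : X => τ⁻¹ • (a - q.1)) (κ q.1) := by
      have := (h1.sub (integrable_const q.1)).smul τ⁻¹
      exact this
    simpa using h.const_inner (q.1 - q.2)
  have hL2int : ∀ q : X × X, Integrable (fun w => w) (κ' q.2) →
      Integrable (fun b : X => ⟪q.1 - q.2, τ⁻¹ • (b - q.2)⟫) (κ' q.2) := by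
    intro q h2
    have h : Integrable (fun b : X => τ⁻¹ • (b - q.2)) (κ' q.2) := by
      have := (h2.sub (integrable_const q.2)).smul τ⁻¹
      exact this
    simpa using h.const_inner (q.1 - q.2)
  -- integrability of f over each glued fiber
  have hsec_int : ∀ q : X × X, Integrable (fun w => w) (κ q.1) →
      Integrable (fun w => w) (κ' q.2) → Integrable f (G q) := by
    intro q h1 h2
    rw [hGq q]
    refine (integrable_map_measure hfc.aestronglyMeasurable (hem q).aemeasurable).mpr ?_
    rw [hfe q]
    exact (hfst_int q _ (hL1c q).aestronglyMeasurable (hL1int q h1)).sub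
      (hsnd_int q _ (hL2c q).aestronglyMeasurable (hL2int q h2))
  -- the value of the fiberwise integral
  have hsec_val : ∀ q : X × X, Integrable (fun w => w) (κ q.1) →
      Integrable (fun w => w) (κ' q.2) →
      ∫ p, f p ∂(G q) = ⟪q.1 - q.2, (τ⁻¹ • ((∫ w, w ∂κ q.1) - q.1))
        - (τ⁻¹ • ((∫ w, w ∂κ' q.2) - q.2))⟫ := by
    intro q h1 h2
    rw [hGq q, integral_map (hem q).aemeasurable hfc.aestronglyMeasurable]
    have heq : (fun ab : X × X => f ((q.1, ab.1), (q.2, ab.2)))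
        = fun ab : X × X => ⟪q.1 - q.2, τ⁻¹ • (ab.1 - q.1)⟫
          - ⟪q.1 - q.2, τ⁻¹ • (ab.2 - q.2)⟫ := funext fun ab => congrFun (hfe q) ab
    rw [heq, integral_sub (hfst_int q _ (hL1c q).aestronglyMeasurable (hL1int q h1))
      (hsnd_int q _ (hL2c q).aestronglyMeasurable (hL2int q h2)),
      hfst_eq q _ (hL1c q).aestronglyMeasurable, hsnd_eq q _ (hL2c q).aestronglyMeasurable]
    have e1 : ∫ a, ⟪q.1 - q.2, τ⁻¹ • (a - q.1)⟫ ∂κ q.1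
        = ⟪q.1 - q.2, τ⁻¹ • ((∫ w, w ∂κ q.1) - q.1)⟫ := by
      have hint : Integrable (fun a : X => τ⁻¹ • (a - q.1)) (κ q.1) := by
        have := (h1.sub (integrable_const q.1)).smul τ⁻¹
        exact this
      rw [integral_inner hint (q.1 - q.2)]
      congr 1
      rw [integral_smul, integral_sub h1 (integrable_const q.1), integral_const]
      simp
    have e2 : ∫ b, ⟪q.1 - q.2, τ⁻¹ • (b - q.2)⟫ ∂κ' q.2
        = ⟪q.1 - q.2, τ⁻¹ • ((∫ w, w ∂κ' q.2) - q.2)⟫ := by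
      have hint : Integrable (fun b : X => τ⁻¹ • (b - q.2)) (κ' q.2) := by
        have := (h2.sub (integrable_const q.2)).smul τ⁻¹
        exact this
      rw [integral_inner hint (q.1 - q.2)]
      congr 1
      rw [integral_smul, integral_sub h2 (integrable_const q.2), integral_const]
      simp
    rw [e1, e2, ← inner_sub_right]
  -- global integrability over the composition product
  have hfsndm : AEStronglyMeasurable (fun r : (X × X) × ((X × X) × (X × X)) => f r.2)
      (γ.compProd G) := (hfc.comp continuous_snd).aestronglyMeasurable
  have hψ1c : ∀ x : X, Continuous (fun a : X => (τ⁻¹/2) * ‖a - x‖ ^ 2) :=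
    fun x => continuous_const.mul ((continuous_id.sub continuous_const).norm.pow 2)
  have hInt : Integrable (fun r : (X × X) × ((X × X) × (X × X)) => f r.2) (γ.compProd G) := by
    rw [Measure.integrable_compProd_iff hfsndm]
    constructor
    · filter_upwards [hc1, hc'1] with q h1 h2
      exact hsec_int q h1 h2
    · refine Integrable.mono' ((hγdiff.const_mul τ⁻¹).add
        ((hcgΦ.const_mul (τ⁻¹/2)).add (hcgΨ.const_mul (τ⁻¹/2)))) ?_ ?_
      · have : StronglyMeasurable fun q : X × X => ∫ p,
            (fun r : (X × X) × ((X × X) × (X × X)) => ‖f r.2‖) (q, p) ∂G q :=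
          ((hfc.comp continuous_snd).norm.stronglyMeasurable).integral_kernel_prod_right'
        exact this.aestronglyMeasurable
      · filter_upwards [hc2, hc'2] with q h1 h2
        have hnn : (0:ℝ) ≤ ∫ p, ‖f p‖ ∂G q := integral_nonneg fun p => norm_nonneg _
        rw [Real.norm_of_nonneg hnn]
        have hBc : Continuous (fun p : (X × X) × (X × X) => τ⁻¹ * ‖p.1.1 - p.2.1‖ ^ 2
            + ((τ⁻¹/2) * ‖p.1.2 - p.1.1‖ ^ 2 + (τ⁻¹/2) * ‖p.2.2 - p.2.1‖ ^ 2)) := by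
          fun_prop
        have hB1 : Integrable (fun ab : X × X => (τ⁻¹/2) * ‖ab.1 - q.1‖ ^ 2)
            ((κ q.1).prod (κ' q.2)) :=
          hfst_int q _ ((hψ1c q.1).aestronglyMeasurable) (h1.const_mul _)
        have hB2 : Integrable (fun ab : X × X => (τ⁻¹/2) * ‖ab.2 - q.2‖ ^ 2)
            ((κ q.1).prod (κ' q.2)) :=
          hsnd_int q _ ((hψ1c q.2).aestronglyMeasurable) (h2.const_mul _)
        have hBint : Integrable (fun p : (X × X) × (X × X) => τ⁻¹ * ‖p.1.1 - p.2.1‖ ^ 2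
            + ((τ⁻¹/2) * ‖p.1.2 - p.1.1‖ ^ 2 + (τ⁻¹/2) * ‖p.2.2 - p.2.1‖ ^ 2)) (G q) := by
          rw [hGq q]
          refine (integrable_map_measure hBc.aestronglyMeasurable (hem q).aemeasurable).mpr ?_
          have : ((fun p : (X × X) × (X × X) => τ⁻¹ * ‖p.1.1 - p.2.1‖ ^ 2
              + ((τ⁻¹/2) * ‖p.1.2 - p.1.1‖ ^ 2 + (τ⁻¹/2) * ‖p.2.2 - p.2.1‖ ^ 2)) ∘
              fun ab : X × X => ((q.1, ab.1), (q.2, ab.2)))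
              = fun ab : X × X => τ⁻¹ * ‖q.1 - q.2‖ ^ 2
                + ((τ⁻¹/2) * ‖ab.1 - q.1‖ ^ 2 + (τ⁻¹/2) * ‖ab.2 - q.2‖ ^ 2) := rfl
          rw [this]
          exact (integrable_const _).add (hB1.add hB2)
        simp only [Pi.add_apply]
        calc ∫ p, ‖f p‖ ∂G q
            ≤ ∫ p, (τ⁻¹ * ‖p.1.1 - p.2.1‖ ^ 2
              + ((τ⁻¹/2) * ‖p.1.2 - p.1.1‖ ^ 2 + (τ⁻¹/2) * ‖p.2.2 - p.2.1‖ ^ 2)) ∂G q := by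
              refine integral_mono_of_nonneg (ae_of_all _ fun p => norm_nonneg _) hBint
                (ae_of_all _ fun p => ?_)
              have h0 : |⟪p.1.1 - p.2.1, τ⁻¹ • (p.1.2 - p.1.1) - τ⁻¹ • (p.2.2 - p.2.1)⟫|
                  ≤ ‖p.1.1 - p.2.1‖ * ‖τ⁻¹ • (p.1.2 - p.1.1) - τ⁻¹ • (p.2.2 - p.2.1)‖ :=
                abs_real_inner_le_norm _ _
              have h3 : ‖τ⁻¹ • (p.1.2 - p.1.1) - τ⁻¹ • (p.2.2 - p.2.1)‖
                  ≤ τ⁻¹ * ‖p.1.2 - p.1.1‖ + τ⁻¹ * ‖p.2.2 - p.2.1‖ := by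
                refine (norm_sub_le _ _).trans ?_
                rw [norm_smul, norm_smul, Real.norm_eq_abs, abs_of_pos hτ']
              simp only [hfdef, Real.norm_eq_abs]
              nlinarith [norm_nonneg (p.1.1 - p.2.1), norm_nonneg (p.1.2 - p.1.1),
                norm_nonneg (p.2.2 - p.2.1), sq_nonneg (‖p.1.1 - p.2.1‖ - ‖p.1.2 - p.1.1‖),
                sq_nonneg (‖p.1.1 - p.2.1‖ - ‖p.2.2 - p.2.1‖), hτ'.le]
          _ = τ⁻¹ * ‖q.1 - q.2‖ ^ 2 + ((τ⁻¹/2) * ∫ w, ‖w - q.1‖ ^ 2 ∂κ q.1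
              + (τ⁻¹/2) * ∫ w, ‖w - q.2‖ ^ 2 ∂κ' q.2) := by
              rw [hGq q, integral_map (hem q).aemeasurable hBc.aestronglyMeasurable]
              have : (fun ab : X × X => τ⁻¹ * ‖((q.1, ab.1), (q.2, ab.2)).1.1
                  - ((q.1, ab.1), (q.2, ab.2)).2.1‖ ^ 2
                  + ((τ⁻¹/2) * ‖((q.1, ab.1), (q.2, ab.2)).1.2
                    - ((q.1, ab.1), (q.2, ab.2)).1.1‖ ^ 2
                  + (τ⁻¹/2) * ‖((q.1, ab.1), (q.2, ab.2)).2.2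
                    - ((q.1, ab.1), (q.2, ab.2)).2.1‖ ^ 2))
                  = fun ab : X × X => τ⁻¹ * ‖q.1 - q.2‖ ^ 2
                    + ((τ⁻¹/2) * ‖ab.1 - q.1‖ ^ 2 + (τ⁻¹/2) * ‖ab.2 - q.2‖ ^ 2) := rfl
              have hB12 : Integrable (fun ab : X × X => τ⁻¹/2 * ‖ab.1 - q.1‖ ^ 2
                  + τ⁻¹/2 * ‖ab.2 - q.2‖ ^ 2) ((κ q.1).prod (κ' q.2)) := hB1.add hB2
              rw [this, integral_add (integrable_const (τ⁻¹ * ‖q.1 - q.2‖ ^ 2)) hB12,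
                integral_add hB1 hB2, integral_const,
                hfst_eq q _ ((hψ1c q.1).aestronglyMeasurable),
                hsnd_eq q _ ((hψ1c q.2).aestronglyMeasurable),
                integral_const_mul, integral_const_mul]
              simp
  -- conclusion
  rw [hbind, integral_map measurable_snd.aemeasurable hfc.aestronglyMeasurable,
    Measure.integral_compProd hInt]
  refine integral_congr_ae ?_
  filter_upwards [hc1, hc'1] with q h1 h2
  exact hsec_val q h1 h2


end AuxLemmas

/-- Let `F` be an MPVF whose barycentric projection is totally
`λ`-dissipative, `Φ, Ψ ∈ F` with position marginals `μ, ν`, `γ ∈ Γ(μ,ν)` and `τ > 0`.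
Let `T_τ = (x, exp^τ)_♯Φ` and `T̃_τ = (x, exp^τ)_♯Ψ` be the single-step plans, with
disintegration kernels `κ` (w.r.t. `μ`) and `κ'` (w.r.t. `ν`).  For the glued plan
`ϑ := ∫ (δ_{x₀} ⊗ T_{τ,x₀}) ⊗ (δ_{y₀} ⊗ T̃_{τ,y₀}) dγ(x₀,y₀)` (in variables
`((x₀,x₁),(y₀,y₁))`) one has
`∫ ⟨x₀−y₀, (x₁−x₀)/τ − (y₁−y₀)/τ⟩ dϑ ≤ λ ∫ |x₀−y₀|² dγ`. -/
theorem stmt1 (lam : ℝ) (F : Set (Measure (X × X)))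
    (hF : IsMPVF F) (hbr : TotallyDissipative lam (brSet F))
    (Φ Ψ : Measure (X × X)) (hΦ : Φ ∈ F) (hΨ : Ψ ∈ F)
    (τ : ℝ) (hτ : 0 < τ)
    (γ : Measure (X × X)) [IsProbabilityMeasure γ]
    (hγ1 : γ.map Prod.fst = Φ.map Prod.fst) (hγ2 : γ.map Prod.snd = Ψ.map Prod.fst)
    (κ κ' : Kernel X X) [IsMarkovKernel κ] [IsMarkovKernel κ']
    (hκ : (Φ.map Prod.fst).compProd κ
        = Φ.map (fun z : X × X => (z.1, z.1 + τ • z.2)))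
    (hκ' : (Ψ.map Prod.fst).compProd κ'
        = Ψ.map (fun z : X × X => (z.1, z.1 + τ • z.2)))
    (ϑ : Measure ((X × X) × (X × X)))
    (hϑ : ϑ = γ.bind (fun q =>
      ((Measure.dirac q.1).prod (κ q.1)).prod ((Measure.dirac q.2).prod (κ' q.2)))) :
    (∫ p, (inner ℝ (p.1.1 - p.2.1)
        (τ⁻¹ • (p.1.2 - p.1.1) - τ⁻¹ • (p.2.2 - p.2.1)) : ℝ) ∂ϑ) ≤
      lam * ∫ q, ‖q.1 - q.2‖ ^ 2 ∂γ := by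
  classical
  obtain ⟨hΦp, hΦ2⟩ := hF.2 Φ hΦ
  obtain ⟨hΨp, hΨ2⟩ := hF.2 Ψ hΨ
  haveI := hΦp; haveI := hΨp
  haveI : IsProbabilityMeasure (Φ.map Prod.fst) :=
    Measure.isProbabilityMeasure_map measurable_fst.aemeasurable
  haveI : IsProbabilityMeasure (Ψ.map Prod.fst) :=
    Measure.isProbabilityMeasure_map measurable_fst.aemeasurable
  set μ : Measure X := Φ.map Prod.fst with hμdef
  set ν : Measure X := Ψ.map Prod.fst with hνdef
  haveI : IsProbabilityMeasure μ := by rw [hμdef]; infer_instance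
  haveI : IsProbabilityMeasure ν := by rw [hνdef]; infer_instance
  have hg₂ : Measurable (fun p : X × X => τ⁻¹ • (p.2 - p.1)) :=
    (measurable_snd.sub measurable_fst).const_smul τ⁻¹
  have heτ : Measurable (fun z : X × X => (z.1, z.1 + τ • z.2)) :=
    measurable_fst.prodMk (measurable_fst.add (measurable_snd.const_smul τ))
  -- the rescaled disintegration kernels
  set κΦ : Kernel X X :=
    Kernel.map ((Kernel.deterministic (id : X → X) measurable_id) ×ₖ κ)
      (fun p : X × X => τ⁻¹ • (p.2 - p.1)) with hκΦdef
  set κΨ : Kernel X X :=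
    Kernel.map ((Kernel.deterministic (id : X → X) measurable_id) ×ₖ κ')
      (fun p : X × X => τ⁻¹ • (p.2 - p.1)) with hκΨdef
  haveI : IsMarkovKernel κΦ := by rw [hκΦdef]; exact Kernel.IsMarkovKernel.map _ hg₂
  haveI : IsMarkovKernel κΨ := by rw [hκΨdef]; exact Kernel.IsMarkovKernel.map _ hg₂
  have hcomp : ((fun p : X × X => (p.1, τ⁻¹ • (p.2 - p.1))) ∘
      (fun z : X × X => (z.1, z.1 + τ • z.2))) = id := by
    funext z
    simp [Function.comp, add_sub_cancel_left, smul_smul,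
      inv_mul_cancel₀ (ne_of_gt hτ)]
  have hκΦ : μ.compProd κΦ = Φ := by
    rw [hκΦdef, aux_compProd_fiberMap μ κ hg₂, hκ,
      Measure.map_map (measurable_fst.prodMk hg₂) heτ, hcomp, Measure.map_id]
  have hκΨ : ν.compProd κΨ = Ψ := by
    rw [hκΨdef, aux_compProd_fiberMap ν κ' hg₂, hκ',
      Measure.map_map (measurable_fst.prodMk hg₂) heτ, hcomp, Measure.map_id]
  ---- integrability facts for Φ
  have hn1Φ : Integrable (fun z : X × X => ‖z‖) Φ := by
    refine Integrable.mono' ((integrable_const (1:ℝ)).add hΦ2)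
      continuous_norm.aestronglyMeasurable (ae_of_all _ fun z => ?_)
    have h : ‖(‖z‖ : ℝ)‖ = ‖z‖ := by simp
    rw [h]
    simp only [Pi.add_apply]
    nlinarith [norm_nonneg z, sq_nonneg (‖z‖ - 1)]
  have hz1Φ : Integrable (fun z : X × X => z.1) Φ :=
    hn1Φ.mono' measurable_fst.aestronglyMeasurable (ae_of_all _ fun z => norm_fst_le z)
  have hz2Φ : Integrable (fun z : X × X => z.2) Φ :=
    hn1Φ.mono' measurable_snd.aestronglyMeasurable (ae_of_all _ fun z => norm_snd_le z)
  have hΦfst2 : Integrable (fun z : X × X => ‖z.1‖ ^ 2) Φ := by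
    refine hΦ2.mono' ((measurable_fst.norm.pow_const 2).aestronglyMeasurable)
      (ae_of_all _ fun z => ?_)
    simp only [Real.norm_eq_abs, abs_pow, abs_norm]
    exact pow_le_pow_left₀ (norm_nonneg _) (norm_fst_le z) 2
  have hΦsnd2 : Integrable (fun z : X × X => ‖z.2‖ ^ 2) Φ := by
    refine hΦ2.mono' ((measurable_snd.norm.pow_const 2).aestronglyMeasurable)
      (ae_of_all _ fun z => ?_)
    simp only [Real.norm_eq_abs, abs_pow, abs_norm]
    exact pow_le_pow_left₀ (norm_nonneg _) (norm_snd_le z) 2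
  have hμ2 : Integrable (fun x : X => ‖x‖ ^ 2) μ := by
    rw [hμdef]
    exact (integrable_map_measure ((measurable_norm.pow_const 2).aestronglyMeasurable)
      measurable_fst.aemeasurable).mpr hΦfst2
  have hTτ2 : Integrable (fun p : X × X => ‖p.2 - p.1‖ ^ 2) (μ.compProd κ) := by
    rw [hκ]
    refine (integrable_map_measure
      (((measurable_snd.sub measurable_fst).norm.pow_const 2).aestronglyMeasurable)
      heτ.aemeasurable).mpr ?_
    have h : ((fun p : X × X => ‖p.2 - p.1‖ ^ 2) ∘ (fun z : X × X => (z.1, z.1 + τ • z.2)))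
        = fun z : X × X => |τ| ^ 2 * ‖z.2‖ ^ 2 := by
      funext z
      simp [Function.comp, add_sub_cancel_left, norm_smul, mul_pow, Real.norm_eq_abs]
    exact (congrArg (fun F => Integrable F Φ) h).mpr (hΦsnd2.const_mul _)
  have hTτid : Integrable (fun p : X × X => p.2) (μ.compProd κ) := by
    rw [hκ]
    refine (integrable_map_measure measurable_snd.aestronglyMeasurable
      heτ.aemeasurable).mpr ?_
    have h : ((fun p : X × X => p.2) ∘ (fun z : X × X => (z.1, z.1 + τ • z.2)))
        = fun z : X × X => z.1 + τ • z.2 := rfl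
    rw [h]
    exact hz1Φ.add (hz2Φ.smul τ)
  have hsecκ1 : ∀ᵐ x ∂μ, Integrable (fun w => w) (κ x) :=
    ((Measure.integrable_compProd_iff measurable_snd.aestronglyMeasurable).mp hTτid).1
  have hsecκ2 : ∀ᵐ x ∂μ, Integrable (fun w => ‖w - x‖ ^ 2) (κ x) :=
    ((Measure.integrable_compProd_iff
      (((measurable_snd.sub measurable_fst).norm.pow_const 2).aestronglyMeasurable)).mp hTτ2).1
  have hgΦint : Integrable (fun x => ∫ w, ‖w - x‖ ^ 2 ∂κ x) μ := by
    have h := ((Measure.integrable_compProd_iff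
      (((measurable_snd.sub measurable_fst).norm.pow_const 2).aestronglyMeasurable)).mp hTτ2).2
    refine h.congr (ae_of_all _ fun x => ?_)
    refine integral_congr_ae (ae_of_all _ fun w => ?_)
    simp [Real.norm_eq_abs, abs_pow]
  ---- integrability facts for Ψ
  have hn1Ψ : Integrable (fun z : X × X => ‖z‖) Ψ := by
    refine Integrable.mono' ((integrable_const (1:ℝ)).add hΨ2)
      continuous_norm.aestronglyMeasurable (ae_of_all _ fun z => ?_)
    have h : ‖(‖z‖ : ℝ)‖ = ‖z‖ := by simp
    rw [h]
    simp only [Pi.add_apply]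
    nlinarith [norm_nonneg z, sq_nonneg (‖z‖ - 1)]
  have hz1Ψ : Integrable (fun z : X × X => z.1) Ψ :=
    hn1Ψ.mono' measurable_fst.aestronglyMeasurable (ae_of_all _ fun z => norm_fst_le z)
  have hz2Ψ : Integrable (fun z : X × X => z.2) Ψ :=
    hn1Ψ.mono' measurable_snd.aestronglyMeasurable (ae_of_all _ fun z => norm_snd_le z)
  have hΨfst2 : Integrable (fun z : X × X => ‖z.1‖ ^ 2) Ψ := by
    refine hΨ2.mono' ((measurable_fst.norm.pow_const 2).aestronglyMeasurable)
      (ae_of_all _ fun z => ?_)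
    simp only [Real.norm_eq_abs, abs_pow, abs_norm]
    exact pow_le_pow_left₀ (norm_nonneg _) (norm_fst_le z) 2
  have hΨsnd2 : Integrable (fun z : X × X => ‖z.2‖ ^ 2) Ψ := by
    refine hΨ2.mono' ((measurable_snd.norm.pow_const 2).aestronglyMeasurable)
      (ae_of_all _ fun z => ?_)
    simp only [Real.norm_eq_abs, abs_pow, abs_norm]
    exact pow_le_pow_left₀ (norm_nonneg _) (norm_snd_le z) 2
  have hν2 : Integrable (fun x : X => ‖x‖ ^ 2) ν := by
    rw [hνdef]
    exact (integrable_map_measure ((measurable_norm.pow_const 2).aestronglyMeasurable)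
      measurable_fst.aemeasurable).mpr hΨfst2
  have hTτ2' : Integrable (fun p : X × X => ‖p.2 - p.1‖ ^ 2) (ν.compProd κ') := by
    rw [hκ']
    refine (integrable_map_measure
      (((measurable_snd.sub measurable_fst).norm.pow_const 2).aestronglyMeasurable)
      heτ.aemeasurable).mpr ?_
    have h : ((fun p : X × X => ‖p.2 - p.1‖ ^ 2) ∘ (fun z : X × X => (z.1, z.1 + τ • z.2)))
        = fun z : X × X => |τ| ^ 2 * ‖z.2‖ ^ 2 := by
      funext z
      simp [Function.comp, add_sub_cancel_left, norm_smul, mul_pow, Real.norm_eq_abs]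
    exact (congrArg (fun F => Integrable F Ψ) h).mpr (hΨsnd2.const_mul _)
  have hTτid' : Integrable (fun p : X × X => p.2) (ν.compProd κ') := by
    rw [hκ']
    refine (integrable_map_measure measurable_snd.aestronglyMeasurable
      heτ.aemeasurable).mpr ?_
    have h : ((fun p : X × X => p.2) ∘ (fun z : X × X => (z.1, z.1 + τ • z.2)))
        = fun z : X × X => z.1 + τ • z.2 := rfl
    rw [h]
    exact hz1Ψ.add (hz2Ψ.smul τ)
  have hsecκ'1 : ∀ᵐ y ∂ν, Integrable (fun w => w) (κ' y) :=
    ((Measure.integrable_compProd_iff measurable_snd.aestronglyMeasurable).mp hTτid').1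
  have hsecκ'2 : ∀ᵐ y ∂ν, Integrable (fun w => ‖w - y‖ ^ 2) (κ' y) :=
    ((Measure.integrable_compProd_iff
      (((measurable_snd.sub measurable_fst).norm.pow_const 2).aestronglyMeasurable)).mp hTτ2').1
  have hgΨint : Integrable (fun y => ∫ w, ‖w - y‖ ^ 2 ∂κ' y) ν := by
    have h := ((Measure.integrable_compProd_iff
      (((measurable_snd.sub measurable_fst).norm.pow_const 2).aestronglyMeasurable)).mp hTτ2').2
    refine h.congr (ae_of_all _ fun y => ?_)
    refine integral_congr_ae (ae_of_all _ fun w => ?_)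
    simp [Real.norm_eq_abs, abs_pow]
  ---- second moment of the difference under γ
  have hγfst2 : Integrable (fun q : X × X => ‖q.1‖ ^ 2) γ := by
    rw [← hγ1] at hμ2
    exact (integrable_map_measure ((measurable_norm.pow_const 2).aestronglyMeasurable)
      measurable_fst.aemeasurable).mp hμ2
  have hγsnd2 : Integrable (fun q : X × X => ‖q.2‖ ^ 2) γ := by
    rw [← hγ2] at hν2
    exact (integrable_map_measure ((measurable_norm.pow_const 2).aestronglyMeasurable)
      measurable_snd.aemeasurable).mp hν2
  have hγdiff : Integrable (fun q : X × X => ‖q.1 - q.2‖ ^ 2) γ := by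
    refine Integrable.mono' ((hγfst2.const_mul 2).add (hγsnd2.const_mul 2))
      (((measurable_fst.sub measurable_snd).norm.pow_const 2).aestronglyMeasurable)
      (ae_of_all _ fun q => ?_)
    simp only [Pi.add_apply, Real.norm_eq_abs, abs_pow, abs_norm]
    nlinarith [norm_sub_le q.1 q.2, norm_nonneg q.1, norm_nonneg q.2,
      norm_nonneg (q.1 - q.2), sq_nonneg (‖q.1‖ - ‖q.2‖)]
  ---- the measurable barycenter maps
  have hβΦm : Measurable (fun x => ∫ v, v ∂(κΦ x)) := by
    have h : StronglyMeasurable (fun x => ∫ v, (Prod.snd : X × X → X) (x, v) ∂κΦ x) :=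
      measurable_snd.stronglyMeasurable.integral_kernel_prod_right'
    exact h.measurable
  have hβΨm : Measurable (fun y => ∫ v, v ∂(κΨ y)) := by
    have h : StronglyMeasurable (fun y => ∫ v, (Prod.snd : X × X → X) (y, v) ∂κΨ y) :=
      measurable_snd.stronglyMeasurable.integral_kernel_prod_right'
    exact h.measurable
  ---- a.e. identification of the barycenters
  have hβΦ : ∀ᵐ x ∂μ, (∫ v, v ∂(κΦ x)) = τ⁻¹ • ((∫ w, w ∂κ x) - x) := by
    filter_upwards [hsecκ1] with x hx
    have hx' : κΦ x = (κ x).map (fun w => τ⁻¹ • (w - x)) := by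
      rw [hκΦdef, Kernel.map_apply _ hg₂, Kernel.prod_apply,
        Kernel.deterministic_apply measurable_id]
      simp only [id_eq]
      rw [Measure.dirac_prod, Measure.map_map hg₂ measurable_prodMk_left]
      rfl
    have hφm : Measurable (fun w : X => τ⁻¹ • (w - x)) := by fun_prop
    have hmap : ∫ v, v ∂((κ x).map (fun w => τ⁻¹ • (w - x)))
        = ∫ w, τ⁻¹ • (w - x) ∂κ x :=
      integral_map hφm.aemeasurable aestronglyMeasurable_id
    rw [hx', hmap]
    rw [integral_smul, integral_sub hx (integrable_const x), integral_const]
    simp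
  have hβΨ : ∀ᵐ y ∂ν, (∫ v, v ∂(κΨ y)) = τ⁻¹ • ((∫ w, w ∂κ' y) - y) := by
    filter_upwards [hsecκ'1] with y hy
    have hy' : κΨ y = (κ' y).map (fun w => τ⁻¹ • (w - y)) := by
      rw [hκΨdef, Kernel.map_apply _ hg₂, Kernel.prod_apply,
        Kernel.deterministic_apply measurable_id]
      simp only [id_eq]
      rw [Measure.dirac_prod, Measure.map_map hg₂ measurable_prodMk_left]
      rfl
    have hφm : Measurable (fun w : X => τ⁻¹ • (w - y)) := by fun_prop
    have hmap : ∫ v, v ∂((κ' y).map (fun w => τ⁻¹ • (w - y)))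
        = ∫ w, τ⁻¹ • (w - y) ∂κ' y :=
      integral_map hφm.aemeasurable aestronglyMeasurable_id
    rw [hy', hmap]
    rw [integral_smul, integral_sub hy (integrable_const y), integral_const]
    simp
  ---- the coupling of the barycentric projections
  set T : X × X → (X × X) × (X × X) :=
    fun q => ((q.1, ∫ v, v ∂(κΦ q.1)), (q.2, ∫ v, v ∂(κΨ q.2))) with hTdef
  have hTm : Measurable T := by
    rw [hTdef]
    exact ((measurable_fst.prodMk (hβΦm.comp measurable_fst)).prodMk
      (measurable_snd.prodMk (hβΨm.comp measurable_snd)))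
  have hbrΦ : brOf Φ κΦ = γ.map (fun q : X × X => (q.1, ∫ v, v ∂(κΦ q.1))) := by
    show (Φ.map Prod.fst).map (fun x => (x, ∫ v, v ∂(κΦ x))) = _
    have hgm : Measurable (fun x : X => (x, ∫ v, v ∂(κΦ x))) :=
      measurable_id.prodMk hβΦm
    rw [← hμdef, ← hγ1, Measure.map_map hgm measurable_fst]
    rfl
  have hbrΨ : brOf Ψ κΨ = γ.map (fun q : X × X => (q.2, ∫ v, v ∂(κΨ q.2))) := by
    show (Ψ.map Prod.fst).map (fun y => (y, ∫ v, v ∂(κΨ y))) = _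
    have hgm : Measurable (fun y : X => (y, ∫ v, v ∂(κΨ y))) :=
      measurable_id.prodMk hβΨm
    rw [← hνdef, ← hγ2, Measure.map_map hgm measurable_snd]
    rfl
  have hθfst : (γ.map T).map Prod.fst = brOf Φ κΦ := by
    rw [hbrΦ, Measure.map_map measurable_fst hTm]
    rfl
  have hθsnd : (γ.map T).map Prod.snd = brOf Ψ κΨ := by
    rw [hbrΨ, Measure.map_map measurable_snd hTm]
    rfl
  have hmemΦ : brOf Φ κΦ ∈ brSet F := ⟨Φ, hΦ, κΦ, inferInstance, hκΦ, rfl⟩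
  have hmemΨ : brOf Ψ κΨ ∈ brSet F := ⟨Ψ, hΨ, κΨ, inferInstance, hκΨ, rfl⟩
  have hdis := hbr (brOf Φ κΦ) hmemΦ (brOf Ψ κΨ) hmemΨ (γ.map T) hθfst hθsnd
  ---- rewrite the dissipativity inequality through the map T
  have hinC : Continuous fun p : (X × X) × (X × X) => ⟪p.2.2 - p.1.2, p.2.1 - p.1.1⟫ :=
    Continuous.inner (by fun_prop) (by fun_prop)
  have hnC : Continuous fun p : (X × X) × (X × X) => ‖p.2.1 - p.1.1‖ ^ 2 := by fun_prop
  rw [integral_map hTm.aemeasurable hinC.aestronglyMeasurable,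
    integral_map hTm.aemeasurable hnC.aestronglyMeasurable] at hdis
  ---- compute the LHS via aux_key and conclude
  have hae1 : ∀ᵐ q ∂γ, (∫ v, v ∂(κΦ q.1)) = τ⁻¹ • ((∫ w, w ∂κ q.1) - q.1) := by
    rw [← hγ1] at hβΦ
    exact ae_of_ae_map measurable_fst.aemeasurable hβΦ
  have hae2 : ∀ᵐ q ∂γ, (∫ v, v ∂(κΨ q.2)) = τ⁻¹ • ((∫ w, w ∂κ' q.2) - q.2) := by
    rw [← hγ2] at hβΨ
    exact ae_of_ae_map measurable_snd.aemeasurable hβΨ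
  calc (∫ p : (X × X) × (X × X), ⟪p.1.1 - p.2.1,
        τ⁻¹ • (p.1.2 - p.1.1) - τ⁻¹ • (p.2.2 - p.2.1)⟫ ∂ϑ)
      = ∫ q : X × X, ⟪q.1 - q.2, (τ⁻¹ • ((∫ w, w ∂κ q.1) - q.1))
          - (τ⁻¹ • ((∫ w, w ∂κ' q.2) - q.2))⟫ ∂γ := by
        rw [hϑ]
        exact aux_key μ ν κ κ' γ hγ1 hγ2 τ hτ hsecκ1 hsecκ'1 hsecκ2 hsecκ'2
          hgΦint hgΨint hγdiff
    _ = ∫ q : X × X, ⟪(T q).2.2 - (T q).1.2, (T q).2.1 - (T q).1.1⟫ ∂γ := by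
        refine integral_congr_ae ?_
        filter_upwards [hae1, hae2] with q e1 e2
        show _ = ⟪(∫ v, v ∂(κΨ q.2)) - (∫ v, v ∂(κΦ q.1)), q.2 - q.1⟫
        rw [e1, e2,
          show q.2 - q.1 = -(q.1 - q.2) from (neg_sub _ _).symm,
          show (τ⁻¹ • ((∫ w, w ∂κ' q.2) - q.2)) - (τ⁻¹ • ((∫ w, w ∂κ q.1) - q.1))
            = -((τ⁻¹ • ((∫ w, w ∂κ q.1) - q.1)) - (τ⁻¹ • ((∫ w, w ∂κ' q.2) - q.2)))
            from (neg_sub _ _).symm,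
          inner_neg_neg]
        exact real_inner_comm _ _
    _ ≤ lam * ∫ q : X × X, ‖(T q).2.1 - (T q).1.1‖ ^ 2 ∂γ := hdis
    _ = lam * ∫ q : X × X, ‖q.1 - q.2‖ ^ 2 ∂γ := by
        congr 1
        refine integral_congr_ae (ae_of_all _ fun q => ?_)
        show ‖q.2 - q.1‖ ^ 2 = ‖q.1 - q.2‖ ^ 2
        rw [norm_sub_rev]
end

section
/- Let F ⊆ P₂(TX) be an MPVF, μ̄ ∈ D(F), τ, T, L > 0 and N := ⌈T/τ⌉. Let (Mⁿ_τ, Φⁿ_τ)_{0≤n≤N} be an L-stable solution of the Explicit Euler scheme starting from μ̄ and let η_τ := G_♯α_τ, where α_τ is the multi-step plan associated with (Φⁿ_τ)ₙ. Define the 2-action A₂: C([0,T];X) → [0,+∞] by A₂(γ) := ∫₀ᵀ |γ'(t)|² dt if γ is absolutely continuous with derivative in L²(0,T;X), and A₂(γ) := +∞ otherwise. Then ∫ A₂ dη_τ ≤ Σ_{k=0}^{N−1} τ |Φᵏ_τ|₂² ≤ L²(T + τ). -/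
open MeasureTheory ProbabilityTheory
open scoped ENNReal

variable {X : Type*} [NormedAddCommGroup X] [InnerProductSpace ℝ X]
  [CompleteSpace X] [SecondCountableTopology X] [MeasurableSpace X] [BorelSpace X]

/-- An `L`-stable solution of the Explicit Euler scheme. -/
def IsEulerSol (F : Set (Measure (X × X))) (τ L : ℝ) (N : ℕ) (μ0 : Measure X)
    (M : ℕ → Measure X) (Φ : ℕ → Measure (X × X)) : Prop :=
  M 0 = μ0 ∧
  (∀ n < N, Φ n ∈ F ∧ (Φ n).map Prod.fst = M n ∧ (∫ z, ‖z.2‖ ^ 2 ∂(Φ n)) ≤ L ^ 2) ∧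
  (∀ n < N, M (n + 1) = (Φ n).map (fun z : X × X => z.1 + τ • z.2))

/-- The multi-step plans. -/
noncomputable def mstep (T0 : Measure (X × X)) (κ : ℕ → Kernel X X) :
    (n : ℕ) → Measure (Fin (n + 2) → X)
  | 0 => T0.map (fun p => ![p.1, p.2])
  | n + 1 => (mstep T0 κ n).bind
      (fun xs => ((κ (n + 1)) (xs (Fin.last (n + 1)))).map (Fin.snoc xs))

/-- The `2`-action functional on `C([0,T];X)`: `A₂(γ) = ∫₀ᵀ |γ'(t)|² dt` if `γ` is
absolutely continuous with (interval-)integrable derivative, `+∞` otherwise. -/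
noncomputable def action2 (T : ℝ) (hT : 0 ≤ T) (γ : C(Set.Icc (0:ℝ) T, X)) : ℝ≥0∞ :=
  ⨅ (g : ℝ → X) (_ : IntervalIntegrable g MeasureTheory.volume 0 T)
    (_ : ∀ t : Set.Icc (0:ℝ) T,
      γ t = γ ⟨0, Set.left_mem_Icc.mpr hT⟩ + ∫ s in (0:ℝ)..(t : ℝ), g s),
    ∫⁻ s in Set.Ioc (0:ℝ) T, (‖g s‖₊ : ℝ≥0∞) ^ 2


set_option linter.unusedSectionVars false
set_option maxHeartbeats 1000000

section auxlemmas
variable {X : Type*} [NormedAddCommGroup X] [InnerProductSpace ℝ X]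
  [CompleteSpace X] [SecondCountableTopology X] [MeasurableSpace X] [BorelSpace X]

lemma meas_snoc_pair {n : ℕ} :
    Measurable (fun p : ((Fin n → X) × X) => (Fin.snoc p.1 p.2 : Fin (n+1) → X)) := by
  rw [measurable_pi_iff]
  intro i
  induction i using Fin.lastCases with
  | last => simpa [Fin.snoc_last] using measurable_snd
  | cast j => simpa [Fin.snoc_castSucc, Function.comp_def] using (measurable_pi_apply j).comp measurable_fst

lemma meas_snoc {n : ℕ} (xs : Fin n → X) :
    Measurable (fun y : X => (Fin.snoc xs y : Fin (n+1) → X)) :=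
  meas_snoc_pair.comp (measurable_prodMk_left)

lemma meas_pairfun : Measurable (fun p : X × X => ![p.1, p.2]) := by
  rw [measurable_pi_iff]
  intro i
  fin_cases i
  · simpa using measurable_fst
  · simpa using measurable_snd

lemma meas_mstep_step {n : ℕ} (κ' : Kernel X X) [IsSFiniteKernel κ'] :
    Measurable (fun xs : Fin (n+2) → X =>
      ((κ' (xs (Fin.last (n+1)))).map (Fin.snoc xs) : Measure (Fin (n+3) → X))) := by
  apply Measure.measurable_of_measurable_coe
  intro s hs
  have h1 : ∀ xs : Fin (n+2) → X, (κ' (xs (Fin.last (n+1)))).map (Fin.snoc xs) s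
      = (κ'.comap (fun xs : Fin (n+2) → X => xs (Fin.last (n+1))) (measurable_pi_apply _)) xs
        (Prod.mk xs ⁻¹' ((fun p : ((Fin (n+2) → X) × X) =>
          (Fin.snoc p.1 p.2 : Fin (n+3) → X)) ⁻¹' s)) := by
    intro xs
    rw [Measure.map_apply (meas_snoc xs) hs, Kernel.comap_apply]
    rfl
  simp_rw [h1]
  exact Kernel.measurable_kernel_prodMk_left (meas_snoc_pair hs)

lemma lintegral_mstep_succ (T0 : Measure (X × X)) (κ : ℕ → Kernel X X)
    [∀ n, IsMarkovKernel (κ n)] (n : ℕ)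
    (F : (Fin (n+3) → X) → ℝ≥0∞) (hF : Measurable F) :
    ∫⁻ xs, F xs ∂(mstep T0 κ (n+1))
      = ∫⁻ xs, ∫⁻ y, F (Fin.snoc xs y) ∂(κ (n+1) (xs (Fin.last (n+1)))) ∂(mstep T0 κ n) := by
  show ∫⁻ xs, F xs ∂((mstep T0 κ n).bind _) = _
  rw [Measure.lintegral_bind (meas_mstep_step (κ (n+1))).aemeasurable hF.aemeasurable]
  congr 1
  ext xs
  rw [lintegral_map hF (meas_snoc xs)]

lemma mstep_marginals (κ : ℕ → Kernel X X) [∀ n, IsMarkovKernel (κ n)]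
    (K : ℕ) (Tn : ℕ → Measure (X × X)) (hprob : ∀ n ≤ K, IsProbabilityMeasure (Tn n))
    (hstep : ∀ n, n + 1 ≤ K → ((Tn n).map Prod.snd).compProd (κ (n+1)) = Tn (n+1)) :
    ∀ n ≤ K,
      (∀ f : X → ℝ≥0∞, Measurable f →
        ∫⁻ xs, f (xs (Fin.last (n+1))) ∂(mstep (Tn 0) κ n) = ∫⁻ p, f p.2 ∂(Tn n)) ∧
      (∀ i, ∀ _ : i ≤ n, ∀ f : X × X → ℝ≥0∞, Measurable f →
        ∫⁻ xs, f (xs ⟨i, by omega⟩, xs ⟨i+1, by omega⟩) ∂(mstep (Tn 0) κ n)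
          = ∫⁻ p, f p ∂(Tn i)) := by
  intro n
  induction n with
  | zero =>
    intro _
    have hpair : ∀ f : X × X → ℝ≥0∞, Measurable f →
        ∫⁻ xs, f (xs ⟨0, by omega⟩, xs ⟨1, by omega⟩) ∂(mstep (Tn 0) κ 0)
          = ∫⁻ p, f p ∂(Tn 0) := by
      intro f hf
      have hFmeas : Measurable (fun xs : Fin 2 → X => f (xs ⟨0, by omega⟩, xs ⟨1, by omega⟩)) :=
        hf.comp ((measurable_pi_apply _).prodMk (measurable_pi_apply _))
      show ∫⁻ xs : Fin 2 → X, f (xs ⟨0, by omega⟩, xs ⟨1, by omega⟩)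
          ∂((Tn 0).map (fun p => ![p.1, p.2])) = _
      rw [lintegral_map hFmeas meas_pairfun]
      rfl
    refine ⟨fun f hf => ?_, fun i hi f hf => ?_⟩
    · exact hpair (fun p => f p.2) (hf.comp measurable_snd)
    · interval_cases i
      exact hpair f hf
  | succ n ih =>
    intro hn1
    have ihn := ih (by omega)
    haveI hsf : IsProbabilityMeasure ((Tn n).map Prod.snd) := by
      haveI := hprob n (by omega)
      exact Measure.isProbabilityMeasure_map measurable_snd.aemeasurable
    -- main new-pair computation
    have hnew : ∀ f : X × X → ℝ≥0∞, Measurable f →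
        ∫⁻ xs, f (xs ⟨n+1, by omega⟩, xs ⟨n+2, by omega⟩) ∂(mstep (Tn 0) κ (n+1))
          = ∫⁻ p, f p ∂(Tn (n+1)) := by
      intro f hf
      have hFmeas : Measurable (fun xs : Fin (n+3) → X => f (xs ⟨n+1, by omega⟩, xs ⟨n+2, by omega⟩)) :=
        hf.comp ((measurable_pi_apply _).prodMk (measurable_pi_apply _))
      rw [lintegral_mstep_succ (Tn 0) κ n _ hFmeas]
      have hsnoc : ∀ (xs : Fin (n+2) → X) (y : X),
          (Fin.snoc xs y : Fin (n+3) → X) ⟨n+1, by omega⟩ = xs (Fin.last (n+1))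
          ∧ (Fin.snoc xs y : Fin (n+3) → X) ⟨n+2, by omega⟩ = y := by
        intro xs y
        constructor
        · have h2 : (⟨n+1, by omega⟩ : Fin (n+3)) = Fin.castSucc (Fin.last (n+1)) := rfl
          rw [h2, Fin.snoc_castSucc]
        · have h2 : (⟨n+2, by omega⟩ : Fin (n+3)) = Fin.last (n+2) := rfl
          rw [h2, Fin.snoc_last]
      have hg : Measurable (fun x : X => ∫⁻ y, f (x, y) ∂(κ (n+1)) x) :=
        Measurable.lintegral_kernel_prod_right' (κ := κ (n+1)) hf
      calc ∫⁻ xs, ∫⁻ y, f ((Fin.snoc xs y : Fin (n+3) → X) ⟨n+1, by omega⟩,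
              (Fin.snoc xs y : Fin (n+3) → X) ⟨n+2, by omega⟩)
              ∂(κ (n+1) (xs (Fin.last (n+1)))) ∂(mstep (Tn 0) κ n)
          = ∫⁻ xs, (fun x => ∫⁻ y, f (x, y) ∂(κ (n+1)) x) (xs (Fin.last (n+1)))
              ∂(mstep (Tn 0) κ n) := by
            congr 1; ext xs
            congr 1; ext y
            rw [(hsnoc xs y).1, (hsnoc xs y).2]
        _ = ∫⁻ p, (fun x => ∫⁻ y, f (x, y) ∂(κ (n+1)) x) p.2 ∂(Tn n) := ihn.1 _ hg
        _ = ∫⁻ x, ∫⁻ y, f (x, y) ∂(κ (n+1)) x ∂((Tn n).map Prod.snd) :=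
            (lintegral_map hg measurable_snd).symm
        _ = ∫⁻ p, f p ∂(((Tn n).map Prod.snd).compProd (κ (n+1))) :=
            (Measure.lintegral_compProd hf).symm
        _ = ∫⁻ p, f p ∂(Tn (n+1)) := by rw [hstep n hn1]
    refine ⟨fun f hf => ?_, fun i hi f hf => ?_⟩
    · exact hnew (fun p => f p.2) (hf.comp measurable_snd)
    · rcases Nat.lt_or_ge i (n+1) with hlt | hge
      · -- old pair
        have hFmeas : Measurable (fun xs : Fin (n+3) → X =>
            f (xs ⟨i, by omega⟩, xs ⟨i+1, by omega⟩)) :=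
          hf.comp ((measurable_pi_apply _).prodMk (measurable_pi_apply _))
        rw [lintegral_mstep_succ (Tn 0) κ n _ hFmeas]
        have hsnoc : ∀ (xs : Fin (n+2) → X) (y : X),
            f ((Fin.snoc xs y : Fin (n+3) → X) ⟨i, by omega⟩,
               (Fin.snoc xs y : Fin (n+3) → X) ⟨i+1, by omega⟩)
            = f (xs ⟨i, by omega⟩, xs ⟨i+1, by omega⟩) := by
          intro xs y
          have h2 : (⟨i, by omega⟩ : Fin (n+3)) = Fin.castSucc ⟨i, by omega⟩ := rfl
          have h3 : (⟨i+1, by omega⟩ : Fin (n+3)) = Fin.castSucc ⟨i+1, by omega⟩ := rfl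
          rw [h2, h3, Fin.snoc_castSucc, Fin.snoc_castSucc]
        calc ∫⁻ xs, ∫⁻ y, f ((Fin.snoc xs y : Fin (n+3) → X) ⟨i, by omega⟩,
                (Fin.snoc xs y : Fin (n+3) → X) ⟨i+1, by omega⟩)
                ∂(κ (n+1) (xs (Fin.last (n+1)))) ∂(mstep (Tn 0) κ n)
            = ∫⁻ xs, f (xs ⟨i, by omega⟩, xs ⟨i+1, by omega⟩) ∂(mstep (Tn 0) κ n) := by
              congr 1; ext xs
              simp_rw [hsnoc xs]
              haveI := (inferInstance : IsMarkovKernel (κ (n+1)))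
              simp [lintegral_const]
          _ = ∫⁻ p, f p ∂(Tn i) := ihn.2 i (by omega) f hf
      · have : i = n + 1 := by omega
        subst this
        exact hnew f hf
  
lemma integral_indicator_Ico (a b t : ℝ) (h0a : 0 ≤ a) (hab : a ≤ b) (h0t : 0 ≤ t) (c : X) :
    ∫ s in (0:ℝ)..t, (Set.Ico a b).indicator (fun _ => c) s = (min t b - min t a) • c := by
  have hmm : min t a ≤ min t b := min_le_min le_rfl hab
  rw [intervalIntegral.integral_of_le h0t, ← integral_indicator measurableSet_Ioc]
  have h1 : ∀ s : ℝ, (Set.Ioc (0:ℝ) t).indicator ((Set.Ico a b).indicator (fun _ => c)) s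
      = (Set.Ioc (0:ℝ) t ∩ Set.Ico a b).indicator (fun _ => c) s := by
    intro s
    by_cases h1 : s ∈ Set.Ioc (0:ℝ) t <;> by_cases h2 : s ∈ Set.Ico a b <;>
      simp [Set.indicator_apply, h1, h2, Set.mem_inter_iff]
  simp_rw [h1]
  rw [integral_indicator (measurableSet_Ioc.inter measurableSet_Ico), setIntegral_const]
  have hvol : volume (Set.Ioc (0:ℝ) t ∩ Set.Ico a b) = ENNReal.ofReal (min t b - min t a) := by
    apply le_antisymm
    · calc volume (Set.Ioc (0:ℝ) t ∩ Set.Ico a b) ≤ volume (Set.Icc (min t a) (min t b)) := by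
            apply measure_mono
            rintro x ⟨⟨hx0, hxt⟩, ⟨hxa, hxb⟩⟩
            constructor
            · exact le_trans (min_le_right t a) hxa
            · exact le_min hxt hxb.le
        _ = ENNReal.ofReal (min t b - min t a) := Real.volume_Icc
    · calc ENNReal.ofReal (min t b - min t a) = volume (Set.Ioo (min t a) (min t b)) :=
            Real.volume_Ioo.symm
        _ ≤ volume (Set.Ioc (0:ℝ) t ∩ Set.Ico a b) := by
            apply measure_mono
            rintro x ⟨hx1, hx2⟩
            have hxt : x < t := lt_of_lt_of_le hx2 (min_le_left t b)
            have hxb : x < b := lt_of_lt_of_le hx2 (min_le_right t b)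
            have hxa : a ≤ x := by
              rcases le_or_gt a t with h | h
              · have hm : min t a = a := min_eq_right h
                rw [hm] at hx1; exact hx1.le
              · have hm : min t a = t := min_eq_left h.le
                rw [hm] at hx1; linarith
            have hx0 : 0 < x := lt_of_le_of_lt (le_min h0t h0a) hx1
            exact ⟨⟨hx0, hxt.le⟩, hxa, hxb⟩
  rw [measureReal_def, hvol, ENNReal.toReal_ofReal (by linarith)]

lemma action_bound (τ T : ℝ) (hτ : 0 < τ) (hT : 0 < T) (K : ℕ) (hTK : T ≤ ((K:ℝ)+1) * τ)
    (xs : Fin (K+2) → X) (γ : C(Set.Icc (0:ℝ) T, X))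
    (hγ : ∀ (n : ℕ) (hn : n ≤ K) (t : ℝ),
      t ∈ Set.Icc ((n:ℝ)*τ) (((n:ℝ)+1)*τ) → ∀ htT : t ∈ Set.Icc (0:ℝ) T,
      γ ⟨t, htT⟩ = (τ⁻¹ * (((n:ℝ)+1)*τ - t)) • xs ⟨n, by omega⟩
        + (τ⁻¹ * (t - (n:ℝ)*τ)) • xs ⟨n+1, by omega⟩) :
    action2 T hT.le γ ≤ ∑ n ∈ Finset.range (K+1), ENNReal.ofReal τ *
      (‖τ⁻¹ • (xs ⟨min (n+1) (K+1), by omega⟩ - xs ⟨min n (K+1), by omega⟩)‖₊ : ℝ≥0∞) ^ 2 := by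
  set f : ℕ → X := fun n => xs ⟨min n (K+1), by omega⟩ with hf
  have hfeq : ∀ n (hn : n ≤ K + 1), f n = xs ⟨n, by omega⟩ := by
    intro n hn
    simp only [hf]
    congr 1
    exact Fin.ext (by simp [Nat.min_eq_left hn])
  set c : ℕ → X := fun n => τ⁻¹ • (f (n+1) - f n) with hc
  set g : ℝ → X := fun s => ∑ n ∈ Finset.range (K+1),
    (Set.Ico ((n:ℝ)*τ) (((n:ℝ)+1)*τ)).indicator (fun _ => c n) s with hg
  have hg_int : Integrable g volume := by
    apply integrable_finset_sum
    intro n _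
    rw [integrable_indicator_iff measurableSet_Ico]
    refine integrableOn_const (lt_top_iff_ne_top.1 ?_)
    rw [Real.volume_Ico]
    exact ENNReal.ofReal_lt_top
  have hg_ii : IntervalIntegrable g volume 0 T := hg_int.intervalIntegrable
  -- the value of the interval integral
  have hint : ∀ t : ℝ, 0 ≤ t → ∫ s in (0:ℝ)..t, g s
      = ∑ n ∈ Finset.range (K+1), (min t (((n:ℝ)+1)*τ) - min t ((n:ℝ)*τ)) • c n := by
    intro t ht
    simp only [hg]
    rw [intervalIntegral.integral_finset_sum]
    · apply Finset.sum_congr rfl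
      intro n _
      exact integral_indicator_Ico _ _ _ (by positivity) (by nlinarith) ht (c n)
    · intro n _
      apply Integrable.intervalIntegrable
      rw [integrable_indicator_iff measurableSet_Ico]
      refine integrableOn_const (lt_top_iff_ne_top.1 ?_)
      rw [Real.volume_Ico]
      exact ENNReal.ofReal_lt_top
  have hγ0 : γ ⟨0, Set.left_mem_Icc.mpr hT.le⟩ = f 0 := by
    have h0mem : (0:ℝ) ∈ Set.Icc (((0:ℕ):ℝ)*τ) ((((0:ℕ):ℝ)+1)*τ) := by
      constructor <;> push_cast <;> nlinarith
    have h := hγ 0 (Nat.zero_le K) 0 h0mem (Set.left_mem_Icc.mpr hT.le)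
    rw [h, hfeq 0 (by omega)]
    push_cast
    match_scalars <;> field_simp <;> ring
  have hid : ∀ t : Set.Icc (0:ℝ) T,
      γ t = γ ⟨0, Set.left_mem_Icc.mpr hT.le⟩ + ∫ s in (0:ℝ)..(t:ℝ), g s := by
    rintro ⟨t, ht0, htT⟩
    obtain ⟨m, hmK, hml, hmr⟩ : ∃ m, m ≤ K ∧ (m:ℝ)*τ ≤ t ∧ t ≤ ((m:ℝ)+1)*τ := by
      by_cases hcK : ⌊t/τ⌋₊ ≤ K
      · refine ⟨⌊t/τ⌋₊, hcK, ?_, ?_⟩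
        · rw [← le_div_iff₀ hτ]
          exact Nat.floor_le (by positivity)
        · rw [← div_le_iff₀ hτ]
          exact_mod_cast (Nat.lt_floor_add_one (t/τ)).le
      · push_neg at hcK
        refine ⟨K, le_rfl, ?_, by linarith⟩
        have h1 : ((K:ℝ)+1) ≤ (⌊t/τ⌋₊:ℝ) := by exact_mod_cast hcK
        have h2 : (⌊t/τ⌋₊:ℝ) ≤ t/τ := Nat.floor_le (by positivity)
        have h3 : (K:ℝ) ≤ t/τ := by linarith
        calc (K:ℝ)*τ ≤ (t/τ)*τ := by nlinarith
          _ = t := by field_simp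
    have ht := hγ m hmK t ⟨hml, hmr⟩ ⟨ht0, htT⟩
    show γ ⟨t, _⟩ = _
    rw [ht, hγ0, hint t ht0]
    have hsum : ∑ n ∈ Finset.range (K+1), (min t (((n:ℝ)+1)*τ) - min t ((n:ℝ)*τ)) • c n
        = (f m - f 0) + (t - (m:ℝ)*τ) • c m := by
      have hsub : Finset.range (m+1) ⊆ Finset.range (K+1) := Finset.range_subset_range.2 (by omega)
      rw [← Finset.sum_subset hsub (by
        intro n hn1 hn2
        have hmn : m + 1 ≤ n := by
          simp only [Finset.mem_range] at hn1 hn2; omega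
        have hmn' : ((m:ℝ)+1) ≤ (n:ℝ) := by exact_mod_cast hmn
        have h1 : t ≤ (n:ℝ)*τ := by nlinarith
        have h2 : t ≤ ((n:ℝ)+1)*τ := by nlinarith
        rw [min_eq_left h2, min_eq_left h1]
        simp)]
      rw [Finset.sum_range_succ, min_eq_left hmr, min_eq_right hml]
      congr 1
      calc ∑ n ∈ Finset.range m, (min t (((n:ℝ)+1)*τ) - min t ((n:ℝ)*τ)) • c n
          = ∑ n ∈ Finset.range m, (f (n+1) - f n) := by
            apply Finset.sum_congr rfl
            intro n hn
            have hnm : n < m := Finset.mem_range.1 hn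
            have hnm' : ((n:ℝ)+1) ≤ (m:ℝ) := by exact_mod_cast hnm
            have h1 : ((n:ℝ)+1)*τ ≤ t := by nlinarith
            have h2 : (n:ℝ)*τ ≤ t := by nlinarith
            rw [min_eq_right h1, min_eq_right h2]
            simp only [hc]
            rw [smul_smul]
            have hcoef : (((n:ℝ)+1)*τ - (n:ℝ)*τ) * τ⁻¹ = 1 := by field_simp; ring
            rw [hcoef, one_smul]
        _ = f m - f 0 := Finset.sum_range_sub f m
    rw [hsum, ← hfeq m (by omega), ← hfeq (m+1) (by omega)]
    simp only [hc]
    match_scalars <;> field_simp <;> ring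
  -- pointwise bound on ‖g‖²
  have hpoint : ∀ s : ℝ, (‖g s‖₊ : ℝ≥0∞) ^ 2 ≤ ∑ n ∈ Finset.range (K+1),
      (Set.Ico ((n:ℝ)*τ) (((n:ℝ)+1)*τ)).indicator (fun _ => (‖c n‖₊ : ℝ≥0∞) ^ 2) s := by
    intro s
    by_cases hs : ∃ m ∈ Finset.range (K+1), s ∈ Set.Ico ((m:ℝ)*τ) (((m:ℝ)+1)*τ)
    · obtain ⟨m, hm, hsm⟩ := hs
      have hgs : g s = c m := by
        simp only [hg]
        rw [Finset.sum_eq_single_of_mem m hm (by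
          intro n _ hne
          apply Set.indicator_of_notMem
          intro hsn
          apply hne
          obtain ⟨h1, h2⟩ := hsn; obtain ⟨h3, h4⟩ := hsm
          have e1 : (n:ℝ) < (m:ℝ)+1 := by nlinarith
          have e2 : (m:ℝ) < (n:ℝ)+1 := by nlinarith
          have e1' : n < m+1 := by exact_mod_cast e1
          have e2' : m < n+1 := by exact_mod_cast e2
          omega)]
        exact Set.indicator_of_mem hsm _
      rw [hgs]
      calc (‖c m‖₊ : ℝ≥0∞)^2
          = (Set.Ico ((m:ℝ)*τ) (((m:ℝ)+1)*τ)).indicator (fun _ => (‖c m‖₊ : ℝ≥0∞)^2) s :=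
            (Set.indicator_of_mem hsm (fun _ => (‖c m‖₊ : ℝ≥0∞)^2)).symm
        _ ≤ _ := Finset.single_le_sum (f := fun k : ℕ => (Set.Ico ((k:ℝ)*τ) (((k:ℝ)+1)*τ)).indicator
            (fun _ => (‖c k‖₊ : ℝ≥0∞)^2) s) (fun k _ => zero_le) hm
    · push_neg at hs
      have hgs : g s = 0 := by
        simp only [hg]
        apply Finset.sum_eq_zero
        intro n hn
        exact Set.indicator_of_notMem (hs n hn) _
      simp [hgs]
  calc action2 T hT.le γ
      ≤ ∫⁻ s in Set.Ioc (0:ℝ) T, (‖g s‖₊ : ℝ≥0∞)^2 := by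
        exact iInf_le_of_le g (iInf_le_of_le hg_ii (iInf_le_of_le hid le_rfl))
    _ ≤ ∫⁻ s in Set.Ioc (0:ℝ) T, ∑ n ∈ Finset.range (K+1),
          (Set.Ico ((n:ℝ)*τ) (((n:ℝ)+1)*τ)).indicator (fun _ => (‖c n‖₊ : ℝ≥0∞)^2) s :=
        lintegral_mono hpoint
    _ ≤ ∫⁻ s, ∑ n ∈ Finset.range (K+1),
          (Set.Ico ((n:ℝ)*τ) (((n:ℝ)+1)*τ)).indicator (fun _ => (‖c n‖₊ : ℝ≥0∞)^2) s ∂volume :=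
        setLIntegral_le_lintegral _ _
    _ = ∑ n ∈ Finset.range (K+1), ∫⁻ s,
          (Set.Ico ((n:ℝ)*τ) (((n:ℝ)+1)*τ)).indicator (fun _ => (‖c n‖₊ : ℝ≥0∞)^2) s ∂volume :=
        lintegral_finset_sum _ (fun n _ => measurable_const.indicator measurableSet_Ico)
    _ = ∑ n ∈ Finset.range (K+1), ENNReal.ofReal τ * (‖c n‖₊ : ℝ≥0∞)^2 := by
        apply Finset.sum_congr rfl
        intro n _
        rw [lintegral_indicator measurableSet_Ico, setLIntegral_const, Real.volume_Ico, mul_comm]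
        congr 2
        ring
    _ = ∑ n ∈ Finset.range (K+1), ENNReal.ofReal τ *
          (‖τ⁻¹ • (xs ⟨min (n+1) (K+1), by omega⟩ - xs ⟨min n (K+1), by omega⟩)‖₊ : ℝ≥0∞) ^ 2 := by
        apply Finset.sum_congr rfl
        intro n hn
        simp only [hc, hf]

end auxlemmas

/-- For an `L`-stable Explicit Euler solution with step `τ`,
`N = K + 1 = ⌈T/τ⌉`, and the lifted measure `η_τ = G_♯α_τ` on curves, the integral
of the `2`-action satisfies
`∫ A₂ dη_τ ≤ Σ_{k=0}^{N−1} τ |Φᵏ|₂² ≤ L²(T+τ)`. -/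
theorem stmt7 (F : Set (Measure (X × X))) (hF : IsMPVF F)
    (τ T L : ℝ) (hτ : 0 < τ) (hT : 0 < T) (hL : 0 < L)
    (K : ℕ) (hK : K + 1 = ⌈T / τ⌉₊)
    (μ0 : Measure X) (M : ℕ → Measure X) (Φ : ℕ → Measure (X × X))
    (hEuler : IsEulerSol F τ L (K + 1) μ0 M Φ)
    (κ : ℕ → Kernel X X) (hκM : ∀ n, IsMarkovKernel (κ n))
    (hdis : ∀ n ≤ K, (M n).compProd (κ n)
        = (Φ n).map (fun z : X × X => (z.1, z.1 + τ • z.2)))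
    [MeasurableSpace C(Set.Icc (0:ℝ) T, X)]
    (G : (Fin (K + 2) → X) → C(Set.Icc (0:ℝ) T, X))
    (hG : ∀ (xs : Fin (K + 2) → X) (n : ℕ) (hn : n ≤ K) (t : ℝ),
      t ∈ Set.Icc ((n : ℝ) * τ) (((n : ℝ) + 1) * τ) → ∀ htT : t ∈ Set.Icc (0:ℝ) T,
      G xs ⟨t, htT⟩ = (τ⁻¹ * (((n : ℝ) + 1) * τ - t)) • xs ⟨n, by omega⟩
        + (τ⁻¹ * (t - (n : ℝ) * τ)) • xs ⟨n + 1, by omega⟩)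
    (η : Measure C(Set.Icc (0:ℝ) T, X))
    (hη : η = (mstep ((Φ 0).map (fun z : X × X => (z.1, z.1 + τ • z.2))) κ K).map G) :
    (∫⁻ γ, action2 T hT.le γ ∂η)
      ≤ ENNReal.ofReal (∑ k ∈ Finset.range (K + 1), τ * ∫ z, ‖z.2‖ ^ 2 ∂(Φ k)) ∧
    ENNReal.ofReal (∑ k ∈ Finset.range (K + 1), τ * ∫ z, ‖z.2‖ ^ 2 ∂(Φ k))
      ≤ ENNReal.ofReal (L ^ 2 * (T + τ)) := by
  obtain ⟨hM0, hΦ, hMstep⟩ := hEuler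
  have hpm_meas : Measurable (fun z : X × X => (z.1, z.1 + τ • z.2)) :=
    measurable_fst.prodMk (measurable_fst.add (measurable_snd.const_smul τ))
  have hΦprob : ∀ n ≤ K, IsProbabilityMeasure (Φ n) := fun n hn =>
    (hF.2 _ (hΦ n (by omega)).1).1
  have hTprob : ∀ n ≤ K,
      IsProbabilityMeasure ((fun n => (Φ n).map (fun z : X × X => (z.1, z.1 + τ • z.2))) n) := by
    intro n hn
    haveI := hΦprob n hn
    exact Measure.isProbabilityMeasure_map hpm_meas.aemeasurable
  have hTsnd : ∀ n ≤ K,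
      ((Φ n).map (fun z : X × X => (z.1, z.1 + τ • z.2))).map Prod.snd = M (n+1) := by
    intro n hn
    rw [Measure.map_map measurable_snd hpm_meas, hMstep n (by omega)]
    rfl
  have hstep : ∀ n, n + 1 ≤ K →
      (((fun n => (Φ n).map (fun z : X × X => (z.1, z.1 + τ • z.2))) n).map Prod.snd).compProd
        (κ (n+1)) = (fun n => (Φ n).map (fun z : X × X => (z.1, z.1 + τ • z.2))) (n+1) := by
    intro n hn
    simp only []
    rw [hTsnd n (by omega), hdis (n+1) hn]
  haveI : ∀ n, IsMarkovKernel (κ n) := hκM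
  have hmarg := (mstep_marginals κ K
    (fun n => (Φ n).map (fun z : X × X => (z.1, z.1 + τ • z.2))) hTprob hstep K le_rfl).2
  have hKT : (K:ℝ) * τ ≤ T := by
    have h1 : (K:ℝ) < T / τ := Nat.lt_ceil.mp (hK ▸ Nat.lt_succ_self K)
    exact ((lt_div_iff₀ hτ).mp h1).le
  have hTK' : T ≤ ((K:ℝ)+1) * τ := by
    have h1 : T / τ ≤ ((K:ℝ)+1) := by
      have := Nat.le_ceil (T/τ)
      rw [← hK] at this
      push_cast at this
      linarith
    calc T = (T/τ)*τ := by field_simp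
      _ ≤ ((K:ℝ)+1)*τ := by nlinarith
  have hIint : ∀ n ≤ K, Integrable (fun z : X × X => ‖z.2‖^2) (Φ n) := by
    intro n hn
    have h2 := (hF.2 _ (hΦ n (by omega)).1).2
    refine h2.mono (continuous_snd.norm.pow 2).aestronglyMeasurable (ae_of_all _ fun z => ?_)
    rw [Real.norm_of_nonneg (by positivity), Real.norm_of_nonneg (by positivity)]
    exact pow_le_pow_left₀ (norm_nonneg _) (norm_snd_le z) 2
  have hInonneg : ∀ n, 0 ≤ ∫ z : X × X, ‖z.2‖^2 ∂(Φ n) :=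
    fun n => integral_nonneg (fun z => by positivity)
  have hlint : ∀ n ≤ K, ∫⁻ z : X × X, ((‖z.2‖₊ : ℝ≥0∞))^2 ∂(Φ n)
      = ENNReal.ofReal (∫ z : X × X, ‖z.2‖^2 ∂(Φ n)) := by
    intro n hn
    rw [ofReal_integral_eq_lintegral_ofReal (hIint n hn) (ae_of_all _ fun z => by positivity)]
    congr 1
    ext z
    rw [← ENNReal.ofReal_coe_nnreal, coe_nnnorm, ← ENNReal.ofReal_pow (norm_nonneg _)]
  have hqmeas : Measurable (fun p : X × X => ((‖τ⁻¹ • (p.2 - p.1)‖₊ : ℝ≥0∞))^2) :=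
    ((((measurable_snd.sub measurable_fst).const_smul
      τ⁻¹).nnnorm).coe_nnreal_ennreal).pow_const 2
  have hBmeas : ∀ n : ℕ, Measurable (fun xs : Fin (K+2) → X =>
      ((‖τ⁻¹ • (xs ⟨min (n+1) (K+1), by omega⟩ - xs ⟨min n (K+1), by omega⟩)‖₊ : ℝ≥0∞))^2) :=
    by
    intro n
    apply Measurable.pow_const
    apply Measurable.coe_nnreal_ennreal
    apply Measurable.nnnorm
    apply Measurable.const_smul
    exact (measurable_pi_apply _).sub (measurable_pi_apply _)
  have hBint : ∫⁻ xs, (∑ n ∈ Finset.range (K+1), ENNReal.ofReal τ *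
        ((‖τ⁻¹ • (xs ⟨min (n+1) (K+1), by omega⟩ - xs ⟨min n (K+1), by omega⟩)‖₊ : ℝ≥0∞))^2)
        ∂(mstep ((Φ 0).map (fun z : X × X => (z.1, z.1 + τ • z.2))) κ K)
      = ENNReal.ofReal (∑ k ∈ Finset.range (K+1), τ * ∫ z : X × X, ‖z.2‖^2 ∂(Φ k)) := by
    rw [lintegral_finset_sum _ (fun n _ => (hBmeas n).const_mul _)]
    rw [ENNReal.ofReal_sum_of_nonneg (fun k hk => by
      have := hInonneg k
      positivity)]
    apply Finset.sum_congr rfl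
    intro n hn
    have hn' : n ≤ K := by have := Finset.mem_range.1 hn; omega
    have e1 : (⟨min (n+1) (K+1), by omega⟩ : Fin (K+2)) = ⟨n+1, by omega⟩ :=
      Fin.ext (by simp [Nat.min_eq_left (by omega : n+1 ≤ K+1)])
    have e2 : (⟨min n (K+1), by omega⟩ : Fin (K+2)) = ⟨n, by omega⟩ :=
      Fin.ext (by simp [Nat.min_eq_left (by omega : n ≤ K+1)])
    rw [lintegral_const_mul _ (hBmeas n)]
    simp only [e1, e2]
    have hm := hmarg n hn' (fun p : X × X => ((‖τ⁻¹ • (p.2 - p.1)‖₊ : ℝ≥0∞))^2) hqmeas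
    simp only [] at hm
    rw [hm]
    rw [lintegral_map hqmeas hpm_meas]
    have hsimp : ∀ z : X × X, ((‖τ⁻¹ • ((z.1 + τ • z.2) - z.1)‖₊ : ℝ≥0∞))^2
        = ((‖z.2‖₊ : ℝ≥0∞))^2 := by
      intro z
      rw [add_sub_cancel_left, smul_smul, inv_mul_cancel₀ hτ.ne', one_smul]
    simp only [hsimp]
    rw [hlint n hn', ← ENNReal.ofReal_mul hτ.le]
  constructor
  · rw [hη]
    by_cases hGm : AEMeasurable G (mstep ((Φ 0).map (fun z : X × X => (z.1, z.1 + τ • z.2))) κ K)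
    · rw [Measure.map_congr hGm.ae_eq_mk]
      calc ∫⁻ γ, action2 T hT.le γ
            ∂((mstep ((Φ 0).map (fun z : X × X => (z.1, z.1 + τ • z.2))) κ K).map (hGm.mk G))
          ≤ ∫⁻ xs, action2 T hT.le (hGm.mk G xs)
            ∂(mstep ((Φ 0).map (fun z : X × X => (z.1, z.1 + τ • z.2))) κ K) :=
            lintegral_map_le _ (hGm.mk G)
        _ ≤ ∫⁻ xs, (∑ n ∈ Finset.range (K+1), ENNReal.ofReal τ *
              ((‖τ⁻¹ • (xs ⟨min (n+1) (K+1), by omega⟩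
                - xs ⟨min n (K+1), by omega⟩)‖₊ : ℝ≥0∞))^2)
            ∂(mstep ((Φ 0).map (fun z : X × X => (z.1, z.1 + τ • z.2))) κ K) := by
            apply lintegral_mono_ae
            filter_upwards [hGm.ae_eq_mk] with xs hxs
            rw [← hxs]
            exact action_bound τ T hτ hT K hTK' xs (G xs)
              (fun n hn t htm htT => hG xs n hn t htm htT)
        _ = ENNReal.ofReal (∑ k ∈ Finset.range (K+1), τ * ∫ z : X × X, ‖z.2‖^2 ∂(Φ k)) := hBint
    · rw [Measure.map_of_not_aemeasurable hGm]
      simp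
  · apply ENNReal.ofReal_le_ofReal
    have hsum_le : ∑ k ∈ Finset.range (K+1), τ * ∫ z : X × X, ‖z.2‖^2 ∂(Φ k)
        ≤ ((K:ℝ)+1) * (τ * L^2) := by
      calc ∑ k ∈ Finset.range (K+1), τ * ∫ z : X × X, ‖z.2‖^2 ∂(Φ k)
          ≤ ∑ _k ∈ Finset.range (K+1), τ * L^2 := by
            apply Finset.sum_le_sum
            intro k hk
            have h1 := (hΦ k (Finset.mem_range.1 hk)).2.2
            nlinarith [hτ.le]
        _ = ((K:ℝ)+1) * (τ * L^2) := by
            rw [Finset.sum_const, Finset.card_range, nsmul_eq_mul]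
            push_cast
            ring
    have h2 : ((K:ℝ)*τ + τ) * L^2 ≤ (T + τ) * L^2 :=
      mul_le_mul_of_nonneg_right (by linarith) (sq_nonneg L)
    nlinarith [hsum_le, h2]
end

section
/- Let μ: [0,+∞) → P₂(X) be such that the cardinality of supp(μ_t) is finite for every t ≥ 0 and is non-increasing as a function of t. Then there exists at most one η ∈ P(C([0,+∞);X)) such that (e_t)_♯η = μ_t for every t ≥ 0. -/
open MeasureTheory ProbabilityTheory Filter
open scoped ENNReal Topology

variable {X : Type*} [NormedAddCommGroup X] [InnerProductSpace ℝ X]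
  [CompleteSpace X] [SecondCountableTopology X] [MeasurableSpace X] [BorelSpace X]

/-- The topological support of a measure. -/
def msupport {α : Type*} [TopologicalSpace α] [MeasurableSpace α] (μ : Measure α) :
    Set α :=
  {x | ∀ U : Set α, IsOpen U → x ∈ U → 0 < μ U}

section Aux

variable {Y : Type*} [TopologicalSpace Y] [MeasurableSpace Y]

lemma msupport_compl_null [SecondCountableTopology Y] (ν : Measure Y) :
    ν (msupport ν)ᶜ = 0 := by
  obtain ⟨B, hBc, -, hB⟩ := TopologicalSpace.exists_countable_basis Y
  have hsub : (msupport ν)ᶜ ⊆ ⋃ U ∈ {U ∈ B | ν U = 0}, U := by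
    intro z hz
    simp only [Set.mem_compl_iff, msupport, Set.mem_setOf_eq, not_forall] at hz
    obtain ⟨U, hUo, hzU, hU0⟩ := hz
    have hU0' : ν U = 0 := by
      by_contra h
      exact hU0 (pos_iff_ne_zero.mpr h)
    obtain ⟨V, hVB, hzV, hVU⟩ := hB.mem_nhds_iff.mp (hUo.mem_nhds hzU)
    exact Set.mem_biUnion ⟨hVB, le_antisymm ((measure_mono hVU).trans hU0'.le) (zero_le)⟩ hzV
  refine measure_mono_null hsub ?_
  exact (measure_biUnion_null_iff (hBc.mono (Set.sep_subset _ _))).2 fun U hU => hU.2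

lemma null_of_inter_msupport_empty [SecondCountableTopology Y] {ν : Measure Y} {U : Set Y}
    (h : U ∩ msupport ν = ∅) : ν U = 0 := by
  refine measure_mono_null ?_ (msupport_compl_null ν)
  intro x hx
  exact fun hm => Set.eq_empty_iff_forall_notMem.mp h x ⟨hx, hm⟩

lemma msupport_ball_nonempty [SecondCountableTopology Y] {ν : Measure Y} {U : Set Y}
    (hpos : 0 < ν U) : (msupport ν ∩ U).Nonempty := by
  rcases Set.eq_empty_or_nonempty (msupport ν ∩ U) with h | h
  · rw [Set.inter_comm] at h
    exact absurd (null_of_inter_msupport_empty h) hpos.ne'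
  · exact h

lemma msupport_eq_of [T1Space Y] {ν : Measure Y} {P : Set Y} (hP : P.Finite)
    (hnull : ν Pᶜ = 0) (hpos : ∀ p ∈ P, 0 < ν {p}) : msupport ν = P := by
  ext y
  constructor
  · intro hy
    by_contra hyP
    have := hy Pᶜ hP.isClosed.isOpen_compl hyP
    exact this.ne' hnull
  · intro hy U hUo hyU
    exact lt_of_lt_of_le (hpos y hy) (measure_mono (Set.singleton_subset_iff.2 hyU))

lemma pos_of_mem_msupport [T1Space Y] [SecondCountableTopology Y] {ν : Measure Y}
    (hfin : (msupport ν).Finite) {y : Y} (hy : y ∈ msupport ν) : 0 < ν {y} := by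
  have hUo : IsOpen (msupport ν \ {y})ᶜ := ((hfin.subset Set.diff_subset).isClosed).isOpen_compl
  have hyU : y ∈ (msupport ν \ {y})ᶜ := fun h => h.2 rfl
  have hpos := hy _ hUo hyU
  have hsub : (msupport ν \ {y})ᶜ ⊆ {y} ∪ (msupport ν)ᶜ := by
    intro z hz
    by_cases hzs : z ∈ msupport ν
    · left
      by_contra hzy
      exact hz ⟨hzs, hzy⟩
    · exact Or.inr hzs
  have h2 : ν (msupport ν \ {y})ᶜ ≤ ν {y} + ν (msupport ν)ᶜ :=
    (measure_mono hsub).trans (measure_union_le _ _)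
  rw [msupport_compl_null ν, add_zero] at h2
  exact lt_of_lt_of_le hpos h2

lemma msupport_nonempty_of_prob [SecondCountableTopology Y] (ν : Measure Y)
    [IsProbabilityMeasure ν] : (msupport ν).Nonempty := by
  rcases Set.eq_empty_or_nonempty (msupport ν) with h | h
  · have := msupport_compl_null ν
    rw [h, Set.compl_empty] at this
    simp at this
  · exact h

end Aux

set_option linter.unusedSectionVars false in
theorem main_struct [MeasurableSpace C(Set.Ici (0:ℝ), X)]
    (μ : Set.Ici (0:ℝ) → Measure X) (hprob : ∀ t, IsProbabilityMeasure (μ t))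
    (hfin : ∀ t, (msupport (μ t)).Finite)
    (hmono : ∀ s t : Set.Ici (0:ℝ), s ≤ t →
      (msupport (μ t)).ncard ≤ (msupport (μ s)).ncard)
    (η : Measure C(Set.Ici (0:ℝ), X)) [IsFiniteMeasure η]
    (G : Set.Ici (0:ℝ) → C(Set.Ici (0:ℝ), X) → X)
    (hGmeas : ∀ t, Measurable (G t))
    (hGae : ∀ t, (fun γ : C(Set.Ici (0:ℝ), X) => γ t) =ᵐ[η] G t)
    (hGmap : ∀ t, η.map (G t) = μ t + μ t) :
    ∀ x ∈ msupport (μ ⟨0, Set.self_mem_Ici⟩), ∃ g : C(Set.Ici (0:ℝ), X),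
      ∀ᵐ γ ∂η, G ⟨0, Set.self_mem_Ici⟩ γ = x → γ = g := by
  classical
  set z : Set.Ici (0:ℝ) := ⟨0, Set.self_mem_Ici⟩ with hzdef
  -- measure computation
  have hmap : ∀ (t : Set.Ici (0:ℝ)) (S : Set X), MeasurableSet S →
      η ((G t) ⁻¹' S) = μ t S + μ t S := by
    intro t S hS
    rw [← Measure.map_apply (hGmeas t) hS, hGmap t, Measure.add_apply]
  -- a.e. γ, G t γ ∈ supp μ t
  have hsuppae : ∀ t : Set.Ici (0:ℝ), ∀ᵐ γ ∂η, G t γ ∈ msupport (μ t) := by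
    intro t
    have hms : MeasurableSet (msupport (μ t)) := (hfin t).measurableSet
    have : η ((G t) ⁻¹' (msupport (μ t))ᶜ) = 0 := by
      rw [hmap t _ hms.compl, msupport_compl_null (μ t), add_zero]
    filter_upwards [(MeasureTheory.ae_iff (μ := η)
      (p := fun γ => G t γ ∈ msupport (μ t))).2 (by exact this)] with γ h using h
  obtain ⟨D, hDc, hDd⟩ := TopologicalSpace.exists_countable_dense (Set.Ici (0:ℝ))
  have hgood1 : ∀ᵐ γ ∂η, ∀ d ∈ D, G d γ = γ d :=
    (MeasureTheory.ae_ball_iff hDc).2 fun d _ => (hGae d).mono fun γ h => h.symm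
  have hgood2 : ∀ᵐ γ ∂η, ∀ d ∈ D, γ d ∈ msupport (μ d) := by
    have := (MeasureTheory.ae_ball_iff hDc).2 fun d (_ : d ∈ D) => hsuppae d
    filter_upwards [this, hgood1] with γ h1 h2 d hd
    rw [← h2 d hd]; exact h1 d hd
  set s0 := msupport (μ z) with hs0def
  have hs0fin : s0.Finite := hfin z
  -- positivity of starting masses
  have hw : ∀ x ∈ s0, 0 < η ((G z) ⁻¹' {x}) := by
    intro x hx
    rw [hmap z _ (measurableSet_singleton x)]
    have := pos_of_mem_msupport (hfin z) hx
    exact lt_of_lt_of_le this le_self_add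
  -- the key dirac property
  have hPD : ∀ t ∈ D, ∀ x ∈ s0, ∃ y, ∀ᵐ γ ∂η, G z γ = x → G t γ = y := by
    set Pp : Set.Ici (0:ℝ) → Prop :=
      fun t => ∀ x ∈ s0, ∃ y, ∀ᵐ γ ∂η, G z γ = x → G t γ = y with hPpdef
    suffices hsuf : ∀ t ∈ D, Pp t by exact hsuf
    by_contra hcon
    rw [not_forall] at hcon
    obtain ⟨t₁, ht₁⟩ := hcon
    obtain ⟨ht₁D, ht₁P⟩ := Classical.not_imp.mp ht₁
    set B : Set ℝ := {r : ℝ | ∃ t : Set.Ici (0:ℝ), t ∈ D ∧ (t : ℝ) = r ∧ ¬ Pp t} with hBdef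
    have hBne : B.Nonempty := ⟨(t₁ : ℝ), t₁, ht₁D, rfl, ht₁P⟩
    have hBbdd : BddBelow B := ⟨0, fun r ⟨t, _, h, _⟩ => h ▸ t.2⟩
    set t₀ : ℝ := sInf B with ht₀def
    have ht₀0 : 0 ≤ t₀ := le_csInf hBne (fun r ⟨t, _, h, _⟩ => h ▸ t.2)
    have ht₀mem : ∀ t ∈ D, (t : ℝ) < t₀ → Pp t := by
      intro t htD hlt
      by_contra hP
      exact absurd (csInf_le hBbdd ⟨t, htD, rfl, hP⟩) (not_le.2 hlt)
    set t₀' : Set.Ici (0:ℝ) := ⟨t₀, ht₀0⟩ with ht₀'def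
    -- limits L x at time t₀
    have hL : ∀ x ∈ s0, ∃ Lx : X, ∀ᵐ γ ∂η, G z γ = x → γ t₀' = Lx := by
      intro x hx
      rcases eq_or_lt_of_le ht₀0 with h0 | h0
      · refine ⟨x, ?_⟩
        have hzt : t₀' = z := Subtype.ext h0.symm
        rw [hzt]
        filter_upwards [hGae z] with γ h hGx
        rw [h]; exact hGx
      · have hdn : ∀ n : ℕ, ∃ dd : Set.Ici (0:ℝ), dd ∈ D ∧
            max 0 (t₀ - 1/(n+1)) < (dd : ℝ) ∧ (dd : ℝ) < t₀ := by
          intro n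
          have hlt : max 0 (t₀ - 1/((n : ℝ)+1)) < t₀ := by
            apply max_lt h0
            have h1 : 0 < 1/((n : ℝ)+1) := by positivity
            linarith
          obtain ⟨c, hc1, hc2⟩ := exists_between hlt
          have hc0 : 0 ≤ c := le_of_lt (lt_of_le_of_lt (le_max_left 0 _) hc1)
          have hUo : IsOpen ((fun s : Set.Ici (0:ℝ) => (s : ℝ)) ⁻¹'
              (Set.Ioo (max 0 (t₀ - 1/((n : ℝ)+1))) t₀)) :=
            isOpen_Ioo.preimage continuous_subtype_val
          obtain ⟨dd, hdD, hd⟩ := hDd.exists_mem_open hUo ⟨⟨c, hc0⟩, hc1, hc2⟩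
          exact ⟨dd, hdD, hd.1, hd.2⟩
        choose d hdD hd1 hd2 using hdn
        have hdt : Tendsto (fun n => ((d n : Set.Ici (0:ℝ)) : ℝ)) atTop (𝓝 t₀) := by
          apply tendsto_of_tendsto_of_tendsto_of_le_of_le
            (g := fun n : ℕ => t₀ - 1/((n : ℝ)+1)) (h := fun _ => t₀)
          · have h1 := tendsto_one_div_add_atTop_nhds_zero_nat (𝕜 := ℝ)
            simpa using (tendsto_const_nhds (x := t₀) (f := atTop)).sub h1
          · exact tendsto_const_nhds
          · intro n
            exact le_of_lt (lt_of_le_of_lt (le_max_right 0 _) (hd1 n))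
          · intro n
            exact (hd2 n).le
        have hdt' : Tendsto (fun n => d n) atTop (𝓝 t₀') := tendsto_subtype_rng.2 hdt
        have hyn : ∀ n : ℕ, ∃ y, ∀ᵐ γ ∂η, G z γ = x → G (d n) γ = y :=
          fun n => ht₀mem (d n) (hdD n) (hd2 n) x hx
        choose Y hY using hyn
        have haeY : ∀ᵐ γ ∂η, (∀ n : ℕ, (G z γ = x → G (d n) γ = Y n)) ∧
            (∀ n : ℕ, G (d n) γ = γ (d n)) := by
          refine (MeasureTheory.ae_all_iff.2 hY).and (MeasureTheory.ae_all_iff.2 ?_)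
          intro n
          exact (hGae (d n)).mono fun γ h => h.symm
        obtain ⟨γs, hγs, hγsp⟩ := MeasureTheory.Measure.exists_mem_of_measure_ne_zero_of_ae
          (hw x hx).ne' (MeasureTheory.ae_restrict_of_ae haeY)
        refine ⟨γs t₀', ?_⟩
        filter_upwards [haeY] with γ hγ hGx
        have h1 : Tendsto (fun n => γ (d n)) atTop (𝓝 (γ t₀')) :=
          (γ.continuous.tendsto t₀').comp hdt'
        have h2 : Tendsto (fun n => γ (d n)) atTop (𝓝 (γs t₀')) := by
          have heq : (fun n => γ (d n)) = fun n => γs (d n) := by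
            funext n
            rw [← hγ.2 n, hγ.1 n hGx, ← hγsp.1 n hγs, hγsp.2 n]
          rw [heq]
          exact (γs.continuous.tendsto t₀').comp hdt'
        exact tendsto_nhds_unique h1 h2
    choose! L hLae using hL
    have hLall : ∀ᵐ γ ∂η, ∀ x ∈ s0, G z γ = x → γ t₀' = L x :=
      (MeasureTheory.ae_ball_iff hs0fin.countable).2 hLae
    -- support at time t₀
    have hsupp0 : msupport (μ t₀') = L '' s0 := by
      have hfinP : (L '' s0).Finite := hs0fin.image L
      apply msupport_eq_of hfinP
      · have hms : MeasurableSet (L '' s0) := hfinP.measurableSet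
        have hsub : ∀ᵐ γ ∂η, G t₀' γ ∈ L '' s0 := by
          filter_upwards [hsuppae z, hLall, hGae t₀'] with γ h1 h2 h3
          rw [← h3]
          exact ⟨G z γ, h1, (h2 _ h1 rfl).symm⟩
        have hnull : η ((G t₀') ⁻¹' (L '' s0)ᶜ) = 0 := by
          rw [MeasureTheory.ae_iff] at hsub
          exact hsub
        rw [hmap t₀' _ hms.compl] at hnull
        exact (add_eq_zero.mp hnull).1
      · rintro p ⟨x, hx, rfl⟩
        have hle : η ((G z) ⁻¹' {x}) ≤ η ((G t₀') ⁻¹' {L x}) := by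
          apply measure_mono_ae
          filter_upwards [hLae x hx, hGae t₀'] with γ h1 h2 hγ
          have hγx : G z γ = x := Set.mem_singleton_iff.mp (Set.mem_preimage.mp hγ)
          show G t₀' γ ∈ {L x}
          rw [Set.mem_singleton_iff, ← h2]
          exact h1 hγx
        have hpos := lt_of_lt_of_le (hw x hx) hle
        rw [hmap t₀' _ (measurableSet_singleton _)] at hpos
        by_contra h0
        push_neg at h0
        have h00 : μ t₀' {L x} = 0 := le_antisymm h0 (zero_le)
        rw [h00, add_zero] at hpos
        exact hpos.ne' rfl
    -- cardinality bound
    have hcard : ∀ t : Set.Ici (0:ℝ), t₀ ≤ (t : ℝ) →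
        (msupport (μ t)).ncard ≤ (L '' s0).ncard := by
      intro t hle
      rw [← hsupp0]
      exact hmono t₀' t hle
    -- separation of the points L '' s0
    obtain ⟨ε₀, hε₀, hsep⟩ : ∃ ε : ℝ, 0 < ε ∧
        ∀ p ∈ L '' s0, ∀ q ∈ L '' s0, p ≠ q → 3 * ε ≤ dist p q := by
      have hfinP : (L '' s0).Finite := hs0fin.image L
      by_cases hd : ∃ p ∈ L '' s0, ∃ q ∈ L '' s0, p ≠ q
      · obtain ⟨p₀, hp₀, q₀, hq₀, hpq₀⟩ := hd
        set dF := ((hfinP.toFinset ×ˢ hfinP.toFinset).filter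
          (fun pq => pq.1 ≠ pq.2)).image (fun pq => dist pq.1 pq.2) with hdFdef
        have hne : dF.Nonempty := ⟨dist p₀ q₀, Finset.mem_image.2 ⟨(p₀, q₀),
          Finset.mem_filter.2 ⟨Finset.mem_product.2 ⟨hfinP.mem_toFinset.2 hp₀,
            hfinP.mem_toFinset.2 hq₀⟩, hpq₀⟩, rfl⟩⟩
        refine ⟨dF.min' hne / 3, ?_, ?_⟩
        · have hall : ∀ b ∈ dF, 0 < b := by
            intro b hb
            obtain ⟨pq, hpq, rfl⟩ := Finset.mem_image.1 hb
            exact dist_pos.2 (Finset.mem_filter.1 hpq).2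
          have := hall _ (dF.min'_mem hne)
          linarith
        · intro p hp q hq hne'
          have hmem : dist p q ∈ dF := Finset.mem_image.2 ⟨(p, q),
            Finset.mem_filter.2 ⟨Finset.mem_product.2 ⟨hfinP.mem_toFinset.2 hp,
              hfinP.mem_toFinset.2 hq⟩, hne'⟩, rfl⟩
          have := dF.min'_le _ hmem
          linarith
      · refine ⟨1, one_pos, ?_⟩
        intro p hp q hq hne'
        exact absurd ⟨p, hp, q, hq, hne'⟩ hd
    -- Egorov-type step
    obtain ⟨ε, hεpos, hEsm⟩ : ∃ ε : ℝ, 0 < ε ∧ ∀ x ∈ s0,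
        η ((G z ⁻¹' {x}) \ (⋃ d ∈ {d | d ∈ D ∧ t₀ < (d : ℝ) ∧ (d : ℝ) ≤ t₀ + ε},
          {γ | ε₀ ≤ dist (G d γ) (G t₀' γ)})) ≠ 0 := by
      set Klim : ℕ → Set C(Set.Ici (0:ℝ), X) := fun n =>
        ⋃ d ∈ {d | d ∈ D ∧ t₀ < (d : ℝ) ∧ (d : ℝ) ≤ t₀ + 1/((n : ℝ)+1)},
          {γ | ε₀ ≤ dist (G d γ) (G t₀' γ)} with hKdef
      have hKmeas : ∀ n, MeasurableSet (Klim n) := by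
        intro n
        refine MeasurableSet.biUnion (hDc.mono (fun d hd => hd.1)) ?_
        intro d _
        exact measurableSet_le measurable_const ((hGmeas d).dist (hGmeas t₀'))
      have hKanti : Antitone Klim := by
        intro n m hnm
        apply Set.biUnion_subset_biUnion_left
        intro d hd
        refine ⟨hd.1, hd.2.1, hd.2.2.trans ?_⟩
        have h1 : (1:ℝ)/((m : ℝ)+1) ≤ 1/((n : ℝ)+1) := by
          apply one_div_le_one_div_of_le
          · positivity
          · have := (Nat.cast_le (α := ℝ)).2 hnm
            linarith
        linarith
      have hKnull : η (⋂ n, Klim n) = 0 := by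
        have hae : ∀ᵐ γ ∂η, γ ∉ ⋂ n, Klim n := by
          filter_upwards [hgood1, hGae t₀'] with γ h1 h2 hmem
          simp only [Set.mem_iInter] at hmem
          have hch : ∀ n : ℕ, ∃ dd : Set.Ici (0:ℝ),
              (dd ∈ D ∧ t₀ < (dd : ℝ) ∧ (dd : ℝ) ≤ t₀ + 1/((n : ℝ)+1)) ∧
              ε₀ ≤ dist (G dd γ) (G t₀' γ) := by
            intro n
            obtain ⟨dd, hdd⟩ := Set.mem_iUnion.1 (hmem n)
            obtain ⟨hdd1, hdd2⟩ := Set.mem_iUnion.1 hdd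
            exact ⟨dd, hdd1, hdd2⟩
          choose dd hdd1 hdd2 using hch
          have hdt : Tendsto (fun n => ((dd n : Set.Ici (0:ℝ)) : ℝ)) atTop (𝓝 t₀) := by
            apply tendsto_of_tendsto_of_tendsto_of_le_of_le
              (g := fun _ : ℕ => t₀) (h := fun n : ℕ => t₀ + 1/((n : ℝ)+1))
            · exact tendsto_const_nhds
            · have h1 := tendsto_one_div_add_atTop_nhds_zero_nat (𝕜 := ℝ)
              simpa using (tendsto_const_nhds (x := t₀) (f := atTop)).add h1
            · intro n
              exact (hdd1 n).2.1.le
            · intro n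
              exact (hdd1 n).2.2
          have hdt' : Tendsto (fun n => dd n) atTop (𝓝 t₀') := tendsto_subtype_rng.2 hdt
          have hcont : Tendsto (fun n => γ (dd n)) atTop (𝓝 (γ t₀')) :=
            (γ.continuous.tendsto t₀').comp hdt'
          have hev := (Metric.tendsto_nhds.mp hcont) ε₀ hε₀
          obtain ⟨n, hn⟩ := hev.exists
          have heq : γ (dd n) = G (dd n) γ := (h1 (dd n) (hdd1 n).1).symm
          rw [heq, h2] at hn
          exact absurd (hdd2 n) (not_le.2 hn)
        rw [MeasureTheory.ae_iff] at hae
        rw [show {γ : C(Set.Ici (0:ℝ), X) | ¬ γ ∉ ⋂ n, Klim n} = ⋂ n, Klim n by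
          ext γ; simp] at hae
        exact hae
      -- the minimum weight
      have hs0ne : s0.Nonempty := by
        have := hprob z
        exact msupport_nonempty_of_prob (μ z)
      have hFne : hs0fin.toFinset.Nonempty := hs0fin.toFinset_nonempty.2 hs0ne
      set δ₀ := hs0fin.toFinset.inf' hFne (fun x => η (G z ⁻¹' {x})) with hδdef
      have hδpos : 0 < δ₀ := by
        rw [hδdef, Finset.lt_inf'_iff]
        intro x hxF
        exact hw x (hs0fin.mem_toFinset.1 hxF)
      have htd : Tendsto (fun n => η (Klim n)) atTop (𝓝 0) := by
        have := MeasureTheory.tendsto_measure_iInter_atTop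
          (fun n => (hKmeas n).nullMeasurableSet) hKanti ⟨0, measure_ne_top η _⟩
        rwa [hKnull] at this
      obtain ⟨n, hn⟩ := ((tendsto_order.1 htd).2 δ₀ hδpos).exists
      refine ⟨1/((n : ℝ)+1), by positivity, ?_⟩
      intro x hx
      intro h0
      have hsub : G z ⁻¹' {x} ⊆ (G z ⁻¹' {x} \ Klim n) ∪ Klim n := by
        intro γ hγ
        by_cases hγK : γ ∈ Klim n
        · exact Or.inr hγK
        · exact Or.inl ⟨hγ, hγK⟩
      have hle : η (G z ⁻¹' {x}) ≤ η (G z ⁻¹' {x} \ Klim n) + η (Klim n) :=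
        (measure_mono hsub).trans (measure_union_le _ _)
      rw [h0, zero_add] at hle
      have hge : δ₀ ≤ η (G z ⁻¹' {x}) :=
        Finset.inf'_le _ (hs0fin.mem_toFinset.2 hx)
      exact absurd (lt_of_le_of_lt (hge.trans hle) hn) (lt_irrefl δ₀)
    set Eset : Set C(Set.Ici (0:ℝ), X) :=
      ⋃ d ∈ {d | d ∈ D ∧ t₀ < (d : ℝ) ∧ (d : ℝ) ≤ t₀ + ε},
        {γ | ε₀ ≤ dist (G d γ) (G t₀' γ)} with hEsetdef
    -- positive mass in each ball
    have hball : ∀ t ∈ D, t₀ < (t : ℝ) → (t : ℝ) ≤ t₀ + ε →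
        ∀ p ∈ L '' s0, 0 < μ t (Metric.ball p ε₀) := by
      rintro t htD ht1 ht2 p ⟨x, hx, rfl⟩
      have hsub : ∀ᵐ γ ∂η, γ ∈ (G z ⁻¹' {x}) \ Eset →
          γ ∈ G t ⁻¹' (Metric.ball (L x) ε₀) := by
        filter_upwards [hLae x hx, hGae t₀'] with γ h1 h2 hγ
        obtain ⟨hγx, hγE⟩ := hγ
        have hGzx : G z γ = x := hγx
        have hLx : γ t₀' = L x := h1 hGzx
        have hdist : ¬ (ε₀ ≤ dist (G t γ) (G t₀' γ)) := by
          intro hge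
          exact hγE (Set.mem_biUnion (⟨htD, ht1, ht2⟩ :
            t ∈ {d | d ∈ D ∧ t₀ < (d : ℝ) ∧ (d : ℝ) ≤ t₀ + ε}) hge)
        push_neg at hdist
        have hGt₀ : G t₀' γ = L x := by rw [← h2]; exact hLx
        show G t γ ∈ Metric.ball (L x) ε₀
        rw [Metric.mem_ball, ← hGt₀]
        exact hdist
      have hle : η ((G z ⁻¹' {x}) \ Eset) ≤ η (G t ⁻¹' (Metric.ball (L x) ε₀)) :=
        measure_mono_ae hsub
      rw [hmap t _ measurableSet_ball] at hle
      by_contra h0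
      push_neg at h0
      have h00 : μ t (Metric.ball (L x) ε₀) = 0 := le_antisymm h0 (zero_le)
      rw [h00, add_zero] at hle
      exact hEsm x hx (le_antisymm hle (zero_le))
    -- localization of supports
    have hloc : ∀ t ∈ D, t₀ < (t : ℝ) → (t : ℝ) ≤ t₀ + ε →
        (msupport (μ t) ⊆ ⋃ p ∈ L '' s0, Metric.ball p ε₀) ∧
        (∀ p ∈ L '' s0, ∃ yy, msupport (μ t) ∩ Metric.ball p ε₀ = {yy}) := by
      intro t htD ht1 ht2
      have hne : ∀ p, p ∈ L '' s0 → (msupport (μ t) ∩ Metric.ball p ε₀).Nonempty :=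
        fun p hp => msupport_ball_nonempty (hball t htD ht1 ht2 p hp)
      choose! q hq using hne
      have hinj : Set.InjOn q (L '' s0) := by
        intro p hp p' hp' heq
        by_contra hne'
        have h3 := hsep p hp p' hp' hne'
        have d1 : dist (q p) p < ε₀ := Metric.mem_ball.1 (hq p hp).2
        have d2 : dist (q p') p' < ε₀ := Metric.mem_ball.1 (hq p' hp').2
        have d1' : dist p (q p) < ε₀ := by rw [dist_comm]; exact d1
        have h4 : dist p p' ≤ dist p (q p) + dist (q p) p' := dist_triangle _ _ _
        have h5 : dist (q p) p' = dist (q p') p' := by rw [heq]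
        linarith
      have himg : q '' (L '' s0) ⊆ msupport (μ t) := by
        rintro _ ⟨p, hp, rfl⟩
        exact (hq p hp).1
      have hcardle : (msupport (μ t)).ncard ≤ (q '' (L '' s0)).ncard := by
        rw [Set.ncard_image_of_injOn hinj]
        exact hcard t ht1.le
      have heqs : q '' (L '' s0) = msupport (μ t) :=
        Set.eq_of_subset_of_ncard_le himg hcardle (hfin t)
      constructor
      · rw [← heqs]
        rintro _ ⟨p, hp, rfl⟩
        exact Set.mem_biUnion hp (hq p hp).2
      · intro p hp
        refine ⟨q p, Set.eq_singleton_iff_unique_mem.2 ⟨⟨(hq p hp).1, (hq p hp).2⟩, ?_⟩⟩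
        rintro y ⟨hy1, hy2⟩
        rw [← heqs] at hy1
        obtain ⟨p', hp', rfl⟩ := hy1
        have hpp : p' = p := by
          by_contra hne'
          have h3 := hsep p' hp' p hp hne'
          have d1 : dist (q p') p' < ε₀ := Metric.mem_ball.1 (hq p' hp').2
          have d2 : dist (q p') p < ε₀ := Metric.mem_ball.1 hy2
          have h4 := dist_triangle p' (q p') p
          rw [dist_comm p' (q p')] at h4
          linarith
        rw [hpp]
    -- dirac property just after t₀
    have hPt : ∀ t ∈ D, t₀ < (t : ℝ) → (t : ℝ) ≤ t₀ + ε → Pp t := by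
      intro t htD ht1 ht2 x hx
      obtain ⟨yy, hyy⟩ := (hloc t htD ht1 ht2).2 (L x) ⟨x, hx, rfl⟩
      refine ⟨yy, ?_⟩
      filter_upwards [hgood1, hgood2, hLae x hx] with γ hg1 hg2 hLx hGx
      have hγt₀ : γ t₀' = L x := hLx hGx
      have hγt : γ t ∈ msupport (μ t) := hg2 t htD
      have hball' : γ t ∈ Metric.ball (L x) ε₀ := by
        by_contra hout
        obtain ⟨p, hp, hγp⟩ : ∃ p ∈ L '' s0, γ t ∈ Metric.ball p ε₀ := by
          have hh := (hloc t htD ht1 ht2).1 hγt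
          simpa using hh
        have hpne : p ≠ L x := by
          rintro rfl
          exact hout hγp
        have hdist2 : 2 * ε₀ ≤ dist (γ t) (L x) := by
          have h3 := hsep p hp (L x) ⟨x, hx, rfl⟩ hpne
          have h4 := dist_triangle p (γ t) (L x)
          have hd : dist p (γ t) < ε₀ := by
            rw [dist_comm]
            exact Metric.mem_ball.1 hγp
          linarith
        set f : ℝ → ℝ := fun r => dist (γ ⟨max r 0, le_max_right r 0⟩) (L x) with hfdef
        have hfc : Continuous f := by
          apply Continuous.dist ?_ continuous_const
          exact γ.continuous.comp (Continuous.subtype_mk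
            (continuous_id.max continuous_const) _)
        have hproj : ∀ (r : ℝ) (hr : 0 ≤ r),
            (⟨max r 0, le_max_right r 0⟩ : Set.Ici (0:ℝ)) = ⟨r, hr⟩ :=
          fun r hr => Subtype.ext (max_eq_left hr)
        have hft₀ : f t₀ = 0 := by
          show dist (γ ⟨max t₀ 0, le_max_right t₀ 0⟩) (L x) = 0
          rw [hproj t₀ ht₀0]
          show dist (γ t₀') (L x) = 0
          rw [hγt₀, dist_self]
        have hft : 2 * ε₀ ≤ f (t : ℝ) := by
          show 2 * ε₀ ≤ dist (γ ⟨max (t : ℝ) 0, le_max_right (t : ℝ) 0⟩) (L x)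
          rw [hproj (t : ℝ) t.2]
          exact hdist2
        have hmem32 : (3/2) * ε₀ ∈ Set.Icc (f t₀) (f (t : ℝ)) := by
          constructor
          · rw [hft₀]
            positivity
          · linarith
        obtain ⟨r, hr, hfr⟩ := intermediate_value_Icc ht1.le hfc.continuousOn hmem32
        have hrI : r ∈ Set.Ioo t₀ (t : ℝ) := by
          constructor
          · rcases eq_or_lt_of_le hr.1 with h | h
            · exfalso
              rw [← h, hft₀] at hfr
              linarith
            · exact h
          · rcases eq_or_lt_of_le hr.2 with h | h
            · exfalso
              rw [h] at hfr
              linarith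
            · exact h
        set U : Set ℝ := Set.Ioo t₀ (t : ℝ) ∩ f ⁻¹' (Set.Ioo ε₀ (2*ε₀)) with hUdef
        have hUo : IsOpen U := isOpen_Ioo.inter (isOpen_Ioo.preimage hfc)
        have hrU : r ∈ U := by
          refine ⟨hrI, ?_⟩
          rw [Set.mem_preimage, hfr]
          constructor <;> linarith
        have hUo' : IsOpen ((fun s : Set.Ici (0:ℝ) => (s : ℝ)) ⁻¹' U) :=
          hUo.preimage continuous_subtype_val
        have hr0 : 0 ≤ r := le_trans ht₀0 hr.1
        obtain ⟨dd, hddD, hddU⟩ := hDd.exists_mem_open hUo' ⟨⟨r, hr0⟩, hrU⟩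
        obtain ⟨⟨hdd1, hdd2⟩, hdd3⟩ := hddU
        have hsupdd : γ dd ∈ msupport (μ dd) := hg2 dd hddD
        have hsubdd := (hloc dd hddD hdd1 (le_trans hdd2.le ht2)).1 hsupdd
        obtain ⟨p', hp', hγp'⟩ : ∃ p' ∈ L '' s0, γ dd ∈ Metric.ball p' ε₀ := by
          simpa using hsubdd
        have hfdd : f (dd : ℝ) = dist (γ dd) (L x) := by
          show dist (γ ⟨max (dd : ℝ) 0, le_max_right (dd : ℝ) 0⟩) (L x) = dist (γ dd) (L x)
          rw [hproj (dd : ℝ) dd.2]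
        rw [Set.mem_preimage] at hdd3
        rw [hfdd] at hdd3
        by_cases hpx : p' = L x
        · rw [hpx] at hγp'
          have hlt : dist (γ dd) (L x) < ε₀ := Metric.mem_ball.1 hγp'
          linarith [hdd3.1]
        · have h3 := hsep p' hp' (L x) ⟨x, hx, rfl⟩ hpx
          have h4 : dist p' (γ dd) < ε₀ := by
            rw [dist_comm]
            exact Metric.mem_ball.1 hγp'
          have h5 := dist_triangle p' (γ dd) (L x)
          linarith [hdd3.2]
      have hmem : γ t ∈ msupport (μ t) ∩ Metric.ball (L x) ε₀ := ⟨hγt, hball'⟩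
      rw [hyy] at hmem
      rw [hg1 t htD]
      exact hmem
    -- contradiction
    have hge : ∀ r ∈ B, t₀ + ε < r := by
      intro r hr
      obtain ⟨t, htD, hteq, htP⟩ := hr
      have h1 : t₀ ≤ r := csInf_le hBbdd ⟨t, htD, hteq, htP⟩
      rcases lt_or_eq_of_le h1 with h2 | h2
      · by_contra h3
        exact htP (hPt t htD (hteq ▸ h2) (hteq ▸ not_lt.mp h3))
      · exfalso
        have : t = t₀' := Subtype.ext (by rw [hteq, ← h2])
        refine htP ?_
        rw [this]
        intro x hx
        refine ⟨L x, ?_⟩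
        filter_upwards [hLae x hx, hGae t₀'] with γ h1' h2' hGx
        rw [← h2']
        exact h1' hGx
    have : t₀ + ε ≤ t₀ := le_csInf hBne fun r hr => (hge r hr).le
    linarith
  -- now conclude
  intro x hx
  have hYex : ∀ t ∈ D, ∃ y, ∀ᵐ γ ∂η, G z γ = x → G t γ = y := fun t ht => hPD t ht x hx
  choose! Y hY using hYex
  have haeY : ∀ᵐ γ ∂η, ∀ d ∈ D, G z γ = x → G d γ = Y d :=
    (MeasureTheory.ae_ball_iff hDc).2 hY
  have hpos : η ((G z) ⁻¹' {x}) ≠ 0 := (hw x hx).ne'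
  obtain ⟨γs, hγs, hγsae⟩ := MeasureTheory.Measure.exists_mem_of_measure_ne_zero_of_ae hpos
    (MeasureTheory.ae_restrict_of_ae (haeY.and hgood1))
  refine ⟨γs, ?_⟩
  filter_upwards [haeY, hgood1] with γ h1 h2 hGx
  have heq : Set.EqOn ⇑γ ⇑γs D := by
    intro d hd
    have e1 : γ d = Y d := by rw [← h2 d hd]; exact h1 d hd hGx
    have e2 : γs d = Y d := by
      rw [← hγsae.2 d hd]; exact hγsae.1 d hd hγs
    rw [e1, e2]
  have := Continuous.ext_on hDd γ.continuous γs.continuous heq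
  exact ContinuousMap.ext fun a => congrFun this a

/-- If `μ : [0,∞) → P₂(X)` has finite support of non-increasing
cardinality, then there is at most one `η ∈ P(C([0,∞);X))` with `(e_t)_♯η = μ_t`
for all `t ≥ 0`. -/
theorem stmt11 [MeasurableSpace C(Set.Ici (0:ℝ), X)]
    (μ : Set.Ici (0:ℝ) → Measure X) (hμ : ∀ t, MemP2 (μ t))
    (hfin : ∀ t, (msupport (μ t)).Finite)
    (hmono : ∀ s t : Set.Ici (0:ℝ), s ≤ t →
      (msupport (μ t)).ncard ≤ (msupport (μ s)).ncard)
    (η₁ η₂ : Measure C(Set.Ici (0:ℝ), X))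
    [IsProbabilityMeasure η₁] [IsProbabilityMeasure η₂]
    (h₁ : ∀ t : Set.Ici (0:ℝ), η₁.map (fun γ : C(Set.Ici (0:ℝ), X) => γ t) = μ t)
    (h₂ : ∀ t : Set.Ici (0:ℝ), η₂.map (fun γ : C(Set.Ici (0:ℝ), X) => γ t) = μ t) :
    η₁ = η₂ := by
  have hprob : ∀ t, IsProbabilityMeasure (μ t) := fun t => (hμ t).1
  classical
  set z : Set.Ici (0:ℝ) := ⟨0, Set.self_mem_Ici⟩ with hzdef
  set η : Measure C(Set.Ici (0:ℝ), X) := η₁ + η₂ with hηdef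
  have haem : ∀ t : Set.Ici (0:ℝ),
      AEMeasurable (fun γ : C(Set.Ici (0:ℝ), X) => γ t) η := by
    intro t
    rw [hηdef, aemeasurable_add_measure_iff]
    constructor
    · by_contra h
      have := Measure.map_of_not_aemeasurable h
      rw [h₁ t] at this
      have h2 := (hprob t).measure_univ
      rw [this] at h2
      simp at h2
    · by_contra h
      have := Measure.map_of_not_aemeasurable h
      rw [h₂ t] at this
      have h2 := (hprob t).measure_univ
      rw [this] at h2
      simp at h2
  set G : Set.Ici (0:ℝ) → C(Set.Ici (0:ℝ), X) → X := fun t => (haem t).mk _ with hGdef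
  have hGmeas : ∀ t, Measurable (G t) := fun t => (haem t).measurable_mk
  have hGae : ∀ t, (fun γ : C(Set.Ici (0:ℝ), X) => γ t) =ᵐ[η] G t :=
    fun t => (haem t).ae_eq_mk
  have hGae₁ : ∀ t, (fun γ : C(Set.Ici (0:ℝ), X) => γ t) =ᵐ[η₁] G t :=
    fun t => (hGae t).filter_mono (MeasureTheory.ae_mono (Measure.le_add_right le_rfl))
  have hGae₂ : ∀ t, (fun γ : C(Set.Ici (0:ℝ), X) => γ t) =ᵐ[η₂] G t :=
    fun t => (hGae t).filter_mono (MeasureTheory.ae_mono (Measure.le_add_left le_rfl))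
  have hmap₁ : ∀ t, η₁.map (G t) = μ t := by
    intro t
    rw [← Measure.map_congr (hGae₁ t)]
    exact h₁ t
  have hmap₂ : ∀ t, η₂.map (G t) = μ t := by
    intro t
    rw [← Measure.map_congr (hGae₂ t)]
    exact h₂ t
  have hGmap : ∀ t, η.map (G t) = μ t + μ t := by
    intro t
    rw [hηdef, Measure.map_add _ _ (hGmeas t), hmap₁ t, hmap₂ t]
  have hmain := main_struct μ hprob hfin hmono η G hGmeas hGae hGmap
  haveI : Nonempty C(Set.Ici (0:ℝ), X) := ⟨ContinuousMap.const _ 0⟩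
  choose! g hg using hmain
  set s0 : Set X := msupport (μ z) with hs0def
  have hs0fin : s0.Finite := hfin z
  -- the key computation for any admissible ν below η
  have key : ∀ ν : Measure C(Set.Ici (0:ℝ), X), ν ≤ η →
      (∀ t, ν.map (G t) = μ t) → ∀ A : Set C(Set.Ici (0:ℝ), X), MeasurableSet A →
      ν A = ∑ x ∈ hs0fin.toFinset, (if g x ∈ A then μ z {x} else 0) := by
    intro ν hνle hνmap A hA
    have hνs0 : ν (G z ⁻¹' s0ᶜ) = 0 := by
      rw [← Measure.map_apply (hGmeas z) hs0fin.measurableSet.compl, hνmap z]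
      exact msupport_compl_null (μ z)
    -- splitting
    have hU : MeasurableSet (G z ⁻¹' s0) := hGmeas z hs0fin.measurableSet
    have hsplit : ν A = ν (A ∩ G z ⁻¹' s0) := by
      have h1 : ν A = ν (A ∩ G z ⁻¹' s0) + ν (A \ G z ⁻¹' s0) :=
        (measure_inter_add_diff A hU).symm
      have h2 : ν (A \ G z ⁻¹' s0) = 0 := by
        refine measure_mono_null ?_ hνs0
        intro γ hγ
        exact hγ.2
      rw [h1, h2, add_zero]
    have hdecomp : A ∩ G z ⁻¹' s0 = ⋃ x ∈ hs0fin.toFinset, (A ∩ G z ⁻¹' {x}) := by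
      ext γ
      simp only [Set.mem_inter_iff, Set.mem_preimage, Set.mem_iUnion, Set.Finite.mem_toFinset]
      constructor
      · rintro ⟨hγA, hγs⟩
        exact ⟨G z γ, hγs, hγA, rfl⟩
      · rintro ⟨x, hxs, hγA, hγx⟩
        exact ⟨hγA, hγx ▸ hxs⟩
    have hsum : ν (A ∩ G z ⁻¹' s0) = ∑ x ∈ hs0fin.toFinset, ν (A ∩ G z ⁻¹' {x}) := by
      rw [hdecomp]
      apply measure_biUnion_finset
      · intro x hxF y hyF hxy
        simp only [Function.onFun]
        apply Set.disjoint_left.2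
        rintro γ ⟨-, hγx⟩ ⟨-, hγy⟩
        have e1 : G z γ = x := hγx
        have e2 : G z γ = y := hγy
        exact hxy (e1.symm.trans e2)
      · intro x _
        exact hA.inter (hGmeas z (measurableSet_singleton x))
    have hterm : ∀ x ∈ hs0fin.toFinset,
        ν (A ∩ G z ⁻¹' {x}) = if g x ∈ A then μ z {x} else 0 := by
      intro x hxF
      have hxs : x ∈ s0 := hs0fin.mem_toFinset.1 hxF
      have hgx : ∀ᵐ γ ∂ν, G z γ = x → γ = g x :=
        (hg x hxs).filter_mono (MeasureTheory.ae_mono hνle)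
      have hAx : ν (G z ⁻¹' {x}) = μ z {x} := by
        rw [← Measure.map_apply (hGmeas z) (measurableSet_singleton x), hνmap z]
      by_cases hgA : g x ∈ A
      · rw [if_pos hgA]
        refine le_antisymm ?_ ?_
        · rw [← hAx]
          exact measure_mono Set.inter_subset_right
        · rw [← hAx]
          apply measure_mono_ae
          filter_upwards [hgx] with γ h hγ
          have : γ = g x := h hγ
          exact ⟨this ▸ hgA, hγ⟩
      · rw [if_neg hgA]
        have hnull : ν {γ | ¬ (G z γ = x → γ = g x)} = 0 := MeasureTheory.ae_iff.1 hgx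
        refine measure_mono_null ?_ hnull
        rintro γ ⟨hγA, hγx⟩
        have hGzx : G z γ = x := hγx
        intro himp
        exact hgA ((himp hGzx) ▸ hγA)
    rw [hsplit, hsum]
    exact Finset.sum_congr rfl hterm
  ext A hA
  rw [key η₁ (Measure.le_add_right le_rfl) hmap₁ A hA,
    key η₂ (Measure.le_add_left le_rfl) hmap₂ A hA]
end

section
/- Let N ≥ 1, a_i > 0 with Σ_{i=1}^N a_i = 1, and x_i ∈ X pairwise distinct; set μ̄ := Σ_{i=1}^N a_i δ_{x_i}. Let μ: [0,+∞) → P₂(X) with μ(0) = μ̄ be such that the cardinality of supp(μ_t) is finite for every t ≥ 0 and non-increasing in t. Assume η ∈ P(C([0,+∞);X)) satisfies (e_t)_♯η = μ_t for every t ≥ 0. Then η = Σ_{i=1}^N a_i δ_{γ_i} for continuous curves γ_i ∈ C([0,+∞);X) satisfying: (P1) γ_i ≠ γ_j for i ≠ j; (P2) γ_i(0) = x_i for every i = 1,…,N; (P3) if γ_i(s) = γ_j(s) for some s ≥ 0 and some i ≠ j, then γ_i(t) = γ_j(t) for every t ≥ s. -/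
open MeasureTheory ProbabilityTheory
open scoped ENNReal

variable {X : Type*} [NormedAddCommGroup X] [InnerProductSpace ℝ X]
  [CompleteSpace X] [SecondCountableTopology X] [MeasurableSpace X] [BorelSpace X]

set_option linter.unusedSectionVars false
set_option maxHeartbeats 1000000

section AuxSticky

section aux
variable {α : Type*} [TopologicalSpace α] [MeasurableSpace α] [OpensMeasurableSpace α]

lemma isClosed_msupport (μ : Measure α) : IsClosed (msupport μ) := by
  rw [← isOpen_compl_iff, isOpen_iff_mem_nhds]
  intro y hy
  simp only [Set.mem_compl_iff, msupport, Set.mem_setOf_eq, not_forall] at hy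
  obtain ⟨U, hU, hyU, hμU⟩ := hy
  refine Filter.mem_of_superset (hU.mem_nhds hyU) ?_
  intro z hz
  simp only [Set.mem_compl_iff, msupport, Set.mem_setOf_eq, not_forall]
  exact ⟨U, hU, hz, hμU⟩

lemma measure_compl_msupport [SecondCountableTopology α] (μ : Measure α) :
    μ (msupport μ)ᶜ = 0 := by
  obtain ⟨B, hBc, -, hBbasis⟩ := TopologicalSpace.exists_countable_basis α
  have hsub : (msupport μ)ᶜ ⊆ ⋃₀ {U ∈ B | μ U = 0} := by
    intro y hy
    simp only [Set.mem_compl_iff, msupport, Set.mem_setOf_eq, not_forall] at hy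
    obtain ⟨U, hU, hyU, hμU⟩ := hy
    have hμU0 : μ U = 0 := by simpa using hμU
    obtain ⟨W, hWB, hyW, hWU⟩ := hBbasis.exists_subset_of_mem_open hyU hU
    exact ⟨W, ⟨hWB, measure_mono_null hWU hμU0⟩, hyW⟩
  refine measure_mono_null hsub ?_
  exact (measure_sUnion_null_iff (hBc.mono (Set.sep_subset _ _))).2 fun U hU => hU.2

lemma atom_of_mem_msupport [SecondCountableTopology α] [T1Space α] (μ : Measure α)
    (hfin : (msupport μ).Finite) {y : α} (hy : y ∈ msupport μ) : 0 < μ {y} := by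
  have hopen : IsOpen ((msupport μ \ {y})ᶜ) :=
    ((hfin.subset Set.diff_subset).isClosed).isOpen_compl
  have hyU : y ∈ (msupport μ \ {y})ᶜ := by simp
  have h1 : 0 < μ ((msupport μ \ {y})ᶜ) := hy _ hopen hyU
  have h2 : μ ((msupport μ \ {y})ᶜ) ≤ μ {y} + μ (msupport μ)ᶜ := by
    refine le_trans (measure_mono ?_) (measure_union_le _ _)
    intro z hz
    by_cases hzs : z ∈ msupport μ
    · left; simp only [Set.mem_compl_iff, Set.mem_diff, not_and, not_not] at hz
      exact hz hzs
    · right; exact hzs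
  have h3 : μ ((msupport μ \ {y})ᶜ) ≤ μ {y} := by
    rwa [measure_compl_msupport, add_zero] at h2
  exact lt_of_lt_of_le h1 h3

end aux

lemma exists_sep {X : Type*} [NormedAddCommGroup X] (F : Set X) (hF : F.Finite) :
    ∃ ε : ℝ, 0 < ε ∧ ∀ a ∈ F, ∀ b ∈ F, a ≠ b → 2*ε ≤ dist a b := by
  classical
  by_cases hne : (hF.toFinset.offDiag).Nonempty
  · refine ⟨(hF.toFinset.offDiag.inf' hne (fun ab => dist ab.1 ab.2))/2, ?_, ?_⟩
    · have : ∀ ab ∈ hF.toFinset.offDiag, 0 < dist ab.1 ab.2 := by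
        intro ab hab
        rw [Finset.mem_offDiag] at hab
        exact dist_pos.2 hab.2.2
      have := (Finset.lt_inf'_iff hne (f := fun ab => dist ab.1 ab.2) (a := 0)).2 this
      linarith
    · intro a ha b hb hab
      have hmem : (a, b) ∈ hF.toFinset.offDiag := by
        rw [Finset.mem_offDiag]
        exact ⟨hF.mem_toFinset.2 ha, hF.mem_toFinset.2 hb, hab⟩
      have := Finset.inf'_le (fun ab => dist ab.1 ab.2) hmem
      linarith
  · refine ⟨1, one_pos, ?_⟩
    intro a ha b hb hab
    exact absurd ⟨(a,b), (Finset.mem_offDiag).2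
      ⟨hF.mem_toFinset.2 ha, hF.mem_toFinset.2 hb, hab⟩⟩ hne

variable [MeasurableSpace C(Set.Ici (0:ℝ), X)]

lemma eval_aemeasurable
    (μ : Set.Ici (0:ℝ) → Measure X) (hμ : ∀ t, MemP2 (μ t))
    (η : Measure C(Set.Ici (0:ℝ), X))
    (hη : ∀ t : Set.Ici (0:ℝ), η.map (fun γ : C(Set.Ici (0:ℝ), X) => γ t) = μ t)
    (u : Set.Ici (0:ℝ)) : AEMeasurable (fun γ : C(Set.Ici (0:ℝ), X) => γ u) η := by
  by_contra h
  have h0 := hη u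
  rw [Measure.map_of_not_aemeasurable h] at h0
  have h1 := (hμ u).1.measure_univ
  rw [← h0] at h1
  simp at h1

lemma ball_pos_right
    (μ : Set.Ici (0:ℝ) → Measure X) (hμ : ∀ t, MemP2 (μ t))
    (η : Measure C(Set.Ici (0:ℝ), X)) [IsProbabilityMeasure η]
    (hη : ∀ t : Set.Ici (0:ℝ), η.map (fun γ : C(Set.Ici (0:ℝ), X) => γ t) = μ t)
    (v : Set.Ici (0:ℝ)) (p : X) (hp : 0 < μ v {p}) {ε : ℝ} (hε : 0 < ε) :
    ∃ δ : ℝ, 0 < δ ∧ ∀ u : Set.Ici (0:ℝ), v ≤ u → (u:ℝ) ≤ (v:ℝ) + δ →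
      0 < μ u (Metric.ball p ε) := by
  by_contra hcon
  push_neg at hcon
  have hsel : ∀ k : ℕ, ∃ u : Set.Ici (0:ℝ), v ≤ u ∧ (u:ℝ) ≤ (v:ℝ) + 1/(k+1) ∧
      μ u (Metric.ball p ε) = 0 := by
    intro k
    obtain ⟨u, hu1, hu2, hu3⟩ := hcon (1/(k+1)) (by positivity)
    exact ⟨u, hu1, hu2, le_antisymm hu3 (zero_le)⟩
  choose u hu1 hu2 hu3 using hsel
  have htend : Filter.Tendsto u Filter.atTop (nhds v) := by
    rw [tendsto_subtype_rng]
    apply tendsto_of_tendsto_of_tendsto_of_le_of_le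
      (tendsto_const_nhds : Filter.Tendsto (fun _ : ℕ => (v:ℝ)) _ _) ?_
      (fun k => hu1 k) (fun k => hu2 k)
    have : Filter.Tendsto (fun k : ℕ => (v:ℝ) + 1/(k+1)) Filter.atTop (nhds ((v:ℝ) + 0)) :=
      Filter.Tendsto.const_add _ tendsto_one_div_add_atTop_nhds_zero_nat
    simpa using this
  set f : X → ℝ≥0∞ := fun y => ENNReal.ofReal (max (1 - dist y p / ε) 0) with hf
  have hf_cont : Continuous f := by
    apply ENNReal.continuous_ofReal.comp
    exact (continuous_const.sub ((continuous_id.dist continuous_const).div_const ε)).max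
      continuous_const
  have hf_le_one : ∀ y, f y ≤ 1 := by
    intro y
    rw [hf]
    simp only
    rw [← ENNReal.ofReal_one]
    apply ENNReal.ofReal_le_ofReal
    apply max_le _ zero_le_one
    have : 0 ≤ dist y p / ε := by positivity
    linarith
  have hf_zero : ∀ y, y ∉ Metric.ball p ε → f y = 0 := by
    intro y hy
    rw [Metric.mem_ball, not_lt] at hy
    rw [hf]
    simp only
    rw [ENNReal.ofReal_eq_zero]
    apply max_le _ le_rfl
    rw [sub_nonpos]
    exact (one_le_div hε).2 hy
  have hf_p : f p = 1 := by
    rw [hf]; simp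
  have hmap : ∀ w : Set.Ici (0:ℝ), ∫⁻ γ, f (γ w) ∂η = ∫⁻ y, f y ∂(μ w) := by
    intro w
    rw [← hη w]
    exact (lintegral_map' hf_cont.measurable.aemeasurable
      (eval_aemeasurable μ hμ η hη w)).symm
  have hzero : ∀ k, ∫⁻ γ, f (γ (u k)) ∂η = 0 := by
    intro k
    rw [hmap]
    apply le_antisymm _ (zero_le)
    calc ∫⁻ y, f y ∂(μ (u k)) ≤ ∫⁻ y, (Metric.ball p ε).indicator (fun _ => 1) y ∂(μ (u k)) := by
          apply lintegral_mono
          intro y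
          by_cases hy : y ∈ Metric.ball p ε
          · rw [Set.indicator_of_mem hy]; exact hf_le_one y
          · rw [Set.indicator_of_notMem hy, hf_zero y hy]
      _ = 1 * μ (u k) (Metric.ball p ε) :=
          lintegral_indicator_const Metric.isOpen_ball.measurableSet 1
      _ = μ (u k) (Metric.ball p ε) := one_mul _
      _ = 0 := hu3 k
  have hlim : Filter.Tendsto (fun k => ∫⁻ γ, f (γ (u k)) ∂η) Filter.atTop
      (nhds (∫⁻ γ, f (γ v) ∂η)) := by
    apply tendsto_lintegral_of_dominated_convergence' (fun _ => 1)
    · intro k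
      exact hf_cont.measurable.comp_aemeasurable (eval_aemeasurable μ hμ η hη (u k))
    · exact fun k => Filter.Eventually.of_forall (fun γ => hf_le_one _)
    · rw [lintegral_const, measure_univ, mul_one]; exact ENNReal.one_ne_top
    · apply Filter.Eventually.of_forall
      intro γ
      exact (hf_cont.tendsto (γ v)).comp ((γ.continuous.tendsto v).comp htend)
  have h0 : (0:ℝ≥0∞) = ∫⁻ γ, f (γ v) ∂η := by
    apply tendsto_nhds_unique _ hlim
    simp only [hzero]
    exact tendsto_const_nhds
  have hge : μ v {p} ≤ ∫⁻ γ, f (γ v) ∂η := by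
    rw [hmap]
    calc μ v {p} = ∫⁻ y, ({p} : Set X).indicator (fun _ => 1) y ∂(μ v) := by
          rw [lintegral_indicator_const (measurableSet_singleton p) 1, one_mul]
      _ ≤ ∫⁻ y, f y ∂(μ v) := by
          apply lintegral_mono
          intro y
          by_cases hy : y ∈ ({p} : Set X)
          · rw [Set.indicator_of_mem hy]
            rcases hy with rfl
            rw [hf_p]
          · rw [Set.indicator_of_notMem hy]; exact zero_le
  rw [← h0] at hge
  exact absurd (le_antisymm hge (zero_le)) (ne_of_gt hp)

lemma nosplit
    (μ : Set.Ici (0:ℝ) → Measure X) (hμ : ∀ t, MemP2 (μ t))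
    (hfin : ∀ t, (msupport (μ t)).Finite)
    (hmono : ∀ s t : Set.Ici (0:ℝ), s ≤ t →
      (msupport (μ t)).ncard ≤ (msupport (μ s)).ncard)
    (η : Measure C(Set.Ici (0:ℝ), X)) [IsProbabilityMeasure η]
    (hη : ∀ t : Set.Ici (0:ℝ), η.map (fun γ : C(Set.Ici (0:ℝ), X) => γ t) = μ t)
    (T : Set (Set.Ici (0:ℝ)))
    (hT : ∀ (v : Set.Ici (0:ℝ)) (δ : ℝ), 0 < δ → ∃ u ∈ T, v < u ∧ (u:ℝ) ≤ (v:ℝ) + δ)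
    (c c' : C(Set.Ici (0:ℝ), X))
    (hc : ∀ u ∈ T, c u ∈ msupport (μ u)) (hc' : ∀ u ∈ T, c' u ∈ msupport (μ u))
    (s t : Set.Ici (0:ℝ)) (hst : s ≤ t) (hs : c s = c' s) : c t = c' t := by
  classical
  by_contra hne
  set proj : ℝ → Set.Ici (0:ℝ) := fun r => ⟨max r 0, le_max_right r 0⟩ with hprojdef
  have hproj_cont : Continuous proj :=
    Continuous.subtype_mk (continuous_id.max continuous_const) _
  have hproj_eq : ∀ w : Set.Ici (0:ℝ), proj (w:ℝ) = w := by
    intro w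
    apply Subtype.ext
    exact max_eq_left w.2
  set A : Set ℝ := {r | r ∈ Set.Icc (s:ℝ) (t:ℝ) ∧ c (proj r) = c' (proj r)} with hA
  have hsA : (s:ℝ) ∈ A := by
    constructor
    · exact ⟨le_refl _, hst⟩
    · rw [hproj_eq s]; exact hs
  have hAclosed : IsClosed A := by
    have : A = Set.Icc (s:ℝ) (t:ℝ) ∩
        (fun r => dist (c (proj r)) (c' (proj r))) ⁻¹' {0} := by
      ext r
      simp only [hA, Set.mem_setOf_eq, Set.mem_inter_iff, Set.mem_preimage,
        Set.mem_singleton_iff, dist_eq_zero]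
    rw [this]
    exact isClosed_Icc.inter (IsClosed.preimage
      ((c.continuous.comp hproj_cont).dist (c'.continuous.comp hproj_cont))
      isClosed_singleton)
  have hAbdd : BddAbove A := ⟨(t:ℝ), fun r hr => hr.1.2⟩
  set rv : ℝ := sSup A with hrv
  have hrvA : rv ∈ A := hAclosed.csSup_mem ⟨_, hsA⟩ hAbdd
  have hrv_le : rv ≤ (t:ℝ) := hrvA.1.2
  have hrv_ge : (s:ℝ) ≤ rv := hrvA.1.1
  set v : Set.Ici (0:ℝ) := proj rv with hvdef
  have hv_coe : (v:ℝ) = rv := max_eq_left (le_trans s.2 hrv_ge)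
  have hveq : c v = c' v := hrvA.2
  have hrv_lt : rv < (t:ℝ) := by
    rcases lt_or_eq_of_le hrv_le with h | h
    · exact h
    · exfalso
      apply hne
      have : v = t := by apply Subtype.ext; rw [hv_coe, h]
      rw [← this]
      exact hveq
  have hsv : s ≤ v := by rw [← Subtype.coe_le_coe, hv_coe]; exact hrv_ge
  -- separation of support points and p
  set S : Set X := msupport (μ v) with hS
  set p : X := c v with hp
  have hFfin : (insert p S).Finite := (hfin v).insert p
  obtain ⟨ε, hε, hsep⟩ := exists_sep (insert p S) hFfin
  -- δ from mass positivity
  have key : ∀ q ∈ S, ∃ δ : ℝ, 0 < δ ∧ ∀ u : Set.Ici (0:ℝ), v ≤ u → (u:ℝ) ≤ (v:ℝ) + δ →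
      0 < μ u (Metric.ball q ε) := by
    intro q hq
    exact ball_pos_right μ hμ η hη v q (atom_of_mem_msupport (μ v) (hfin v) hq) hε
  choose! δf hδf1 hδf2 using key
  have hSfin : S.Finite := hfin v
  set D : Finset ℝ := insert 1 (hSfin.toFinset.image δf) with hD
  have hDne : D.Nonempty := ⟨1, Finset.mem_insert_self _ _⟩
  set δ : ℝ := D.min' hDne with hδdef
  have hδpos : 0 < δ := by
    have hall : ∀ r ∈ D, 0 < r := by
      intro r hr
      rcases Finset.mem_insert.1 hr with h | h
      · rw [h]; exact one_pos
      · obtain ⟨q, hq, hq2⟩ := Finset.mem_image.1 h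
        rw [← hq2]; exact hδf1 q (hSfin.mem_toFinset.1 hq)
    exact hall _ (Finset.min'_mem D hDne)
  have hδ_le : ∀ q ∈ S, δ ≤ δf q := by
    intro q hq
    apply Finset.min'_le
    rw [hD]
    exact Finset.mem_insert_of_mem (Finset.mem_image_of_mem δf (hSfin.mem_toFinset.2 hq))
  -- continuity of c, c' at v
  obtain ⟨δ₁, hδ₁, h1⟩ := Metric.continuousAt_iff.1 c.continuous.continuousAt ε hε
  obtain ⟨δ₂, hδ₂, h2⟩ := Metric.continuousAt_iff.1 c'.continuous.continuousAt ε hε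
  -- choose u
  set δs : ℝ := min (min δ (min δ₁ δ₂)) ((t:ℝ) - rv) with hδs
  have hδspos : 0 < δs := by
    apply lt_min
    · exact lt_min hδpos (lt_min hδ₁ hδ₂)
    · linarith
  obtain ⟨u, huT, hvu, huu⟩ := hT v (δs/2) (by linarith)
  have huv_dist : dist u v < min δ (min δ₁ δ₂) := by
    rw [Subtype.dist_eq, Real.dist_eq, abs_of_nonneg (by
      rw [sub_nonneg]; exact le_of_lt (Subtype.coe_lt_coe.2 hvu))]
    have : δs ≤ min δ (min δ₁ δ₂) := min_le_left _ _
    linarith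
  have hut : (u:ℝ) ≤ (t:ℝ) := by
    have : δs ≤ (t:ℝ) - rv := min_le_right _ _
    rw [hv_coe] at huu
    linarith
  have hsu : s ≤ u := le_of_lt (lt_of_le_of_lt hsv hvu)
  have hne_u : c u ≠ c' u := by
    intro heq
    have hmem : (u:ℝ) ∈ A := by
      constructor
      · exact ⟨hsu, hut⟩
      · rw [hproj_eq u]; exact heq
    have : (u:ℝ) ≤ rv := le_csSup hAbdd hmem
    have : (u:ℝ) ≤ (v:ℝ) := by rw [hv_coe]; exact this
    exact absurd (Subtype.coe_lt_coe.2 hvu) (not_lt.2 this)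
  have hcu : dist (c u) p < ε := h1 (lt_of_lt_of_le huv_dist
    (le_trans (min_le_right _ _) (min_le_left _ _)))
  have hcu' : dist (c' u) (c' v) < ε := h2 (lt_of_lt_of_le huv_dist
    (le_trans (min_le_right _ _) (min_le_right _ _)))
  have hcu'2 : dist (c' u) p < ε := by rw [hveq]; exact hcu'
  -- pick support points near each q in S
  have hpick : ∀ q ∈ S, ∃ w, w ∈ Metric.ball q ε ∧ w ∈ msupport (μ u) := by
    intro q hq
    have hpos : 0 < μ u (Metric.ball q ε) := by
      apply hδf2 q hq u (le_of_lt hvu)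
      have : δs ≤ δ := le_trans (min_le_left _ _) (min_le_left _ _)
      have hle := hδ_le q hq
      linarith
    have hpos2 : 0 < μ u (Metric.ball q ε ∩ msupport (μ u)) := by
      by_contra hz
      push_neg at hz
      have hz0 : μ u (Metric.ball q ε ∩ msupport (μ u)) = 0 := le_antisymm hz (zero_le)
      have : μ u (Metric.ball q ε) ≤ μ u (Metric.ball q ε ∩ msupport (μ u)) +
          μ u (msupport (μ u))ᶜ := by
        refine le_trans (measure_mono ?_) (measure_union_le _ _)
        intro z hz2
        by_cases hzm : z ∈ msupport (μ u)
        · exact Or.inl ⟨hz2, hzm⟩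
        · exact Or.inr hzm
      rw [hz0, measure_compl_msupport, add_zero] at this
      exact absurd (le_antisymm this (zero_le)) (ne_of_gt hpos)
    obtain ⟨w, hw⟩ := nonempty_of_measure_ne_zero (ne_of_gt hpos2)
    exact ⟨w, hw.1, hw.2⟩
  choose! w hw1 hw2 using hpick
  -- the witness set
  set W : Set X := insert (c u) (insert (c' u) (w '' (S \ {p}))) with hW
  have himg_fin : (w '' (S \ {p})).Finite := (hSfin.subset Set.diff_subset).image w
  -- memberships facts
  have hq_ne : ∀ q ∈ S \ {p}, ∀ z : X, dist z p < ε → z ≠ w q := by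
    intro q hq z hz heq
    have hqS : q ∈ S := hq.1
    have hqp : q ≠ p := hq.2
    have hsep2 : 2*ε ≤ dist p q := hsep p (Set.mem_insert _ _) q
      (Set.mem_insert_of_mem _ hqS) (Ne.symm hqp)
    have hwq : dist (w q) q < ε := Metric.mem_ball.1 (hw1 q hqS)
    rw [heq] at hz
    have htri : dist p q ≤ dist p (w q) + dist (w q) q := dist_triangle _ _ _
    rw [dist_comm p (w q)] at htri
    linarith
  have hwinj : Set.InjOn w (S \ {p}) := by
    intro q1 hq1 q2 hq2 heq
    by_contra hne12
    have h12 : 2*ε ≤ dist q1 q2 := hsep q1 (Set.mem_insert_of_mem _ hq1.1) q2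
      (Set.mem_insert_of_mem _ hq2.1) hne12
    have hw1q : dist (w q1) q1 < ε := Metric.mem_ball.1 (hw1 q1 hq1.1)
    have hw2q : dist (w q2) q2 < ε := Metric.mem_ball.1 (hw1 q2 hq2.1)
    have hz2 : dist (w q1) q2 < ε := by rw [heq]; exact hw2q
    have hz1 : dist q1 (w q1) < ε := by rw [dist_comm]; exact hw1q
    have htri := dist_triangle q1 (w q1) q2
    linarith
  -- cardinality
  have hcuW : c u ∉ insert (c' u) (w '' (S \ {p})) := by
    intro hmem
    rcases Set.mem_insert_iff.1 hmem with h | h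
    · exact hne_u h
    · obtain ⟨q, hq, hq2⟩ := h
      exact hq_ne q hq (c u) hcu hq2.symm
  have hcu'W : c' u ∉ w '' (S \ {p}) := by
    intro hmem
    obtain ⟨q, hq, hq2⟩ := hmem
    exact hq_ne q hq (c' u) hcu'2 hq2.symm
  have hWcard : (S \ {p}).ncard + 2 ≤ W.ncard := by
    rw [hW]
    rw [Set.ncard_insert_of_notMem hcuW (himg_fin.insert _)]
    rw [Set.ncard_insert_of_notMem hcu'W himg_fin]
    rw [Set.ncard_image_of_injOn hwinj]
  have hScard : S.ncard ≤ (S \ {p}).ncard + 1 := by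
    have : S ⊆ insert p (S \ {p}) := by
      intro z hz
      by_cases hzp : z = p
      · exact Or.inl hzp
      · exact Or.inr ⟨hz, hzp⟩
    calc S.ncard ≤ (insert p (S \ {p})).ncard :=
          Set.ncard_le_ncard this ((hSfin.subset Set.diff_subset).insert p)
      _ ≤ (S \ {p}).ncard + 1 := Set.ncard_insert_le _ _
  have hWsub : W ⊆ msupport (μ u) := by
    rw [hW]
    intro z hz
    rcases Set.mem_insert_iff.1 hz with h | h
    · rw [h]; exact hc u huT
    · rcases Set.mem_insert_iff.1 h with h2 | h2
      · rw [h2]; exact hc' u huT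
      · obtain ⟨q, hq, hq2⟩ := h2
        rw [← hq2]; exact hw2 q hq.1
  have hfinal : W.ncard ≤ S.ncard := by
    calc W.ncard ≤ (msupport (μ u)).ncard := Set.ncard_le_ncard hWsub (hfin u)
      _ ≤ (msupport (μ v)).ncard := hmono v u (le_of_lt hvu)
      _ = S.ncard := rfl
  omega


end AuxSticky

/-- **Sticky particles representation.** Let
`μ̄ = Σ aᵢ δ_{xᵢ}` with `aᵢ > 0`, `Σ aᵢ = 1`, and `xᵢ` pairwise distinct; let
`μ : [0,∞) → P₂(X)` with `μ₀ = μ̄` have finite support of non-increasing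
cardinality, and let `η` be a probability measure on `C([0,∞);X)` with
`(e_t)_♯η = μ_t` for all `t`. Then `η = Σ aᵢ δ_{γᵢ}` for curves `γᵢ` which are
pairwise distinct (P1), start at `xᵢ` (P2), and stick together after meeting (P3). -/
theorem stmt12 (N : ℕ) (hN : 1 ≤ N) (a : Fin N → ℝ) (ha : ∀ i, 0 < a i)
    (hsum : ∑ i, a i = 1) (x : Fin N → X) (hx : Function.Injective x)
    [MeasurableSpace C(Set.Ici (0:ℝ), X)]
    (μ : Set.Ici (0:ℝ) → Measure X) (hμ : ∀ t, MemP2 (μ t))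
    (hμ0 : μ ⟨0, Set.self_mem_Ici⟩ = ∑ i, ENNReal.ofReal (a i) • Measure.dirac (x i))
    (hfin : ∀ t, (msupport (μ t)).Finite)
    (hmono : ∀ s t : Set.Ici (0:ℝ), s ≤ t →
      (msupport (μ t)).ncard ≤ (msupport (μ s)).ncard)
    (η : Measure C(Set.Ici (0:ℝ), X)) [IsProbabilityMeasure η]
    (hη : ∀ t : Set.Ici (0:ℝ), η.map (fun γ : C(Set.Ici (0:ℝ), X) => γ t) = μ t) :
    ∃ γ : Fin N → C(Set.Ici (0:ℝ), X),
      η = ∑ i, ENNReal.ofReal (a i) • Measure.dirac (γ i) ∧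
      Function.Injective γ ∧
      (∀ i, γ i ⟨0, Set.self_mem_Ici⟩ = x i) ∧
      (∀ i j, i ≠ j → ∀ s : Set.Ici (0:ℝ), γ i s = γ j s →
        ∀ t : Set.Ici (0:ℝ), s ≤ t → γ i t = γ j t) := by
  classical
  set z0 : Set.Ici (0:ℝ) := ⟨0, Set.self_mem_Ici⟩ with hz0
  have hAE : ∀ u, AEMeasurable (fun γ : C(Set.Ici (0:ℝ), X) => γ u) η :=
    fun u => eval_aemeasurable μ hμ η hη u
  set g : Set.Ici (0:ℝ) → C(Set.Ici (0:ℝ), X) → X := fun u => (hAE u).mk _ with hg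
  have hgmeas : ∀ u, Measurable (g u) := fun u => (hAE u).measurable_mk
  have hgae : ∀ u, (fun γ : C(Set.Ici (0:ℝ), X) => γ u) =ᵐ[η] g u :=
    fun u => (hAE u).ae_eq_mk
  have hmapg : ∀ u, η.map (g u) = μ u := by
    intro u
    rw [← Measure.map_congr (hgae u)]
    exact hη u
  -- the rational time set
  set Dq : Set (Set.Ici (0:ℝ)) := {u | ∃ q : ℚ, (u:ℝ) = (q:ℝ)} with hDq
  have hDqc : Dq.Countable := by
    have : Dq = (fun u : Set.Ici (0:ℝ) => (u:ℝ)) ⁻¹' (Set.range ((↑) : ℚ → ℝ)) := by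
      ext u; simp [hDq, Set.mem_preimage, Set.mem_range, eq_comm]
    rw [this]
    exact (Set.countable_range _).preimage Subtype.coe_injective
  have hz0Dq : z0 ∈ Dq := ⟨0, by simp [hz0]⟩
  have hTq : ∀ (v : Set.Ici (0:ℝ)) (δ : ℝ), 0 < δ → ∃ u ∈ Dq, v < u ∧ (u:ℝ) ≤ (v:ℝ) + δ := by
    intro v δ hδ
    obtain ⟨q, hq1, hq2⟩ := exists_rat_btwn (show (v:ℝ) < (v:ℝ) + δ by linarith)
    refine ⟨⟨(q:ℝ), le_trans v.2 (le_of_lt hq1)⟩, ⟨q, rfl⟩, ?_, le_of_lt hq2⟩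
    exact Subtype.mk_lt_mk.2 hq1
  -- density of Dq
  have hDqdense : Dense Dq := by
    rw [Metric.dense_iff]
    intro v r hr
    obtain ⟨u, huD, hu1, hu2⟩ := hTq v (r/2) (by linarith)
    refine ⟨u, Metric.mem_ball.2 ?_, huD⟩
    rw [Subtype.dist_eq, Real.dist_eq, abs_of_nonneg
      (by rw [sub_nonneg]; exact le_of_lt (Subtype.coe_lt_coe.2 hu1))]
    linarith
  have heqDq : ∀ γ γ' : C(Set.Ici (0:ℝ), X), (∀ u ∈ Dq, γ u = γ' u) → γ = γ' := by
    intro γ γ' h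
    have : (γ : Set.Ici (0:ℝ) → X) = γ' :=
      Continuous.ext_on hDqdense γ.continuous γ'.continuous h
    exact ContinuousMap.ext (congrFun this)
  -- the good set Ω
  set Ω : Set C(Set.Ici (0:ℝ), X) :=
    {γ | ∀ u ∈ Dq, g u γ = γ u ∧ γ u ∈ msupport (μ u)} with hΩdef
  have hgnull : ∀ u, η {γ | ¬ g u γ = γ u} = 0 := by
    intro u
    have := (hgae u).symm
    rw [Filter.EventuallyEq, ae_iff] at this
    exact this
  have hsuppnull : ∀ u, η ((g u)⁻¹' (msupport (μ u))ᶜ) = 0 := by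
    intro u
    rw [← Measure.map_apply (hgmeas u) (isClosed_msupport (μ u)).isOpen_compl.measurableSet,
      hmapg u]
    exact measure_compl_msupport (μ u)
  have hΩnull : η Ωᶜ = 0 := by
    have hsub : Ωᶜ ⊆ ⋃ u ∈ Dq, ({γ | ¬ g u γ = γ u} ∪ (g u)⁻¹' (msupport (μ u))ᶜ) := by
      intro γ hγ
      simp only [hΩdef, Set.mem_compl_iff, Set.mem_setOf_eq, not_forall] at hγ
      obtain ⟨u, hu, hγu⟩ := hγ
      rw [Set.mem_iUnion₂]
      refine ⟨u, hu, ?_⟩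
      by_cases h1 : g u γ = γ u
      · right
        rw [Set.mem_preimage, Set.mem_compl_iff, h1]
        intro hmem
        exact hγu ⟨h1, hmem⟩
      · left; exact h1
    refine measure_mono_null hsub ?_
    rw [measure_biUnion_null_iff hDqc]
    intro u _
    exact measure_union_null (hgnull u) (hsuppnull u)
  -- the starting sets
  set A : Fin N → Set C(Set.Ici (0:ℝ), X) := fun i => (g z0)⁻¹' {x i} with hA
  have hAmeas : ∀ i, MeasurableSet (A i) :=
    fun i => (hgmeas z0) (measurableSet_singleton (x i))
  have hAval : ∀ i, η (A i) = ENNReal.ofReal (a i) := by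
    intro i
    rw [hA]
    rw [← Measure.map_apply (hgmeas z0) (measurableSet_singleton (x i)), hmapg z0]
    rw [show μ z0 = ∑ j, ENNReal.ofReal (a j) • Measure.dirac (x j) from hμ0]
    rw [Measure.finset_sum_apply]
    rw [Finset.sum_eq_single i]
    · rw [Measure.smul_apply, Measure.dirac_apply' _ (measurableSet_singleton (x i))]
      simp
    · intro j _ hji
      rw [Measure.smul_apply, Measure.dirac_apply' _ (measurableSet_singleton (x i))]
      rw [Set.indicator_of_notMem (fun h => hji (hx (Set.mem_singleton_iff.1 h)))]
      simp
    · intro h; exact absurd (Finset.mem_univ i) h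
  -- pick representative curves
  have hchoice : ∀ i, ∃ cE : C(Set.Ici (0:ℝ), X), cE ∈ A i ∧ cE ∈ Ω := by
    intro i
    have h1 : η (A i ∩ Ω) ≠ 0 := by
      intro h0
      have : η (A i) ≤ η (A i ∩ Ω) + η Ωᶜ := by
        refine le_trans (measure_mono ?_) (measure_union_le _ _)
        intro γ hγ
        by_cases hγΩ : γ ∈ Ω
        · exact Or.inl ⟨hγ, hγΩ⟩
        · exact Or.inr hγΩ
      rw [h0, hΩnull, add_zero] at this
      rw [hAval i] at this
      have := le_antisymm this (zero_le)
      exact absurd this (by simp [ENNReal.ofReal_eq_zero, not_le, ha i])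
    obtain ⟨cE, hcE⟩ := nonempty_of_measure_ne_zero h1
    exact ⟨cE, hcE.1, hcE.2⟩
  choose cc hccA hccΩ using hchoice
  have hc0 : ∀ i, cc i z0 = x i := by
    intro i
    have h1 : g z0 (cc i) = cc i z0 := ((hccΩ i) z0 hz0Dq).1
    have h2 : g z0 (cc i) = x i := hccA i
    rw [← h1, h2]
  have hcsupp : ∀ i, ∀ u ∈ Dq, cc i u ∈ msupport (μ u) :=
    fun i u hu => ((hccΩ i) u hu).2
  -- no-splitting: g u is a.e. constant (= cc i u) on A i
  have hconst : ∀ i, ∀ u ∈ Dq, η (A i ∩ (g u)⁻¹' {cc i u}ᶜ) = 0 := by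
    intro i u hu
    by_contra hpos
    set B : Set C(Set.Ici (0:ℝ), X) := A i ∩ (g u)⁻¹' {cc i u}ᶜ with hB
    have hKfin : (msupport (μ u)).Finite := hfin u
    have hcov : η (B ∩ Ω ∩ (g u)⁻¹' (msupport (μ u))) ≠ 0 := by
      intro h0
      have hsub : B ⊆ (B ∩ Ω ∩ (g u)⁻¹' (msupport (μ u))) ∪
          (Ωᶜ ∪ (g u)⁻¹' (msupport (μ u))ᶜ) := by
        intro γ hγ
        by_cases h1 : γ ∈ Ω
        · by_cases h2 : γ ∈ (g u)⁻¹' (msupport (μ u))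
          · exact Or.inl ⟨⟨hγ, h1⟩, h2⟩
          · exact Or.inr (Or.inr h2)
        · exact Or.inr (Or.inl h1)
      have : η B ≤ η (B ∩ Ω ∩ (g u)⁻¹' (msupport (μ u))) + (η Ωᶜ +
          η ((g u)⁻¹' (msupport (μ u))ᶜ)) :=
        le_trans (measure_mono hsub) (le_trans (measure_union_le _ _)
          (add_le_add le_rfl (measure_union_le _ _)))
      rw [h0, hΩnull, hsuppnull, zero_add, add_zero] at this
      exact hpos (le_antisymm this (zero_le))
    have hcov2 : B ∩ Ω ∩ (g u)⁻¹' (msupport (μ u)) ⊆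
        ⋃ z ∈ msupport (μ u), (B ∩ Ω ∩ (g u)⁻¹' {z}) := by
      intro γ hγ
      rw [Set.mem_iUnion₂]
      exact ⟨g u γ, hγ.2, ⟨hγ.1, rfl⟩⟩
    have hexz : ∃ z ∈ msupport (μ u), η (B ∩ Ω ∩ (g u)⁻¹' {z}) ≠ 0 := by
      by_contra hall
      push_neg at hall
      have : η (⋃ z ∈ msupport (μ u), (B ∩ Ω ∩ (g u)⁻¹' {z})) = 0 :=
        (measure_biUnion_null_iff hKfin.countable).2 hall
      exact hcov (measure_mono_null hcov2 this)
    obtain ⟨z, hzK, hzpos⟩ := hexz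
    obtain ⟨γ', hγ'⟩ := nonempty_of_measure_ne_zero hzpos
    obtain ⟨⟨hγ'B, hγ'Ω⟩, hγ'z⟩ := hγ'
    have hγ'u : γ' u = z := by
      rw [← (hγ'Ω u hu).1]; exact hγ'z
    have hzne : z ≠ cc i u := by
      have := hγ'B.2
      rw [Set.mem_preimage, Set.mem_compl_iff, Set.mem_singleton_iff] at this
      rw [← hγ'z]; exact this
    have hγ'0 : γ' z0 = x i := by
      rw [← (hγ'Ω z0 hz0Dq).1]; exact hγ'B.1
    have hns := nosplit μ hμ hfin hmono η hη Dq hTq (cc i) γ'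
      (hcsupp i) (fun w hw => (hγ'Ω w hw).2) z0 u u.2
      (by rw [hc0 i, hγ'0]) -- cc i z0 = γ' z0
    rw [hγ'u] at hns
    exact hzne hns.symm
  -- A i is a.e. the singleton {cc i}
  have hAnull : ∀ i, η (A i \ {cc i}) = 0 := by
    intro i
    have hsub : A i \ {cc i} ⊆ Ωᶜ ∪ ⋃ u ∈ Dq, (A i ∩ (g u)⁻¹' {cc i u}ᶜ) := by
      intro γ hγ
      by_cases hγΩ : γ ∈ Ω
      · right
        by_contra hnot
        rw [Set.mem_iUnion₂] at hnot
        push_neg at hnot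
        apply hγ.2
        rw [Set.mem_singleton_iff]
        apply heqDq γ (cc i)
        intro u hu
        have h1 : γ ∉ A i ∩ (g u)⁻¹' ({cc i u}ᶜ) := hnot u hu
        have h2 : g u γ ∈ ({cc i u} : Set X) := by
          by_contra h3
          exact h1 ⟨hγ.1, h3⟩
        rw [← (hγΩ u hu).1]
        exact h2
      · left; exact hγΩ
    refine measure_mono_null hsub ?_
    refine measure_union_null hΩnull ?_
    rw [measure_biUnion_null_iff hDqc]
    exact fun u hu => hconst i u hu
  -- the measure representation
  have hAdisj : Pairwise (Function.onFun Disjoint A) := by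
    intro i j hij
    rw [Function.onFun, Set.disjoint_left]
    intro γ hγi hγj
    have h1 : g z0 γ = x i := hγi
    have h2 : g z0 γ = x j := hγj
    exact hij (hx (h1.symm.trans h2))
  have hUnull : η (⋃ i, A i)ᶜ = 0 := by
    have hU : η (⋃ i, A i) = 1 := by
      rw [measure_iUnion hAdisj hAmeas, tsum_fintype]
      simp_rw [hAval]
      rw [← ENNReal.ofReal_sum_of_nonneg (fun i _ => le_of_lt (ha i)), hsum,
        ENNReal.ofReal_one]
    rw [measure_compl (MeasurableSet.iUnion hAmeas) (measure_ne_top η _), measure_univ,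
      hU, tsub_self]
  have hrep : η = ∑ i, ENNReal.ofReal (a i) • Measure.dirac (cc i) := by
    ext T hT
    have hL : η T = ∑ i, η (T ∩ A i) := by
      have h1 : η T = η (T ∩ ⋃ i, A i) := by
        apply le_antisymm
        · have hsub : T ⊆ (T ∩ ⋃ i, A i) ∪ (⋃ i, A i)ᶜ := by
            intro γ hγ
            by_cases h : γ ∈ ⋃ i, A i
            · exact Or.inl ⟨hγ, h⟩
            · exact Or.inr h
          have := le_trans (measure_mono hsub) (measure_union_le (μ := η) _ _)
          rwa [hUnull, add_zero] at this
        · exact measure_mono Set.inter_subset_left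
      rw [h1, Set.inter_iUnion]
      rw [measure_iUnion (fun i j hij => (hAdisj hij).mono Set.inter_subset_right
        Set.inter_subset_right) (fun i => hT.inter (hAmeas i)), tsum_fintype]
    have hterm : ∀ i, η (T ∩ A i) = ENNReal.ofReal (a i) * T.indicator 1 (cc i) := by
      intro i
      by_cases hm : cc i ∈ T
      · rw [Set.indicator_of_mem hm, Pi.one_apply, mul_one]
        apply le_antisymm
        · rw [← hAval i]; exact measure_mono Set.inter_subset_right
        · have hsub : A i ⊆ (T ∩ A i) ∪ (A i \ {cc i}) := by
            intro γ hγ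
            by_cases h : γ ∈ T
            · exact Or.inl ⟨h, hγ⟩
            · refine Or.inr ⟨hγ, fun hs => h ?_⟩
              rw [Set.mem_singleton_iff] at hs
              rw [hs]; exact hm
          have := le_trans (measure_mono hsub) (measure_union_le (μ := η) _ _)
          rw [hAnull i, add_zero] at this
          rw [← hAval i]
          exact this
      · rw [Set.indicator_of_notMem hm, mul_zero]
        apply le_antisymm _ (zero_le)
        have hsub : T ∩ A i ⊆ A i \ {cc i} := by
          intro γ hγ
          refine ⟨hγ.2, fun hs => hm ?_⟩
          rw [Set.mem_singleton_iff] at hs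
          rw [← hs]; exact hγ.1
        exact le_trans (measure_mono hsub) (le_of_eq (hAnull i))
    rw [hL, Measure.finset_sum_apply]
    apply Finset.sum_congr rfl
    intro i _
    rw [Measure.smul_apply, Measure.dirac_apply' _ hT, smul_eq_mul, hterm i]
  -- masses of atoms along the curves, at every time
  have hmass : ∀ i (u : Set.Ici (0:ℝ)), ENNReal.ofReal (a i) ≤ μ u {cc i u} := by
    intro i u
    obtain ⟨Z, hZsub, hZmeas, hZnull⟩ := exists_measurable_superset_of_null (hgnull u)
    set Sset : Set C(Set.Ici (0:ℝ), X) := (g u)⁻¹' {cc i u} ∪ Z with hSset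
    have hSmeas : MeasurableSet Sset :=
      ((hgmeas u) (measurableSet_singleton _)).union hZmeas
    have hccmem : cc i ∈ Sset := by
      by_cases h : g u (cc i) = cc i u
      · exact Or.inl h
      · exact Or.inr (hZsub h)
    have h1 : ENNReal.ofReal (a i) ≤ η Sset := by
      rw [hrep, Measure.finset_sum_apply]
      have hterm : (ENNReal.ofReal (a i) • Measure.dirac (cc i)) Sset = ENNReal.ofReal (a i) := by
        rw [Measure.smul_apply, Measure.dirac_apply' _ hSmeas, Set.indicator_of_mem hccmem,
          Pi.one_apply, smul_eq_mul, mul_one]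
      rw [← hterm]
      exact Finset.single_le_sum (f := fun j => ENNReal.ofReal (a j) • Measure.dirac (cc j) Sset)
        (fun j _ => zero_le) (Finset.mem_univ i)
    have h2 : η Sset ≤ η ((g u)⁻¹' {cc i u}) := by
      calc η Sset ≤ η ((g u)⁻¹' {cc i u}) + η Z := measure_union_le _ _
        _ = η ((g u)⁻¹' {cc i u}) := by rw [hZnull, add_zero]
    have h3 : η ((g u)⁻¹' {cc i u}) = μ u {cc i u} := by
      rw [← hmapg u, Measure.map_apply (hgmeas u) (measurableSet_singleton _)]
    rw [← h3]
    exact le_trans h1 h2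
  have hsuppall : ∀ i (u : Set.Ici (0:ℝ)), cc i u ∈ msupport (μ u) := by
    intro i u U hU hmem
    have h1 : ENNReal.ofReal (a i) ≤ μ u U :=
      le_trans (hmass i u) (measure_mono (Set.singleton_subset_iff.2 hmem))
    exact lt_of_lt_of_le (ENNReal.ofReal_pos.2 (ha i)) h1
  refine ⟨cc, hrep, ?_, hc0, ?_⟩
  · intro i j hij
    apply hx
    rw [← hc0 i, ← hc0 j, hij]
  · intro i j _ s hsij t hst
    have htriv : ∀ (v : Set.Ici (0:ℝ)) (δ : ℝ), 0 < δ →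
        ∃ u ∈ (Set.univ : Set (Set.Ici (0:ℝ))), v < u ∧ (u:ℝ) ≤ (v:ℝ) + δ := by
      intro v δ hδ
      have h0 : (0:ℝ) ≤ (v:ℝ) + δ/2 := by
        have := v.2
        rw [Set.mem_Ici] at this
        linarith
      refine ⟨⟨(v:ℝ) + δ/2, h0⟩, Set.mem_univ _, Subtype.mk_lt_mk.2 (by linarith), ?_⟩
      show (v:ℝ) + δ/2 ≤ (v:ℝ) + δ
      linarith
    exact nosplit μ hμ hfin hmono η hη Set.univ htriv (cc i) (cc j)
      (fun w _ => hsuppall i w) (fun w _ => hsuppall j w) s t hst hsij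
end
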